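/- arXiv:1402.5551 — 11 statements merged into one kernel-verified Lean document; each statement's English description precedes it below -/
import Mathlib

section
/- Let f, g : ℝ → ℝ be smooth functions, let n ≥ 1 and t ∈ ℝ. Then the n-th derivative of the composition satisfies (d^n/dt^n)(f ∘ g)(t) = Σ_{m=1}^{n} Σ n!/(k_1!·k_2!···k_n!) · f^{(m)}(g(t)) · ∏_{i=1}^{n} (g^{(i)}(t)/i!)^{k_i}, where the inner sum runs over all tuples (k_1,…,k_n) of non-negative integers with k_1 + k_2 + ⋯ + k_n = m and k_1 + 2k_2 + ⋯ + n·k_n = n. -/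
open scoped Nat

open scoped Nat

noncomputable def OrderedFinpartition.mtype {n : ℕ} (c : OrderedFinpartition n) : Multiset ℕ :=
  Multiset.map c.partSize Finset.univ.val

namespace OrderedFinpartition
variable {n : ℕ} (c : OrderedFinpartition n)

@[simp] lemma card_mtype : Multiset.card c.mtype = c.length := by simp [mtype]

lemma zero_not_mem_mtype : 0 ∉ c.mtype := by
  simp only [mtype, Multiset.mem_map]
  rintro ⟨i, -, hi⟩
  exact (c.partSize_pos i).ne' hi

lemma mem_mtype_le {s : ℕ} (hs : s ∈ c.mtype) : s ≤ n := by
  simp only [mtype, Multiset.mem_map] at hs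
  obtain ⟨i, -, rfl⟩ := hs
  exact c.partSize_le i

lemma sum_partSize : ∑ i, c.partSize i = n := by
  classical
  have h2 := c.sum_sigma_eq_sum (fun _ : Fin n => (1 : ℕ))
  simpa using h2

lemma sum_mtype : c.mtype.sum = n := by
  have : c.mtype.sum = ∑ i, c.partSize i := by
    simp [mtype, Finset.sum]
  rw [this, c.sum_partSize]

end OrderedFinpartition



namespace OrderedFinpartition
variable {n : ℕ} (c : OrderedFinpartition n)

lemma mtype_extendLeft : c.extendLeft.mtype = 1 ::ₘ c.mtype := by
  have huniv : (Finset.univ.val : Multiset (Fin (c.length + 1))) =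
      0 ::ₘ (Finset.univ.val : Multiset (Fin c.length)).map Fin.succ := by
    rw [Fin.univ_succ, Finset.cons_val, Finset.map_val]
    rfl
  show Multiset.map (Fin.cons 1 c.partSize) Finset.univ.val = _
  rw [huniv, Multiset.map_cons, Multiset.map_map]
  simp [mtype]

lemma univ_val_eq_cons (i : Fin c.length) :
    (Finset.univ.val : Multiset (Fin c.length)) = i ::ₘ (Finset.univ.erase i).val := by
  rw [Finset.erase_val, Multiset.cons_erase (by simp)]

lemma mtype_eq_cons (i : Fin c.length) :
    c.mtype = c.partSize i ::ₘ Multiset.map c.partSize (Finset.univ.erase i).val := by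
  conv_lhs => rw [mtype, univ_val_eq_cons c i]
  rw [Multiset.map_cons]

lemma count_mtype (s : ℕ) :
    c.mtype.count s = (Finset.univ.filter (fun i => c.partSize i = s)).card := by
  rw [mtype, Multiset.count_map]
  have : (Multiset.filter (fun a => s = c.partSize a) Finset.univ.val) =
      (Finset.univ.filter (fun i => c.partSize i = s)).val := by
    rw [Finset.filter_val]
    apply Multiset.filter_congr
    intro x _
    exact eq_comm
  rw [this, ← Finset.card_def]

lemma mtype_extendMiddle (i : Fin c.length) :
    (c.extendMiddle i).mtype = (c.partSize i + 1) ::ₘ c.mtype.erase (c.partSize i) := by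
  show Multiset.map (Function.update c.partSize i (c.partSize i + 1)) Finset.univ.val = _
  conv_lhs => rw [univ_val_eq_cons c i]
  rw [Multiset.map_cons, Function.update_self]
  congr 1
  rw [mtype_eq_cons c i, Multiset.erase_cons_head]
  apply Multiset.map_congr rfl
  intro j hj
  have hji : j ≠ i := by
    intro h; subst h
    exact Finset.notMem_erase j _ (Finset.mem_def.mpr hj)
  simp [hji]

end OrderedFinpartition

/-- `a! * (count a M + 1) * Pfac M` -/
def Pfac (M : Multiset ℕ) : ℕ :=
  (M.map Nat.factorial).prod * ∏ j ∈ M.toFinset, (M.count j)!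

lemma Pfac_pos (M : Multiset ℕ) : 0 < Pfac M := by
  apply Nat.mul_pos
  · apply Multiset.prod_pos
    intro a ha
    simp only [Multiset.mem_map] at ha
    obtain ⟨b, -, rfl⟩ := ha
    exact Nat.factorial_pos b
  · exact Finset.prod_pos fun j _ => Nat.factorial_pos _

lemma Pfac_zero : Pfac 0 = 1 := by simp [Pfac]

lemma Pfac_cons (a : ℕ) (M : Multiset ℕ) :
    Pfac (a ::ₘ M) = a ! * ((M.count a + 1) * Pfac M) := by
  classical
  rw [Pfac, Pfac, Multiset.map_cons, Multiset.prod_cons]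
  have htf : (a ::ₘ M).toFinset = insert a M.toFinset := by
    simp [Multiset.toFinset_cons]
  rw [htf]
  by_cases ha : a ∈ M.toFinset
  · have h1 : insert a M.toFinset = M.toFinset := Finset.insert_eq_self.mpr ha
    rw [h1]
    rw [← Finset.mul_prod_erase _ _ ha, ← Finset.mul_prod_erase _ (fun j => (M.count j)!) ha]
    have hcount : ∀ j ∈ M.toFinset.erase a, ((a ::ₘ M).count j)! = (M.count j)! := by
      intro j hj
      rw [Multiset.count_cons_of_ne (Finset.ne_of_mem_erase hj)]
    rw [Finset.prod_congr rfl hcount, Multiset.count_cons_self, Nat.factorial_succ]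
    ring
  · have hc0 : M.count a = 0 := by
      simp [Multiset.count_eq_zero, Multiset.mem_toFinset] at ha ⊢; exact ha
    rw [Finset.prod_insert ha]
    have hcount : ∀ j ∈ M.toFinset, ((a ::ₘ M).count j)! = (M.count j)! := by
      intro j hj
      rw [Multiset.count_cons_of_ne]
      intro h; subst h; exact ha hj
    rw [Finset.prod_congr rfl hcount, Multiset.count_cons_self, hc0]
    simp [Nat.factorial]
    ring

lemma sum_count_mul (M : Multiset ℕ) (R : ℕ) (h : ∀ j ∈ M, j < R) :
    ∑ j ∈ Finset.range R, M.count j * j = M.sum := by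
  classical
  induction M using Multiset.induction_on with
  | empty => simp
  | cons a M ih =>
    have ha : a < R := h a (Multiset.mem_cons_self a M)
    have : ∀ j ∈ Finset.range R, (a ::ₘ M).count j * j
        = M.count j * j + (if j = a then a else 0) := by
      intro j hj
      rcases eq_or_ne j a with rfl | hja
      · rw [Multiset.count_cons_self]; simp [Nat.succ_mul]
      · rw [Multiset.count_cons_of_ne hja]; simp [hja]
    rw [Finset.sum_congr rfl this, Finset.sum_add_distrib, Finset.sum_ite_eq'
      (Finset.range R) a (fun _ => a)]
    rw [ih (fun j hj => h j (Multiset.mem_cons_of_mem hj)), if_pos (Finset.mem_range.mpr ha),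
      Multiset.sum_cons]
    ring
section Count
open OrderedFinpartition

lemma cons_eq_iff {α : Type*} [DecidableEq α] {a : α} {X M : Multiset α} :
    a ::ₘ X = M ↔ a ∈ M ∧ X = M.erase a := by
  constructor
  · rintro rfl
    exact ⟨Multiset.mem_cons_self a X, (Multiset.erase_cons_head a X).symm⟩
  · rintro ⟨h1, rfl⟩
    exact Multiset.cons_erase h1

lemma N_zero_mem {n : ℕ} {M : Multiset ℕ} (h : (0:ℕ) ∈ M) :
    (Finset.univ.filter (fun c : OrderedFinpartition n => c.mtype = M)).card = 0 := by
  rw [Finset.card_eq_zero, Finset.filter_eq_empty_iff]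
  intro c _
  intro hc
  exact c.zero_not_mem_mtype (hc ▸ h)

theorem N_mul_Pfac : ∀ (n : ℕ) (M : Multiset ℕ), M.sum = n → (0:ℕ) ∉ M →
    ((Finset.univ.filter (fun c : OrderedFinpartition n => c.mtype = M)).card) * Pfac M
      = n ! := by
  intro n
  induction n with
  | zero =>
    intro M hs h0
    have hM : M = 0 := by
      rw [Multiset.eq_zero_iff_forall_notMem]
      intro x hx
      exact h0 ((Multiset.sum_eq_zero_iff.mp hs x hx) ▸ hx)
    subst hM
    have h1 : ∀ c : OrderedFinpartition 0, c.mtype = 0 := by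
      intro c
      rw [← Multiset.card_eq_zero, c.card_mtype]
      exact Nat.le_zero.mp c.length_le
    rw [Finset.filter_true_of_mem (fun c _ => h1 c), Finset.card_univ, Fintype.card_unique,
      Pfac_zero]
    rfl
  | succ n IH =>
    intro M hs h0
    -- Step A : unfold the card via the extension equivalence
    have hA : (Finset.univ.filter
        (fun c : OrderedFinpartition (n+1) => c.mtype = M)).card
        = ∑ c : OrderedFinpartition n,
            ((if (1 :ℕ) ::ₘ c.mtype = M then 1 else 0)
              + ∑ i : Fin c.length,
                if (c.partSize i + 1) ::ₘ c.mtype.erase (c.partSize i) = M then 1 else 0) := by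
      rw [Finset.card_filter]
      rw [← Fintype.sum_equiv (OrderedFinpartition.extendEquiv n)
        (fun x => if ((OrderedFinpartition.extendEquiv n) x).mtype = M then 1 else 0)
        (fun c => if c.mtype = M then 1 else 0) (fun x => rfl)]
      rw [← Finset.univ_sigma_univ, Finset.sum_sigma]
      refine Finset.sum_congr rfl fun c _ => ?_
      rw [Fintype.sum_option]
      congr 1
      · show (if (c.extendLeft).mtype = M then 1 else 0) = _
        rw [c.mtype_extendLeft]
      · refine Finset.sum_congr rfl fun i _ => ?_
        show (if (c.extendMiddle i).mtype = M then 1 else 0) = _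
        rw [c.mtype_extendMiddle]
    -- Step B : per-partition, group the middle sum by part size
    have hB : ∀ c : OrderedFinpartition n,
        (∑ i : Fin c.length,
          if (c.partSize i + 1) ::ₘ c.mtype.erase (c.partSize i) = M then 1 else 0)
        = ∑ s ∈ Finset.range (n+1), c.mtype.count s *
            (if ((s+1) ∈ M ∧ c.mtype = s ::ₘ M.erase (s+1)) then 1 else 0) := by
      intro c
      have himg : Finset.univ.image c.partSize ⊆ Finset.range (n+1) := by
        intro s hs
        simp only [Finset.mem_image] at hs
        obtain ⟨i, -, rfl⟩ := hs
        exact Finset.mem_range.mpr (Nat.lt_succ_of_le (c.partSize_le i))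
      rw [Finset.sum_comp (fun s => if (s + 1) ::ₘ c.mtype.erase s = M then 1 else 0)
        c.partSize]
      rw [Finset.sum_subset himg (by
        intro s hs hs'
        simp only [Finset.mem_image, not_exists] at hs'
        have : (Finset.univ.filter (fun i => c.partSize i = s)).card = 0 := by
          rw [Finset.card_eq_zero, Finset.filter_eq_empty_iff]
          intro i _
          exact fun h => hs' i ⟨Finset.mem_univ i, h⟩
        simp [this])]
      refine Finset.sum_congr rfl fun s _ => ?_
      rw [← c.count_mtype, smul_eq_mul]
      rcases Nat.eq_zero_or_pos (c.mtype.count s) with h | h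
      · rw [h, Nat.zero_mul, Nat.zero_mul]
      · have hsmem : s ∈ c.mtype := Multiset.count_pos.mp h
        congr 1
        have hiff : ((s + 1) ::ₘ c.mtype.erase s = M)
            ↔ ((s+1) ∈ M ∧ c.mtype = s ::ₘ M.erase (s+1)) := by
          constructor
          · intro hcond
            obtain ⟨h1, h2⟩ := cons_eq_iff.mp hcond
            exact ⟨h1, by rw [← h2, Multiset.cons_erase hsmem]⟩
          · rintro ⟨h1, h2⟩
            have : c.mtype.erase s = M.erase (s+1) := by
              rw [h2, Multiset.erase_cons_head]
            rw [this, Multiset.cons_erase h1]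
        simp only [hiff]
    -- Step C : assemble
    rw [hA]
    rw [Finset.sum_add_distrib]
    -- first piece
    have hC1 : (∑ c : OrderedFinpartition n, if (1:ℕ) ::ₘ c.mtype = M then 1 else 0)
        = if (1:ℕ) ∈ M then
            (Finset.univ.filter
              (fun c : OrderedFinpartition n => c.mtype = M.erase 1)).card
          else 0 := by
      by_cases h1M : (1:ℕ) ∈ M
      · rw [if_pos h1M, Finset.card_filter]
        refine Finset.sum_congr rfl fun c _ => ?_
        congr 1
        simp only [cons_eq_iff, h1M, true_and]
      · rw [if_neg h1M]
        refine Finset.sum_eq_zero fun c _ => ?_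
        rw [if_neg]
        intro hcond
        exact h1M (cons_eq_iff.mp hcond).1
    -- second piece
    have hC2 : (∑ c : OrderedFinpartition n, ∑ s ∈ Finset.range (n+1),
          c.mtype.count s * (if ((s+1) ∈ M ∧ c.mtype = s ::ₘ M.erase (s+1)) then 1 else 0))
        = ∑ s ∈ Finset.range (n+1),
            (if (s+1) ∈ M then
              ((M.erase (s+1)).count s + 1) *
                (Finset.univ.filter
                  (fun c : OrderedFinpartition n => c.mtype = s ::ₘ M.erase (s+1))).card
            else 0) := by
      rw [Finset.sum_comm]
      refine Finset.sum_congr rfl fun s _ => ?_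
      by_cases hsM : (s+1) ∈ M
      · rw [if_pos hsM]
        simp only [hsM, true_and, mul_ite, mul_one, mul_zero]
        rw [Finset.sum_ite, Finset.sum_const_zero, add_zero]
        have : ∀ c ∈ Finset.univ.filter
            (fun c : OrderedFinpartition n => c.mtype = s ::ₘ M.erase (s+1)),
            c.mtype.count s = (M.erase (s+1)).count s + 1 := by
          intro c hc
          rw [(Finset.mem_filter.mp hc).2, Multiset.count_cons_self]
        rw [Finset.sum_congr rfl this, Finset.sum_const, smul_eq_mul, mul_comm]
      · rw [if_neg hsM]
        refine Finset.sum_eq_zero fun c _ => ?_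
        rw [if_neg, mul_zero]
        intro hcond
        exact hsM hcond.1
    rw [hC1, Finset.sum_congr rfl (fun c _ => hB c), hC2]
    -- drop the s = 0 term and reindex
    rw [Finset.sum_range_succ']
    have hzero : (if (0+1) ∈ M then
        ((M.erase (0+1)).count 0 + 1) *
          (Finset.univ.filter
            (fun c : OrderedFinpartition n => c.mtype = 0 ::ₘ M.erase (0+1))).card
        else 0) = 0 := by
      rcases em ((0+1 : ℕ) ∈ M) with h | h
      · rw [if_pos h, N_zero_mem (Multiset.mem_cons_self 0 _), mul_zero]
      · rw [if_neg h]
    rw [hzero, add_zero]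
    -- now the arithmetic
    -- term (a)
    have hterma : (if (1:ℕ) ∈ M then
        (Finset.univ.filter
          (fun c : OrderedFinpartition n => c.mtype = M.erase 1)).card else 0) * Pfac M
        = M.count 1 * 1 * n ! := by
      by_cases h1M : (1:ℕ) ∈ M
      · rw [if_pos h1M]
        have hMe : (1:ℕ) ::ₘ M.erase 1 = M := Multiset.cons_erase h1M
        have hPf : Pfac M = 1 ! * (((M.erase 1).count 1 + 1) * Pfac (M.erase 1)) := by
          conv_lhs => rw [← hMe]
          exact Pfac_cons 1 (M.erase 1)
        have hcnt : (M.erase 1).count 1 + 1 = M.count 1 := by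
          conv_rhs => rw [← hMe]
          rw [Multiset.count_cons_self]
        have hsum : (M.erase 1).sum = n := by
          have := congrArg Multiset.sum hMe
          rw [Multiset.sum_cons] at this
          omega
        have h0e : (0:ℕ) ∉ M.erase 1 := fun h => h0 (Multiset.mem_of_mem_erase h)
        have hIH := IH (M.erase 1) hsum h0e
        rw [hPf, hcnt]
        calc (Finset.univ.filter
              (fun c : OrderedFinpartition n => c.mtype = M.erase 1)).card *
              (1 ! * (M.count 1 * Pfac (M.erase 1)))
            = M.count 1 * ((Finset.univ.filter
                (fun c : OrderedFinpartition n => c.mtype = M.erase 1)).card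
                  * Pfac (M.erase 1)) := by
              simp [Nat.factorial]; ring
          _ = M.count 1 * 1 * n ! := by rw [hIH]; ring
      · rw [if_neg h1M]
        simp [Multiset.count_eq_zero_of_notMem h1M]
    -- term (b)
    have htermb : ∀ i ∈ Finset.range n, (if (i+1+1) ∈ M then
          ((M.erase (i+1+1)).count (i+1) + 1) *
            (Finset.univ.filter
              (fun c : OrderedFinpartition n =>
                c.mtype = (i+1) ::ₘ M.erase (i+1+1))).card else 0) * Pfac M
        = M.count (i+2) * (i+2) * n ! := by
      intro i _
      by_cases hjM : (i+2 : ℕ) ∈ M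
      · rw [show i+1+1 = i+2 from rfl, if_pos hjM]
        set E := M.erase (i+2) with hE
        set NT := (Finset.univ.filter
          (fun c : OrderedFinpartition n => c.mtype = (i+1) ::ₘ E)).card with hNT
        have hMe : (i+2 : ℕ) ::ₘ E = M := Multiset.cons_erase hjM
        have hPfM : Pfac M = (i+2)! * ((E.count (i+2) + 1) * Pfac E) := by
          conv_lhs => rw [← hMe]
          exact Pfac_cons _ _
        have hcntM : E.count (i+2) + 1 = M.count (i+2) := by
          conv_rhs => rw [← hMe]
          rw [Multiset.count_cons_self]
        have hsumT : ((i+1 : ℕ) ::ₘ E).sum = n := by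
          have := congrArg Multiset.sum hMe
          rw [Multiset.sum_cons] at this
          rw [Multiset.sum_cons]
          omega
        have h0T : (0:ℕ) ∉ (i+1 : ℕ) ::ₘ E := by
          rw [Multiset.mem_cons]
          rintro (h | h)
          · omega
          · exact h0 (Multiset.mem_of_mem_erase h)
        have hIH := IH _ hsumT h0T
        have hPfT : Pfac ((i+1 : ℕ) ::ₘ E) = (i+1)! * ((E.count (i+1) + 1) * Pfac E) :=
          Pfac_cons _ _
        rw [hPfT] at hIH
        rw [hPfM, ← hcntM, Nat.factorial_succ (i+1)]
        calc (E.count (i+1) + 1) * NT * ((i + 2) * (i+1)! * ((E.count (i + 2) + 1) * Pfac E))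
            = ((i+2) * (E.count (i+2) + 1)) *
                (NT * ((i+1)! * ((E.count (i+1) + 1) * Pfac E))) := by ring
          _ = (E.count (i+2) + 1) * (i + 2) * n ! := by rw [hIH]; ring
      · rw [show i+1+1 = i+2 from rfl, if_neg hjM]
        simp [Multiset.count_eq_zero_of_notMem hjM]
    rw [Nat.add_mul, Finset.sum_mul, hterma, Finset.sum_congr rfl htermb]
    -- final counting of the sum
    have hlt : ∀ j ∈ M, j < n + 2 := by
      intro j hj
      have : j ≤ M.sum := Multiset.single_le_sum (fun x _ => Nat.zero_le x) j hj
      omega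
    have hsumM := sum_count_mul M (n+2) hlt
    rw [Finset.sum_range_succ'] at hsumM
    rw [Finset.sum_range_succ'] at hsumM
    simp only [Nat.mul_zero, Nat.add_zero] at hsumM
    have : M.count 1 * 1 * n ! + ∑ i ∈ Finset.range n, M.count (i+2) * (i+2) * n !
        = (M.count 1 * 1 + ∑ i ∈ Finset.range n, M.count (i+2) * (i+2)) * n ! := by
      rw [Nat.add_mul, Finset.sum_mul]
    rw [this]
    norm_num at hsumM
    have hre : ∑ i ∈ Finset.range n, Multiset.count (i+1+1) M * (i+1+1)
        = ∑ i ∈ Finset.range n, Multiset.count (i+2) M * (i+2) :=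
      Finset.sum_congr rfl (fun i _ => by norm_num)
    rw [hre] at hsumM
    rw [hs] at hsumM
    have hfinal : M.count 1 * 1 + ∑ i ∈ Finset.range n, M.count (i+2) * (i+2) = n + 1 := by
      omega
    rw [hfinal, Nat.factorial_succ]
section Mk
variable {n : ℕ}

/-- The multiset encoded by a multiplicity vector. -/
def Mk (n : ℕ) (k : Fin n → ℕ) : Multiset ℕ :=
  ∑ i : Fin n, Multiset.replicate (k i) (i.1 + 1)

lemma Mk_count (k : Fin n → ℕ) (i : Fin n) : (Mk n k).count (i.1 + 1) = k i := by
  rw [Mk, Multiset.count_sum']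
  have h : ∀ j : Fin n, (Multiset.replicate (k j) (j.1 + 1)).count (i.1+1)
      = if j = i then k j else 0 := by
    intro j
    rw [Multiset.count_replicate]
    rcases eq_or_ne j i with rfl | hji
    · simp
    · rw [if_neg (fun h => hji (Fin.ext (by omega))), if_neg hji]
  rw [Finset.sum_congr rfl (fun j _ => h j), Finset.sum_ite_eq' Finset.univ i k,
    if_pos (Finset.mem_univ i)]

lemma Mk_mem (k : Fin n → ℕ) {j : ℕ} (hj : j ∈ Mk n k) : 1 ≤ j ∧ j ≤ n := by
  rw [Mk, Multiset.mem_sum] at hj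
  obtain ⟨i, -, hi⟩ := hj
  rw [Multiset.eq_of_mem_replicate hi]
  omega

lemma Mk_count_eq_zero (k : Fin n → ℕ) {j : ℕ} (hj : j = 0 ∨ n < j) : (Mk n k).count j = 0 := by
  rw [Multiset.count_eq_zero]
  intro hmem
  have := Mk_mem k hmem
  omega

lemma Mk_sum (k : Fin n → ℕ) : (Mk n k).sum = ∑ i : Fin n, (i.1 + 1) * k i := by
  rw [Mk, Multiset.sum_sum]
  exact Finset.sum_congr rfl fun i _ => by
    rw [Multiset.sum_replicate, smul_eq_mul, mul_comm]

lemma Mk_card (k : Fin n → ℕ) : Multiset.card (Mk n k) = ∑ i : Fin n, k i := by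
  rw [Mk, Multiset.card_sum]
  exact Finset.sum_congr rfl fun i _ => Multiset.card_replicate _ _

lemma Mk_zero_not_mem (k : Fin n → ℕ) : (0:ℕ) ∉ Mk n k := fun h => by
  have := Mk_mem k h; omega

lemma Mk_toFinset_subset (k : Fin n → ℕ) :
    (Mk n k).toFinset ⊆ Finset.image (fun i : Fin n => i.1 + 1) Finset.univ := by
  intro j hj
  rw [Multiset.mem_toFinset] at hj
  have hb := Mk_mem k hj
  exact Finset.mem_image.mpr ⟨⟨j - 1, by omega⟩, Finset.mem_univ _, by simp; omega⟩

lemma Mk_inj {k k' : Fin n → ℕ} (h : Mk n k = Mk n k') : k = k' := by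
  funext i
  rw [← Mk_count k i, h, Mk_count]

lemma Pfac_Mk (k : Fin n → ℕ) :
    Pfac (Mk n k) = (∏ i : Fin n, ((i.1 + 1)!) ^ (k i)) * ∏ i : Fin n, (k i)! := by
  rw [Pfac]
  congr 1
  · rw [Mk]
    have hmap : Multiset.map Nat.factorial (∑ i : Fin n, Multiset.replicate (k i) (i.1+1))
        = ∑ i : Fin n, Multiset.map Nat.factorial (Multiset.replicate (k i) (i.1+1)) :=
      map_sum (Multiset.mapAddMonoidHom Nat.factorial) _ Finset.univ
    rw [hmap, Multiset.prod_sum]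
    exact Finset.prod_congr rfl fun i _ => by
      rw [Multiset.map_replicate, Multiset.prod_replicate]
  · rw [Finset.prod_subset (Mk_toFinset_subset k)
      (fun j _ hj => by
        rw [Multiset.count_eq_zero_of_notMem (fun hm => hj (Multiset.mem_toFinset.mpr hm))]
        exact Nat.factorial_zero)]
    rw [Finset.prod_image (fun i _ j _ h => Fin.ext (by omega))]
    exact Finset.prod_congr rfl fun i _ => by rw [Mk_count]

lemma Mk_prod_map (k : Fin n → ℕ) (h : ℕ → ℝ) :
    ((Mk n k).map h).prod = ∏ i : Fin n, (h (i.1 + 1)) ^ (k i) := by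
  rw [Mk]
  have hmap : Multiset.map h (∑ i : Fin n, Multiset.replicate (k i) (i.1+1))
      = ∑ i : Fin n, Multiset.map h (Multiset.replicate (k i) (i.1+1)) :=
    map_sum (Multiset.mapAddMonoidHom h) _ Finset.univ
  rw [hmap, Multiset.prod_sum]
  exact Finset.prod_congr rfl fun i _ => by
    rw [Multiset.map_replicate, Multiset.prod_replicate]

end Mk

theorem step1 (f g : ℝ → ℝ)
    (hf : ContDiff ℝ ((⊤ : ℕ∞) : WithTop ℕ∞) f)
    (hg : ContDiff ℝ ((⊤ : ℕ∞) : WithTop ℕ∞) g)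
    (n : ℕ) (t : ℝ) :
    iteratedDeriv n (f ∘ g) t =
      ∑ c : OrderedFinpartition n,
        iteratedDeriv c.length f (g t) * ∏ i, iteratedDeriv (c.partSize i) g t := by
  have hq : HasFTaylorSeriesUpTo ((⊤ : ℕ∞) : WithTop ℕ∞) f (ftaylorSeries ℝ f) :=
    contDiff_iff_ftaylorSeries.mp hf
  have hp : HasFTaylorSeriesUpTo ((⊤ : ℕ∞) : WithTop ℕ∞) g (ftaylorSeries ℝ g) :=
    contDiff_iff_ftaylorSeries.mp hg
  have H : HasFTaylorSeriesUpTo ((⊤ : ℕ∞) : WithTop ℕ∞) (f ∘ g)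
      (fun x ↦ (ftaylorSeries ℝ f (g x)).taylorComp (ftaylorSeries ℝ g x)) := by
    rw [← hasFTaylorSeriesUpToOn_univ_iff] at hq hp ⊢
    exact hq.comp hp (Set.mapsTo_univ _ _)
  have hser : (ftaylorSeries ℝ f (g t)).taylorComp (ftaylorSeries ℝ g t) n =
      iteratedFDeriv ℝ n (f ∘ g) t :=
    H.eq_iteratedFDeriv (by exact_mod_cast le_top) t
  have := congrArg (fun (L : ContinuousMultilinearMap ℝ (fun _ : Fin n => ℝ) ℝ) =>
    L (fun _ => 1)) hser
  rw [iteratedDeriv_eq_iteratedFDeriv, ← this]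
  rw [FormalMultilinearSeries.taylorComp]
  rw [ContinuousMultilinearMap.sum_apply]
  congr 1
  ext c
  rw [FormalMultilinearSeries.compAlongOrderedFinpartition_apply]
  have : (c.applyOrderedFinpartition
      (fun m ↦ ftaylorSeries ℝ g t (c.partSize m)) (fun _ => 1)) =
      fun m ↦ (iteratedDeriv (c.partSize m) g t) • (1 : ℝ) := by
    funext m
    simp only [OrderedFinpartition.applyOrderedFinpartition_apply, ftaylorSeries,
      iteratedDeriv_eq_iteratedFDeriv, smul_eq_mul, mul_one]
    congr 1
  rw [this, ContinuousMultilinearMap.map_smul_univ]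
  simp [ftaylorSeries, iteratedDeriv_eq_iteratedFDeriv, mul_comm]
/-- **Faà di Bruno's formula.** For smooth `f g : ℝ → ℝ`, `n ≥ 1` and `t : ℝ`,
the `n`-th derivative of `f ∘ g` at `t` is
`∑_{m=1}^{n} ∑ n!/(k₁!⋯kₙ!) f^{(m)}(g(t)) ∏ᵢ (g^{(i)}(t)/i!)^{kᵢ}`,
where the inner sum runs over tuples `(k₁,…,kₙ)` of non-negative integers with
`k₁+⋯+kₙ = m` and `k₁+2k₂+⋯+n·kₙ = n` (all such tuples satisfy `kᵢ ≤ n`,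
so they all lie in the finite box used below). Here `k i` stands for `k_{i+1}`. -/
theorem faa_di_bruno_formula (f g : ℝ → ℝ)
    (hf : ContDiff ℝ ((⊤ : ℕ∞) : WithTop ℕ∞) f)
    (hg : ContDiff ℝ ((⊤ : ℕ∞) : WithTop ℕ∞) g)
    (n : ℕ) (hn : 1 ≤ n) (t : ℝ) :
    iteratedDeriv n (f ∘ g) t =
      ∑ m ∈ Finset.Icc 1 n,
        ∑ k ∈ (Fintype.piFinset fun _ : Fin n => Finset.range (n + 1)).filter
            (fun k : Fin n → ℕ =>
              (∑ i, k i) = m ∧ (∑ i, (i.1 + 1) * k i) = n),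
          ((n ! : ℝ) / ∏ i : Fin n, ((k i)! : ℝ)) * iteratedDeriv m f (g t) *
            ∏ i : Fin n,
              (iteratedDeriv (i.1 + 1) g t / ((i.1 + 1)! : ℝ)) ^ (k i) := by
  classical
  set w : Multiset ℕ → ℝ := fun M =>
    iteratedDeriv (Multiset.card M) f (g t) *
      ((M.map (fun s => iteratedDeriv s g t)).prod) with hw
  set A : Finset (Multiset ℕ) :=
    Finset.image OrderedFinpartition.mtype Finset.univ with hA
  set K : Finset (Fin n → ℕ) :=
    (Fintype.piFinset fun _ : Fin n => Finset.range (n + 1)).filter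
      (fun k : Fin n → ℕ => (∑ i, (i.1 + 1) * k i) = n) with hK
  set F : Multiset ℕ → ℝ := fun M => (n ! : ℝ) / Pfac M * w M with hF
  -- admissible multisets are realized
  have hreal : ∀ M : Multiset ℕ, M.sum = n → (0:ℕ) ∉ M → M ∈ A := by
    intro M hs h0
    have hNP := N_mul_Pfac n M hs h0
    have hpos : 0 < (Finset.univ.filter
        (fun c : OrderedFinpartition n => c.mtype = M)).card := by
      rcases Nat.eq_zero_or_pos (Finset.univ.filter
          (fun c : OrderedFinpartition n => c.mtype = M)).card with h | h
      · rw [h, Nat.zero_mul] at hNP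
        exact absurd hNP.symm (Nat.factorial_ne_zero n)
      · exact h
    obtain ⟨c, hc⟩ := Finset.card_pos.mp hpos
    exact Finset.mem_image.mpr ⟨c, Finset.mem_univ c, (Finset.mem_filter.mp hc).2⟩
  calc iteratedDeriv n (f ∘ g) t
      = ∑ c : OrderedFinpartition n, w c.mtype := by
        rw [step1 f g hf hg n t]
        refine Finset.sum_congr rfl fun c _ => ?_
        simp only [hw]
        congr 1
        · rw [OrderedFinpartition.card_mtype]
        · rw [OrderedFinpartition.mtype, Multiset.map_map, Finset.prod_eq_multiset_prod]
          rfl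
    _ = ∑ M ∈ A, (Finset.univ.filter
          (fun c : OrderedFinpartition n => c.mtype = M)).card • w M := by
        rw [hA, Finset.sum_comp w OrderedFinpartition.mtype]
    _ = ∑ M ∈ A, F M := by
        refine Finset.sum_congr rfl fun M hM => ?_
        obtain ⟨c, -, rfl⟩ := Finset.mem_image.mp hM
        have hNP := N_mul_Pfac n c.mtype c.sum_mtype c.zero_not_mem_mtype
        rw [nsmul_eq_mul, hF]
        have hPne : (Pfac c.mtype : ℝ) ≠ 0 := Nat.cast_ne_zero.mpr (Pfac_pos _).ne'
        have : ((Finset.univ.filter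
            (fun c' : OrderedFinpartition n => c'.mtype = c.mtype)).card : ℝ)
            = (n ! : ℝ) / Pfac c.mtype := by
          rw [eq_div_iff hPne]
          exact_mod_cast congrArg Nat.cast hNP
        rw [this]
    _ = ∑ k ∈ K, F (Mk n k) := by
        symm
        refine Finset.sum_bij (fun k _ => Mk n k) ?_ ?_ ?_ (fun k _ => rfl)
        · intro k hk
          obtain ⟨-, hsum⟩ := Finset.mem_filter.mp hk
          exact hreal (Mk n k) (by rw [Mk_sum]; exact hsum) (Mk_zero_not_mem k)
        · intro k₁ h₁ k₂ h₂ h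
          exact Mk_inj h
        · intro M hM
          obtain ⟨c, -, rfl⟩ := Finset.mem_image.mp hM
          refine ⟨fun i => c.mtype.count (i.1 + 1), ?_, ?_⟩
          · -- membership in K
            have hMk : Mk n (fun i => c.mtype.count (i.1 + 1)) = c.mtype := by
              ext j
              rcases Nat.eq_zero_or_pos j with rfl | hj
              · rw [Mk_count_eq_zero _ (Or.inl rfl),
                  Multiset.count_eq_zero_of_notMem c.zero_not_mem_mtype]
              · rcases le_or_gt j n with hjn | hjn
                · have : j = (⟨j - 1, by omega⟩ : Fin n).1 + 1 := by simp; omega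
                  rw [this, Mk_count]
                · rw [Mk_count_eq_zero _ (Or.inr hjn),
                    Multiset.count_eq_zero_of_notMem
                      (fun hmem => by have := c.mem_mtype_le hmem; omega)]
            rw [hK, Finset.mem_filter]
            constructor
            · rw [Fintype.mem_piFinset]
              intro i
              rw [Finset.mem_range]
              have h1 : c.mtype.count (i.1+1) ≤ Multiset.card c.mtype :=
                Multiset.count_le_card _ _
              rw [c.card_mtype] at h1
              have := c.length_le
              omega
            · have := congrArg Multiset.sum hMk
              rw [Mk_sum, c.sum_mtype] at this
              exact this
          · -- Mk of the counts is the mtype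
            ext j
            rcases Nat.eq_zero_or_pos j with rfl | hj
            · rw [Mk_count_eq_zero _ (Or.inl rfl),
                Multiset.count_eq_zero_of_notMem c.zero_not_mem_mtype]
            · rcases le_or_gt j n with hjn | hjn
              · have : j = (⟨j - 1, by omega⟩ : Fin n).1 + 1 := by simp; omega
                rw [this, Mk_count]
              · rw [Mk_count_eq_zero _ (Or.inr hjn),
                  Multiset.count_eq_zero_of_notMem
                    (fun hmem => by have := c.mem_mtype_le hmem; omega)]
    _ = ∑ m ∈ Finset.Icc 1 n, ∑ k ∈ K.filter (fun k => (∑ i, k i) = m), F (Mk n k) := by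
        refine Finset.sum_fiberwise_of_maps_to ?_ _ |>.symm
        intro k hk
        obtain ⟨hpi, hsum⟩ := Finset.mem_filter.mp hk
        rw [Finset.mem_Icc]
        constructor
        · by_contra h
          push_neg at h
          interval_cases hsk : (∑ i, k i)
          · -- all k i = 0
            have : ∀ i, k i = 0 := by
              intro i
              have := Finset.sum_eq_zero_iff.mp hsk i (Finset.mem_univ i)
              exact this
            rw [Finset.sum_congr rfl (fun i _ => by rw [this i, Nat.mul_zero])] at hsum
            rw [Finset.sum_const_zero] at hsum
            omega
        · calc (∑ i, k i) ≤ ∑ i : Fin n, (i.1 + 1) * k i :=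
              Finset.sum_le_sum fun i _ => Nat.le_mul_of_pos_left _ (Nat.succ_pos _)
            _ = n := hsum
    _ = _ := by
        refine Finset.sum_congr rfl fun m hm => ?_
        have hsets : K.filter (fun k => (∑ i, k i) = m)
            = (Fintype.piFinset fun _ : Fin n => Finset.range (n + 1)).filter
              (fun k : Fin n → ℕ => (∑ i, k i) = m ∧ (∑ i, (i.1 + 1) * k i) = n) := by
          rw [hK, Finset.filter_filter]
          exact Finset.filter_congr fun k _ => by tauto
        rw [hsets]
        refine Finset.sum_congr rfl fun k hk => ?_
        obtain ⟨-, hkm, hkn⟩ := Finset.mem_filter.mp hk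
        -- per-term identity
        simp only [hF, hw]
        rw [Mk_card, Mk_prod_map, Pfac_Mk, hkm]
        have h1 : (∏ i : Fin n, (iteratedDeriv (i.1 + 1) g t / ((i.1 + 1)! : ℝ)) ^ (k i))
            = (∏ i : Fin n, (iteratedDeriv (i.1 + 1) g t) ^ (k i)) /
                ∏ i : Fin n, (((i.1 + 1)! : ℝ)) ^ (k i) := by
          rw [← Finset.prod_div_distrib]
          exact Finset.prod_congr rfl fun i _ => div_pow _ _ _
        rw [h1]
        have h2 : ((((∏ i : Fin n, ((i.1+1)!) ^ (k i)) * ∏ i : Fin n, (k i)!) : ℕ) : ℝ)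
            = (∏ i : Fin n, (((i.1+1)! : ℝ)) ^ (k i)) * ∏ i : Fin n, ((k i)! : ℝ) := by
          push_cast
          ring
        rw [h2]
        have hne1 : (∏ i : Fin n, (((i.1+1)! : ℝ)) ^ (k i)) ≠ 0 :=
          Finset.prod_ne_zero_iff.mpr fun i _ =>
            pow_ne_zero _ (Nat.cast_ne_zero.mpr (Nat.factorial_ne_zero _))
        have hne2 : (∏ i : Fin n, ((k i)! : ℝ)) ≠ 0 :=
          Finset.prod_ne_zero_iff.mpr fun i _ =>
            Nat.cast_ne_zero.mpr (Nat.factorial_ne_zero _)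
        field_simp
end Count
end

section
/- Let f, g : ℝ → ℝ be smooth functions, let n ≥ 1 and t ∈ ℝ. Then (d^n/dt^n)(f ∘ g)(t) = Σ_{π} f^{(|π|)}(g(t)) · ∏_{B ∈ π} g^{(|B|)}(t), where the sum runs over all set partitions π of the set {1, …, n} (equivalently, all Finpartitions of the full finset of Fin n), |π| is the number of blocks of π, and |B| is the cardinality of the block B. -/
open Finset
namespace FaaDiBrunoAux
variable {n : ℕ}

/-! ### From ordered finpartitions to finpartitions -/

noncomputable def partFinset (c : OrderedFinpartition n) (m : Fin c.length) : Finset (Fin n) :=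
  Finset.image (c.emb m) Finset.univ

lemma mem_partFinset {c : OrderedFinpartition n} {m : Fin c.length} {x : Fin n} :
    x ∈ partFinset c m ↔ x ∈ Set.range (c.emb m) := by
  simp [partFinset]

lemma coe_partFinset (c : OrderedFinpartition n) (m : Fin c.length) :
    (partFinset c m : Set (Fin n)) = Set.range (c.emb m) := by
  ext x; simp [mem_partFinset]

lemma card_partFinset (c : OrderedFinpartition n) (m : Fin c.length) :
    (partFinset c m).card = c.partSize m := by
  rw [partFinset, Finset.card_image_of_injective _ (c.emb_strictMono m).injective,
    card_univ, Fintype.card_fin]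

lemma partFinset_nonempty (c : OrderedFinpartition n) (m : Fin c.length) :
    (partFinset c m).Nonempty := by
  rw [← Finset.card_pos, card_partFinset]; exact c.partSize_pos m

lemma emb_eq (c : OrderedFinpartition n) (m : Fin c.length) :
    c.emb m = (partFinset c m).orderEmbOfFin (card_partFinset c m) :=
  Finset.orderEmbOfFin_unique _ (fun i => mem_partFinset.2 ⟨i, rfl⟩) (c.emb_strictMono m)

lemma max'_partFinset (c : OrderedFinpartition n) (m : Fin c.length) :
    (partFinset c m).max' (partFinset_nonempty c m) =
      c.emb m ⟨c.partSize m - 1, Nat.sub_one_lt_of_lt (c.partSize_pos m)⟩ := by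
  rw [emb_eq c m]
  rw [Finset.orderEmbOfFin_last (card_partFinset c m) (c.partSize_pos m)]

lemma max_partFinset_strictMono (c : OrderedFinpartition n) :
    StrictMono (fun m => (partFinset c m).max' (partFinset_nonempty c m)) := by
  intro a b hab
  have := c.parts_strictMono hab
  dsimp only
  rw [max'_partFinset, max'_partFinset]
  exact this

lemma partFinset_injective (c : OrderedFinpartition n) :
    Function.Injective (partFinset c) := by
  intro a b hab
  by_contra hne
  obtain ⟨x, hx⟩ := partFinset_nonempty c a
  have hxb : x ∈ partFinset c b := hab ▸ hx
  have := c.disjoint (Set.mem_univ a) (Set.mem_univ b) hne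
  exact this.le_bot ⟨mem_partFinset.1 hx, mem_partFinset.1 hxb⟩

noncomputable def toFP (c : OrderedFinpartition n) :
    Finpartition (Finset.univ : Finset (Fin n)) where
  parts := Finset.image (partFinset c) Finset.univ
  supIndep := by
    rw [Finset.supIndep_iff_pairwiseDisjoint]
    rintro B hB C hC hBC
    simp only [coe_image, Set.mem_image, mem_coe, mem_univ] at hB hC
    obtain ⟨a, -, rfl⟩ := hB
    obtain ⟨b, -, rfl⟩ := hC
    have hab : a ≠ b := fun h => hBC (by rw [h])
    have := c.disjoint (Set.mem_univ a) (Set.mem_univ b) hab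
    rw [Function.onFun, id, id, ← Finset.disjoint_coe, coe_partFinset, coe_partFinset]
    exact this
  sup_parts := by
    ext x
    simp only [mem_sup, mem_image, mem_univ, iff_true, id]
    obtain ⟨m, hm⟩ := c.cover x
    exact ⟨partFinset c m, by simp, by simpa [partFinset] using hm⟩
  bot_notMem := by
    simp only [bot_eq_empty, mem_image, mem_univ, true_and, not_exists]
    intro m h
    have := partFinset_nonempty c m
    rw [h] at this
    exact Finset.not_nonempty_empty this

lemma toFP_parts (c : OrderedFinpartition n) :
    (toFP c).parts = Finset.image (partFinset c) Finset.univ := rfl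

lemma toFP_parts_card (c : OrderedFinpartition n) :
    (toFP c).parts.card = c.length := by
  rw [toFP_parts, Finset.card_image_of_injective _ (partFinset_injective c),
    card_univ, Fintype.card_fin]

/-! ### Injectivity -/

lemma ext' {c c' : OrderedFinpartition n} (h : c.length = c'.length)
    (h2 : ∀ m : Fin c.length, partFinset c m = partFinset c' (Fin.cast h m)) : c = c' := by
  obtain ⟨l, ps, pos, e, hmono, hpmono, hdisj, hcov⟩ := c
  obtain ⟨l', ps', pos', e', hmono', hpmono', hdisj', hcov'⟩ := c'
  dsimp only at h
  subst h
  have hps : ps = ps' := by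
    funext m
    have := congrArg Finset.card (h2 m)
    rwa [card_partFinset, card_partFinset] at this
  subst hps
  have he : e = e' := by
    funext m
    have key : ∀ (s s' : Finset (Fin n)) (_ : s = s') (hc : s.card = ps m)
        (hc' : s'.card = ps m), ⇑(s.orderEmbOfFin hc) = ⇑(s'.orderEmbOfFin hc') := by
      rintro s s' rfl hc hc'
      rfl
    have h1 := emb_eq ⟨l, ps, pos, e, hmono, hpmono, hdisj, hcov⟩ m
    have h2' := emb_eq ⟨l, ps, pos', e', hmono', hpmono', hdisj', hcov'⟩ m
    dsimp only at h1 h2'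
    rw [h1, h2']
    exact key _ _ (h2 m) _ _
  subst he
  rfl

lemma max_strictMono (c : OrderedFinpartition n) :
    StrictMono (fun m => (partFinset c m).max) := by
  intro a b hab
  dsimp only
  rw [← Finset.coe_max' (partFinset_nonempty c a), ← Finset.coe_max' (partFinset_nonempty c b)]
  exact WithBot.coe_lt_coe.2 (max_partFinset_strictMono c hab)

lemma toFP_injective : Function.Injective (toFP (n := n)) := by
  intro c c' h
  have hlen : c.length = c'.length := by
    rw [← toFP_parts_card, ← toFP_parts_card, h]
  apply ext' hlen
  intro m
  have hsm1 : StrictMono (fun m => (partFinset c m).max) := max_strictMono c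
  have hcast : StrictMono (Fin.cast hlen) := fun _ _ hab => hab
  have hsm2 : StrictMono (fun m : Fin c.length => (partFinset c' (Fin.cast hlen m)).max) :=
    (max_strictMono c').comp hcast
  have himg : Finset.image (fun m => (partFinset c m).max) Finset.univ
      = Finset.image (fun m : Fin c.length => (partFinset c' (Fin.cast hlen m)).max)
          Finset.univ := by
    have e1 : Finset.image (fun m => (partFinset c m).max) Finset.univ
        = Finset.image Finset.max (toFP c).parts := by
      rw [toFP_parts, Finset.image_image]; rfl
    have hsurj : Function.Surjective (Fin.cast hlen) := fun x => ⟨Fin.cast hlen.symm x, rfl⟩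
    have e2 : Finset.image (fun m : Fin c.length => (partFinset c' (Fin.cast hlen m)).max)
        Finset.univ = Finset.image Finset.max (toFP c').parts := by
      rw [toFP_parts, Finset.image_image,
        show (fun m : Fin c.length => (partFinset c' (Fin.cast hlen m)).max)
          = (Finset.max ∘ partFinset c') ∘ Fin.cast hlen from rfl,
        ← Finset.image_image, Finset.image_univ_of_surjective hsurj]
    rw [e1, e2, h]
  have hcard : (Finset.image (fun m => (partFinset c m).max) Finset.univ).card = c.length := by
    rw [Finset.card_image_of_injective _ hsm1.injective, card_univ, Fintype.card_fin]
  have hfun : (fun m => (partFinset c m).max)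
      = fun m : Fin c.length => (partFinset c' (Fin.cast hlen m)).max := by
    rw [Finset.orderEmbOfFin_unique hcard
        (fun x => Finset.mem_image_of_mem _ (mem_univ x)) hsm1,
      Finset.orderEmbOfFin_unique hcard
        (fun x => by rw [himg]; exact Finset.mem_image_of_mem _ (mem_univ x)) hsm2]
  have hmax := congrFun hfun m
  beta_reduce at hmax
  have h1 : partFinset c m ∈ (toFP c).parts := by
    rw [toFP_parts]; exact Finset.mem_image_of_mem _ (mem_univ m)
  have h2 : partFinset c' (Fin.cast hlen m) ∈ (toFP c).parts := by
    rw [h, toFP_parts]; exact Finset.mem_image_of_mem _ (mem_univ _)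
  have hmax' : (partFinset c' (Fin.cast hlen m)).max' (partFinset_nonempty c' _)
      = (partFinset c m).max' (partFinset_nonempty c m) :=
    WithBot.coe_injective (by rw [Finset.coe_max', Finset.coe_max', hmax])
  have ha : (partFinset c m).max' (partFinset_nonempty c m)
      ∈ partFinset c' (Fin.cast hlen m) := by
    rw [← hmax']; exact Finset.max'_mem _ _
  exact (toFP c).eq_of_mem_parts h1 h2 (Finset.max'_mem _ _) ha

variable (P : Finpartition (Finset.univ : Finset (Fin n)))

/-- The finset of maxima of the parts. -/
noncomputable def maxes : Finset (Fin n) :=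
  P.parts.attach.image (fun B => B.1.max' (P.nonempty_of_mem_parts B.2))

lemma card_maxes : (maxes P).card = P.parts.card := by
  rw [maxes, Finset.card_image_of_injective, Finset.card_attach]
  rintro ⟨B, hB⟩ ⟨C, hC⟩ h
  simp only at h
  have hBmem : B.max' (P.nonempty_of_mem_parts hB) ∈ B := Finset.max'_mem _ _
  have hCmem : B.max' (P.nonempty_of_mem_parts hB) ∈ C := h ▸ Finset.max'_mem _ _
  exact Subtype.ext (P.eq_of_mem_parts hB hC hBmem hCmem)

/-- Enumeration of the maxima in increasing order. -/
noncomputable def sigma : Fin P.parts.card → Fin n :=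
  (maxes P).orderEmbOfFin (card_maxes P)

lemma sigma_strictMono : StrictMono (sigma P) :=
  ((maxes P).orderEmbOfFin (card_maxes P)).strictMono

lemma sigma_mem_part (m : Fin P.parts.card) : sigma P m ∈ P.part (sigma P m) :=
  P.mem_part (mem_univ _)

lemma part_sigma_mem (m : Fin P.parts.card) : P.part (sigma P m) ∈ P.parts :=
  P.part_mem.2 (mem_univ _)

lemma part_sigma_nonempty (m : Fin P.parts.card) : (P.part (sigma P m)).Nonempty :=
  ⟨_, sigma_mem_part P m⟩

lemma max'_part_sigma (m : Fin P.parts.card) :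
    (P.part (sigma P m)).max' (part_sigma_nonempty P m) = sigma P m := by
  have h1 : sigma P m ∈ maxes P := Finset.orderEmbOfFin_mem _ _ _
  simp only [maxes, mem_image, mem_attach, true_and, Subtype.exists] at h1
  obtain ⟨B, hB, hBmax⟩ := h1
  have hPB : P.part (sigma P m) = B :=
    P.part_eq_of_mem hB (hBmax ▸ Finset.max'_mem _ _)
  apply WithBot.coe_injective
  rw [Finset.coe_max', hPB, ← hBmax, Finset.coe_max']

/-- A `Finpartition` of `univ : Finset (Fin n)` gives an ordered finpartition. -/
noncomputable def ofFP : OrderedFinpartition n where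
  length := P.parts.card
  partSize m := (P.part (sigma P m)).card
  partSize_pos m := Finset.card_pos.2 (part_sigma_nonempty P m)
  emb m := (P.part (sigma P m)).orderEmbOfFin rfl
  emb_strictMono m := ((P.part (sigma P m)).orderEmbOfFin rfl).strictMono
  parts_strictMono := by
    intro a b hab
    simp only
    rw [Finset.orderEmbOfFin_last rfl (Finset.card_pos.2 (part_sigma_nonempty P a)),
      Finset.orderEmbOfFin_last rfl (Finset.card_pos.2 (part_sigma_nonempty P b)),
      max'_part_sigma, max'_part_sigma]
    exact sigma_strictMono P hab
  disjoint := by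
    rintro a - b - hab
    have hne : P.part (sigma P a) ≠ P.part (sigma P b) := by
      intro h
      apply hab
      apply (sigma_strictMono P).injective
      rw [← max'_part_sigma P a, ← max'_part_sigma P b]
      congr 1
    have hd := P.disjoint (part_sigma_mem P a) (part_sigma_mem P b) hne
    rw [Function.onFun, Finset.range_orderEmbOfFin, Finset.range_orderEmbOfFin]
    exact Finset.disjoint_coe.2 hd
  cover := by
    intro x
    have hx : (P.part x).max' ⟨x, P.mem_part (mem_univ x)⟩ ∈ maxes P := by
      simp only [maxes, mem_image, mem_attach, true_and, Subtype.exists]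
      exact ⟨P.part x, P.part_mem.2 (mem_univ x), rfl⟩
    have hx' : ((P.part x).max' ⟨x, P.mem_part (mem_univ x)⟩) ∈ Set.range (sigma P) := by
      rw [sigma, Finset.range_orderEmbOfFin]
      exact Finset.mem_coe.2 hx
    obtain ⟨m, hm⟩ := hx'
    refine ⟨m, ?_⟩
    have hpart : P.part (sigma P m) = P.part x := by
      apply P.part_eq_of_mem (P.part_mem.2 (mem_univ x))
      show sigma P m ∈ P.part x
      rw [show sigma P m = _ from hm]
      exact Finset.max'_mem _ _
    rw [Finset.range_orderEmbOfFin]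
    show x ∈ (P.part (sigma P m) : Set (Fin n))
    rw [hpart]
    exact P.mem_part (mem_univ x)


lemma image_orderEmbOfFin_univ {α : Type*} [LinearOrder α] (s : Finset α) {k : ℕ}
    (h : s.card = k) : Finset.image (s.orderEmbOfFin h) Finset.univ = s := by
  ext x
  simp only [mem_image, mem_univ, true_and]
  constructor
  · rintro ⟨i, rfl⟩
    exact Finset.orderEmbOfFin_mem s h i
  · intro hx
    have : x ∈ Set.range (s.orderEmbOfFin h) := by
      rw [Finset.range_orderEmbOfFin]
      exact hx
    exact this

lemma partFinset_ofFP (P : Finpartition (Finset.univ : Finset (Fin n)))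
    (m : Fin (ofFP P).length) : partFinset (ofFP P) m = P.part (sigma P m) := by
  show Finset.image ((P.part (sigma P m)).orderEmbOfFin rfl) Finset.univ = _
  convert image_orderEmbOfFin_univ (P.part (sigma P m)) rfl using 2

lemma toFP_ofFP (P : Finpartition (Finset.univ : Finset (Fin n))) : toFP (ofFP P) = P := by
  ext1
  rw [toFP_parts]
  apply Finset.Subset.antisymm
  · intro B hB
    simp only [mem_image, mem_univ, true_and] at hB
    obtain ⟨m, rfl⟩ := hB
    rw [partFinset_ofFP]
    exact part_sigma_mem P m
  · intro B hB
    have hBne : B.Nonempty := P.nonempty_of_mem_parts hB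
    have hmax : B.max' hBne ∈ maxes P := by
      simp only [maxes, mem_image, mem_attach, true_and, Subtype.exists]
      exact ⟨B, hB, rfl⟩
    have : B.max' hBne ∈ Set.range (sigma P) := by
      rw [sigma, Finset.range_orderEmbOfFin]
      exact Finset.mem_coe.2 hmax
    obtain ⟨m, hm⟩ := this
    have hpart : P.part (sigma P m) = B :=
      P.part_eq_of_mem hB (hm ▸ Finset.max'_mem _ _)
    refine Finset.mem_image.2 ⟨m, mem_univ m, ?_⟩
    exact (partFinset_ofFP P m).trans hpart

lemma toFP_surjective : Function.Surjective (toFP (n := n)) :=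
  fun P => ⟨ofFP P, toFP_ofFP P⟩

lemma toFP_bijective : Function.Bijective (toFP (n := n)) :=
  ⟨toFP_injective, toFP_surjective⟩

end FaaDiBrunoAux


open FaaDiBrunoAux in

/-- **Faà di Bruno's formula, set-partition form (Frucht–Rota).**
For smooth `f g : ℝ → ℝ`, `n ≥ 1` and `t : ℝ`,
`(f ∘ g)^{(n)}(t) = ∑_{π} f^{(|π|)}(g(t)) · ∏_{B ∈ π} g^{(|B|)}(t)`,
the sum running over all set partitions `π` of `{1,…,n}`, i.e. all
`Finpartition`s of the full finset of `Fin n`. -/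
theorem faa_di_bruno_partitions (f g : ℝ → ℝ)
    (hf : ContDiff ℝ ((⊤ : ℕ∞) : WithTop ℕ∞) f)
    (hg : ContDiff ℝ ((⊤ : ℕ∞) : WithTop ℕ∞) g)
    (n : ℕ) (hn : 1 ≤ n) (t : ℝ) :
    iteratedDeriv n (f ∘ g) t =
      ∑ π : Finpartition (Finset.univ : Finset (Fin n)),
        iteratedDeriv π.parts.card f (g t) *
          ∏ B ∈ π.parts, iteratedDeriv B.card g t := by
  classical
  have hf' : HasFTaylorSeriesUpTo ((⊤ : ℕ∞) : WithTop ℕ∞) f (ftaylorSeries ℝ f) :=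
    contDiff_iff_ftaylorSeries.1 hf
  have hg' : HasFTaylorSeriesUpTo ((⊤ : ℕ∞) : WithTop ℕ∞) g (ftaylorSeries ℝ g) :=
    contDiff_iff_ftaylorSeries.1 hg
  rw [← hasFTaylorSeriesUpToOn_univ_iff] at hf' hg'
  have hcomp := hf'.comp hg' (Set.mapsTo_univ g Set.univ)
  rw [hasFTaylorSeriesUpToOn_univ_iff] at hcomp
  have key : (ftaylorSeries ℝ f (g t)).taylorComp (ftaylorSeries ℝ g t) n
      = iteratedFDeriv ℝ n (f ∘ g) t := hcomp.eq_iteratedFDeriv (by exact_mod_cast le_top) t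
  have expand : iteratedDeriv n (f ∘ g) t = ∑ c : OrderedFinpartition n,
      iteratedDeriv c.length f (g t) * ∏ m, iteratedDeriv (c.partSize m) g t := by
    rw [iteratedDeriv_eq_iteratedFDeriv, ← key, FormalMultilinearSeries.taylorComp,
      ContinuousMultilinearMap.sum_apply]
    apply Finset.sum_congr rfl
    intro c _
    rw [FormalMultilinearSeries.compAlongOrderedFinpartition_apply]
    have hv : c.applyOrderedFinpartition
        (fun m => ftaylorSeries ℝ g t (c.partSize m)) (fun _ => (1 : ℝ))
        = fun m => iteratedDeriv (c.partSize m) g t := by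
      funext m
      rw [OrderedFinpartition.applyOrderedFinpartition_apply]
      show iteratedFDeriv ℝ (c.partSize m) g t _ = _
      rw [iteratedDeriv_eq_iteratedFDeriv]
      rfl
    rw [hv]
    have hml := (iteratedFDeriv ℝ c.length f (g t)).map_smul_univ
        (fun m => iteratedDeriv (c.partSize m) g t) (fun _ => (1 : ℝ))
    simp only [smul_eq_mul, mul_one] at hml
    show iteratedFDeriv ℝ c.length f (g t) _ = _
    rw [hml, iteratedDeriv_eq_iteratedFDeriv, mul_comm]
  rw [expand]
  apply Fintype.sum_bijective toFP toFP_bijective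
  intro c
  rw [toFP_parts_card, toFP_parts,
    Finset.prod_image (fun a _ b _ h => partFinset_injective c h)]
  congr 1
  apply Finset.prod_congr rfl
  intro m _
  rw [card_partFinset]
end

section
/- Let f, g : ℝ → ℝ be smooth and t₀ ∈ ℝ. In the ring ℝ⟦y⟧ of formal power series, let h := Σ_{k≥1} (g^{(k)}(t₀)/k!) y^k (a power series with zero constant term). Then Σ_{n≥0} ((f∘g)^{(n)}(t₀)/n!) y^n = Σ_{m≥0} (f^{(m)}(g(t₀))/m!) · h^m, where the right-hand side is a well-defined formal power series since h^m has order at least m. -/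
open scoped Nat

open PowerSeries Finset

/-- The Taylor series of `g` at `t` with the constant term removed. -/
noncomputable def hser (g : ℝ → ℝ) (t : ℝ) : PowerSeries ℝ :=
  PowerSeries.mk fun k : ℕ => if k = 0 then (0 : ℝ) else iteratedDeriv k g t / k !

/-- The coefficientwise `t`-derivative of `hser g t`. -/
noncomputable def hserD (g : ℝ → ℝ) (t : ℝ) : PowerSeries ℝ :=
  PowerSeries.mk fun k : ℕ => if k = 0 then (0 : ℝ) else iteratedDeriv (k + 1) g t / k !

lemma natlt_infty (m : ℕ) : (m : WithTop ℕ∞) < ((⊤ : ℕ∞) : WithTop ℕ∞) := by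
  exact_mod_cast WithTop.coe_lt_coe.mpr (WithTop.coe_lt_top m)

lemma coeff_pow_zero_of_lt (ψ : PowerSeries ℝ) (hψ : PowerSeries.constantCoeff (R := ℝ) ψ = 0) :
    ∀ m i : ℕ, i < m → PowerSeries.coeff (R := ℝ) i (ψ ^ m) = 0 := by
  intro m
  induction m with
  | zero => intro i hi; omega
  | succ m ih =>
    intro i hi
    rw [pow_succ, PowerSeries.coeff_mul]
    apply Finset.sum_eq_zero
    intro p hp
    rw [Finset.HasAntidiagonal.mem_antidiagonal] at hp
    by_cases h1 : p.1 < m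
    · rw [ih p.1 h1, zero_mul]
    · have h2 : p.2 = 0 := by omega
      rw [h2, PowerSeries.coeff_zero_eq_constantCoeff, hψ, mul_zero]

lemma constantCoeff_hser (g : ℝ → ℝ) (t : ℝ) :
    PowerSeries.constantCoeff (R := ℝ) (hser g t) = 0 := by
  simp [hser, ← PowerSeries.coeff_zero_eq_constantCoeff]

lemma derivFun_hser (g : ℝ → ℝ) (t : ℝ) :
    PowerSeries.derivativeFun (hser g t) = hserD g t + PowerSeries.C (R := ℝ) (deriv g t) := by
  ext k
  rw [show PowerSeries.derivativeFun (hser g t) = PowerSeries.derivative ℝ (hser g t) from rfl, PowerSeries.coeff_derivative]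
  cases k with
  | zero =>
    simp [hser, hserD, PowerSeries.coeff_C, iteratedDeriv_one]
  | succ k =>
    have hk : ((k + 1 + 1)! : ℝ) = (k + 2) * (k + 1)! := by
      rw [Nat.factorial_succ]; push_cast; ring
    simp only [hser, hserD, PowerSeries.coeff_mk, map_add, PowerSeries.coeff_C]
    rw [if_neg (by omega), if_neg (by omega), if_neg (by omega), hk]
    have h1 : ((k + 1)! : ℝ) ≠ 0 := by positivity
    field_simp
    push_cast
    ring

lemma derivFun_pow (ψ : PowerSeries ℝ) :
    ∀ m : ℕ, PowerSeries.derivativeFun (ψ ^ (m + 1)) =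
      ((m : PowerSeries ℝ) + 1) * ψ ^ m * PowerSeries.derivativeFun ψ := by
  intro m
  induction m with
  | zero => simp
  | succ m ih =>
    rw [pow_succ, PowerSeries.derivativeFun_mul, ih]
    simp only [smul_eq_mul]
    push_cast
    ring

lemma hasDerivAt_coeff_hser (g : ℝ → ℝ)
    (hg : ContDiff ℝ ((⊤ : ℕ∞) : WithTop ℕ∞) g) (k : ℕ) (t : ℝ) :
    HasDerivAt (fun s => PowerSeries.coeff (R := ℝ) k (hser g s))
      (PowerSeries.coeff (R := ℝ) k (hserD g t)) t := by
  cases k with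
  | zero =>
    simp only [hser, hserD, PowerSeries.coeff_mk, if_pos rfl]
    exact hasDerivAt_const t 0
  | succ k =>
    simp only [hser, hserD, PowerSeries.coeff_mk, if_neg (Nat.succ_ne_zero k)]
    have hdiff : Differentiable ℝ (iteratedDeriv (k + 1) g) :=
      hg.differentiable_iteratedDeriv (k + 1) (natlt_infty (k + 1))
    have h1 : HasDerivAt (iteratedDeriv (k + 1) g)
        (iteratedDeriv (k + 2) g t) t := by
      have := (hdiff t).hasDerivAt
      rwa [show iteratedDeriv (k + 2) g = deriv (iteratedDeriv (k + 1) g) from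
        iteratedDeriv_succ]
    exact h1.div_const _

lemma hasDerivAt_coeff_pow (g : ℝ → ℝ)
    (hg : ContDiff ℝ ((⊤ : ℕ∞) : WithTop ℕ∞) g) (m N : ℕ) (t : ℝ) :
    HasDerivAt (fun s => PowerSeries.coeff (R := ℝ) N (hser g s ^ m))
      ((m : ℝ) * PowerSeries.coeff (R := ℝ) N (hser g t ^ (m - 1) * hserD g t)) t := by
  induction m generalizing N with
  | zero =>
    simp only [pow_zero, Nat.cast_zero, zero_mul]
    exact hasDerivAt_const t _
  | succ m ih =>
    have key : HasDerivAt
        (fun s => ∑ p ∈ Finset.HasAntidiagonal.antidiagonal N,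
          PowerSeries.coeff (R := ℝ) p.1 (hser g s ^ m) * PowerSeries.coeff (R := ℝ) p.2 (hser g s))
        (∑ p ∈ Finset.HasAntidiagonal.antidiagonal N,
          (((m : ℝ) * PowerSeries.coeff (R := ℝ) p.1 (hser g t ^ (m - 1) * hserD g t)) *
              PowerSeries.coeff (R := ℝ) p.2 (hser g t) +
            PowerSeries.coeff (R := ℝ) p.1 (hser g t ^ m) *
              PowerSeries.coeff (R := ℝ) p.2 (hserD g t))) t :=
      HasDerivAt.fun_sum fun p _ => (ih p.1).mul (hasDerivAt_coeff_hser g hg p.2 t)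
    have heq : (fun s => PowerSeries.coeff (R := ℝ) N (hser g s ^ (m + 1))) =
        fun s => ∑ p ∈ Finset.HasAntidiagonal.antidiagonal N,
          PowerSeries.coeff (R := ℝ) p.1 (hser g s ^ m) * PowerSeries.coeff (R := ℝ) p.2 (hser g s) := by
      funext s; rw [pow_succ, PowerSeries.coeff_mul]
    rw [heq]
    convert key using 1
    rw [Finset.sum_add_distrib]
    have e1 : ∑ p ∈ Finset.HasAntidiagonal.antidiagonal N,
        ((m : ℝ) * PowerSeries.coeff (R := ℝ) p.1 (hser g t ^ (m - 1) * hserD g t)) *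
          PowerSeries.coeff (R := ℝ) p.2 (hser g t)
        = (m : ℝ) * PowerSeries.coeff (R := ℝ) N (hser g t ^ (m - 1) * hserD g t * hser g t) := by
      rw [PowerSeries.coeff_mul, Finset.mul_sum]
      exact Finset.sum_congr rfl fun p _ => by ring
    have e2 : ∑ p ∈ Finset.HasAntidiagonal.antidiagonal N,
        PowerSeries.coeff (R := ℝ) p.1 (hser g t ^ m) * PowerSeries.coeff (R := ℝ) p.2 (hserD g t)
        = PowerSeries.coeff (R := ℝ) N (hser g t ^ m * hserD g t) := by
      rw [PowerSeries.coeff_mul]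
    rw [e1, e2]
    have e3 : (m : ℝ) * PowerSeries.coeff (R := ℝ) N (hser g t ^ (m - 1) * hserD g t * hser g t)
        = (m : ℝ) * PowerSeries.coeff (R := ℝ) N (hser g t ^ m * hserD g t) := by
      cases m with
      | zero => simp
      | succ m =>
        congr 2
        rw [Nat.add_sub_cancel]
        ring
    rw [e3]
    push_cast
    ring

/-- The key recurrence for the coefficients. -/
lemma coeff_pow_recurrence (g : ℝ → ℝ) (m N : ℕ) (t : ℝ) :
    (m : ℝ) * PowerSeries.coeff (R := ℝ) N (hser g t ^ (m - 1) * hserD g t) =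
      (N + 1 : ℝ) * PowerSeries.coeff (R := ℝ) (N + 1) (hser g t ^ m) -
        (m : ℝ) * deriv g t * PowerSeries.coeff (R := ℝ) N (hser g t ^ (m - 1)) := by
  cases m with
  | zero => simp
  | succ m =>
    rw [Nat.add_sub_cancel]
    have hD : hserD g t = PowerSeries.derivativeFun (hser g t)
        - PowerSeries.C (R := ℝ) (deriv g t) := by
      rw [derivFun_hser]; ring
    have key : PowerSeries.coeff (R := ℝ) N (PowerSeries.derivativeFun (hser g t ^ (m + 1)))
        = PowerSeries.coeff (R := ℝ) (N + 1) (hser g t ^ (m + 1)) * (N + 1) :=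
      PowerSeries.coeff_derivativeFun _ _
    rw [derivFun_pow] at key
    have expand : (hser g t ^ m * ((m : PowerSeries ℝ) + 1)) *
        PowerSeries.derivativeFun (hser g t) =
        ((m : PowerSeries ℝ) + 1) * hser g t ^ m *
          PowerSeries.derivativeFun (hser g t) := by ring
    have hnat : ((m : PowerSeries ℝ) + 1) * hser g t ^ m *
        PowerSeries.derivativeFun (hser g t) =
        ((m + 1 : ℕ) : ℝ) • (hser g t ^ m * PowerSeries.derivativeFun (hser g t)) := by
      have hC2 : PowerSeries.C (R := ℝ) (((m + 1 : ℕ) : ℝ)) = (m : PowerSeries ℝ) + 1 := by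
        rw [map_natCast]
        push_cast
        ring
      rw [PowerSeries.smul_eq_C_mul, hC2]
      ring
    rw [hnat] at key
    rw [map_smul, smul_eq_mul] at key
    rw [hD, mul_sub]
    have hC : PowerSeries.coeff (R := ℝ) N (hser g t ^ m * PowerSeries.C (R := ℝ) (deriv g t))
        = deriv g t * PowerSeries.coeff (R := ℝ) N (hser g t ^ m) := by
      rw [mul_comm, PowerSeries.coeff_C_mul]
    rw [map_sub, mul_sub, hC, key]
    push_cast
    ring

lemma coeff_top_pow (g : ℝ → ℝ) (N : ℕ) (t : ℝ) :
    PowerSeries.coeff (R := ℝ) (N + 1) (hser g t ^ (N + 1)) =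
      deriv g t * PowerSeries.coeff (R := ℝ) N (hser g t ^ N) := by
  rw [pow_succ, PowerSeries.coeff_mul]
  rw [Finset.sum_eq_single (N, 1)]
  · have : PowerSeries.coeff (R := ℝ) 1 (hser g t) = deriv g t := by
      simp [hser, iteratedDeriv_one]
    rw [this]; ring
  · intro p hp hne
    rw [Finset.HasAntidiagonal.mem_antidiagonal] at hp
    by_cases h1 : p.1 < N
    · rw [coeff_pow_zero_of_lt _ (constantCoeff_hser g t) N p.1 h1, zero_mul]
    · have h2 : p.2 = 0 := by
        rcases Nat.lt_or_ge p.1 (N + 1) with h | h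
        · exfalso; apply hne
          have : p.1 = N := by omega
          have : p.2 = 1 := by omega
          exact Prod.ext (by omega) this
        · omega
      rw [h2, PowerSeries.coeff_zero_eq_constantCoeff, constantCoeff_hser, mul_zero]
  · intro h
    exfalso; exact h (Finset.HasAntidiagonal.mem_antidiagonal.mpr rfl)

lemma faa_main (f g : ℝ → ℝ) (hf : ContDiff ℝ ((⊤ : ℕ∞) : WithTop ℕ∞) f)
    (hg : ContDiff ℝ ((⊤ : ℕ∞) : WithTop ℕ∞) g) :
    ∀ N : ℕ, ∀ t : ℝ, iteratedDeriv N (f ∘ g) t =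
      ∑ m ∈ Finset.range (N + 1), ((N ! : ℝ) / m !) * iteratedDeriv m f (g t) *
        PowerSeries.coeff (R := ℝ) N (hser g t ^ m) := by
  intro N
  induction N with
  | zero =>
    intro t
    simp [iteratedDeriv_zero, Function.comp]
  | succ N ih =>
    intro t
    rw [iteratedDeriv_succ]
    have hfun : iteratedDeriv N (f ∘ g) = fun s =>
        ∑ m ∈ Finset.range (N + 1), ((N ! : ℝ) / m !) * iteratedDeriv m f (g s) *
          PowerSeries.coeff (R := ℝ) N (hser g s ^ m) := funext ih
    rw [hfun]
    -- derivative of each summand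
    have hgd : HasDerivAt g (deriv g t) t :=
      ((hg.differentiable (by simp)).differentiableAt (x := t)).hasDerivAt
    have HF : ∀ m : ℕ, HasDerivAt (fun s => iteratedDeriv m f (g s))
        (iteratedDeriv (m + 1) f (g t) * deriv g t) t := by
      intro m
      have hdiff : Differentiable ℝ (iteratedDeriv m f) :=
        hf.differentiable_iteratedDeriv m (natlt_infty m)
      have h1 : HasDerivAt (iteratedDeriv m f) (iteratedDeriv (m + 1) f (g t)) (g t) := by
        have := (hdiff (g t)).hasDerivAt
        rwa [show iteratedDeriv (m + 1) f = deriv (iteratedDeriv m f) from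
          iteratedDeriv_succ]
      exact h1.comp t hgd
    have Hsum : HasDerivAt (fun s =>
        ∑ m ∈ Finset.range (N + 1), ((N ! : ℝ) / m !) * iteratedDeriv m f (g s) *
          PowerSeries.coeff (R := ℝ) N (hser g s ^ m))
        (∑ m ∈ Finset.range (N + 1),
          (((N ! : ℝ) / m !) * (iteratedDeriv (m + 1) f (g t) * deriv g t) *
              PowerSeries.coeff (R := ℝ) N (hser g t ^ m) +
            ((N ! : ℝ) / m !) * iteratedDeriv m f (g t) *
              ((m : ℝ) * PowerSeries.coeff (R := ℝ) N (hser g t ^ (m - 1) * hserD g t)))) t :=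
      HasDerivAt.fun_sum fun m _ =>
        ((HF m).const_mul ((N ! : ℝ) / m !)).mul (hasDerivAt_coeff_pow g hg m N t)
    rw [Hsum.deriv]
    -- now the combinatorial identity
    have fact_ne : ∀ k : ℕ, ((k ! : ℝ)) ≠ 0 := fun k => by positivity
    -- rewrite via the recurrence
    have step1 : ∀ m ∈ Finset.range (N + 1),
        ((N ! : ℝ) / m !) * (iteratedDeriv (m + 1) f (g t) * deriv g t) *
            PowerSeries.coeff (R := ℝ) N (hser g t ^ m) +
          ((N ! : ℝ) / m !) * iteratedDeriv m f (g t) *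
            ((m : ℝ) * PowerSeries.coeff (R := ℝ) N (hser g t ^ (m - 1) * hserD g t))
        = (((N ! : ℝ) / m !) * iteratedDeriv (m + 1) f (g t) * deriv g t *
              PowerSeries.coeff (R := ℝ) N (hser g t ^ m) +
            (((N + 1)! : ℝ) / m !) * iteratedDeriv m f (g t) *
              PowerSeries.coeff (R := ℝ) (N + 1) (hser g t ^ m)) -
          ((N ! : ℝ) / m !) * (m : ℝ) * iteratedDeriv m f (g t) * deriv g t *
              PowerSeries.coeff (R := ℝ) N (hser g t ^ (m - 1)) := by
      intro m _
      rw [coeff_pow_recurrence]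
      have : ((N + 1)! : ℝ) = (N + 1) * N ! := by
        rw [Nat.factorial_succ]; push_cast; ring
      rw [this]
      field_simp
      ring
    rw [Finset.sum_congr rfl step1, Finset.sum_sub_distrib, Finset.sum_add_distrib]
    -- name the three sums
    set b : ℕ → ℕ → ℝ := fun M m => PowerSeries.coeff (R := ℝ) M (hser g t ^ m) with hb
    set F : ℕ → ℝ := fun m => iteratedDeriv m f (g t) with hFdef
    -- S3 reindex
    have S3 : ∑ m ∈ Finset.range (N + 1),
        ((N ! : ℝ) / m !) * (m : ℝ) * F m * deriv g t * b N (m - 1)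
        = ∑ m ∈ Finset.range N,
          ((N ! : ℝ) / m !) * F (m + 1) * deriv g t * b N m := by
      rw [Finset.sum_range_succ']
      simp only [Nat.cast_zero, mul_zero, zero_mul, mul_zero, add_zero]
      have : ∀ m, ((N ! : ℝ) / (m + 1)!) * ((m : ℝ) + 1) = (N ! : ℝ) / m ! := by
        intro m
        have h1 : ((m + 1)! : ℝ) = ((m : ℝ) + 1) * m ! := by
          rw [Nat.factorial_succ]; push_cast; ring
        rw [h1]
        have h2 : ((m : ℝ) + 1) ≠ 0 := by positivity
        have h3 : ((m ! : ℝ)) ≠ 0 := by positivity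
        field_simp
        try ring
      refine Finset.sum_congr rfl fun m _ => ?_
      rw [Nat.add_sub_cancel]
      push_cast
      rw [← this m]
      try ring
    have S1 : ∑ m ∈ Finset.range (N + 1),
        ((N ! : ℝ) / m !) * F (m + 1) * deriv g t * b N m
        = (∑ m ∈ Finset.range N,
            ((N ! : ℝ) / m !) * F (m + 1) * deriv g t * b N m) +
          ((N ! : ℝ) / N !) * F (N + 1) * deriv g t * b N N :=
      Finset.sum_range_succ _ N
    have S2 : ∑ m ∈ Finset.range (N + 2),
        (((N + 1)! : ℝ) / m !) * F m * b (N + 1) m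
        = (∑ m ∈ Finset.range (N + 1),
            (((N + 1)! : ℝ) / m !) * F m * b (N + 1) m) +
          (((N + 1)! : ℝ) / (N + 1)!) * F (N + 1) * b (N + 1) (N + 1) :=
      Finset.sum_range_succ _ (N + 1)
    have hbtop : b (N + 1) (N + 1) = deriv g t * b N N := coeff_top_pow g N t
    have hgoal : ∑ m ∈ Finset.range (N + 1 + 1),
        (((N + 1)! : ℝ) / m !) * F m * b (N + 1) m
        = (∑ m ∈ Finset.range (N + 1),
            ((N ! : ℝ) / m !) * F (m + 1) * deriv g t * b N m +
           ∑ m ∈ Finset.range (N + 1),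
            (((N + 1)! : ℝ) / m !) * F m * b (N + 1) m) -
          ∑ m ∈ Finset.range (N + 1),
            ((N ! : ℝ) / m !) * (m : ℝ) * F m * deriv g t * b N (m - 1) := by
      rw [S3, S1, S2, hbtop, div_self (fact_ne N), div_self (fact_ne (N + 1))]
      ring
    exact hgoal.symm

/-- **Faà di Bruno's formula as an identity of formal power series.**
For smooth `f g : ℝ → ℝ` and `t₀ : ℝ`, with
`h := ∑_{k ≥ 1} (g^{(k)}(t₀)/k!) yᵏ ∈ ℝ⟦y⟧` we have
`∑_{n ≥ 0} ((f∘g)^{(n)}(t₀)/n!) yⁿ = ∑_{m ≥ 0} (f^{(m)}(g(t₀))/m!) hᵐ`,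
the right-hand side being summed coefficientwise (for each fixed coefficient
the `tsum` below has only finitely many nonzero terms, since `hᵐ` has order
at least `m`). -/
theorem faa_di_bruno_formal_power_series (f g : ℝ → ℝ)
    (hf : ContDiff ℝ ((⊤ : ℕ∞) : WithTop ℕ∞) f)
    (hg : ContDiff ℝ ((⊤ : ℕ∞) : WithTop ℕ∞) g) (t₀ : ℝ) :
    (PowerSeries.mk fun n : ℕ => iteratedDeriv n (f ∘ g) t₀ / n !) =
      PowerSeries.mk fun N : ℕ =>
        ∑' m : ℕ, (iteratedDeriv m f (g t₀) / m !) *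
          PowerSeries.coeff (R := ℝ) N
            ((PowerSeries.mk fun k : ℕ =>
              if k = 0 then (0 : ℝ) else iteratedDeriv k g t₀ / k !) ^ m) := by
  have main : ∀ N : ℕ, iteratedDeriv N (f ∘ g) t₀ / N ! =
      ∑' m : ℕ, (iteratedDeriv m f (g t₀) / m !) *
        PowerSeries.coeff (R := ℝ) N (hser g t₀ ^ m) := by
    intro N
    have htsum : (∑' m : ℕ, (iteratedDeriv m f (g t₀) / m !) *
          PowerSeries.coeff (R := ℝ) N (hser g t₀ ^ m))
        = ∑ m ∈ Finset.range (N + 1), (iteratedDeriv m f (g t₀) / m !) *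
            PowerSeries.coeff (R := ℝ) N (hser g t₀ ^ m) := by
      apply tsum_eq_sum
      intro m hm
      have hNm : N < m := by
        by_contra h
        exact hm (Finset.mem_range.mpr (by omega))
      rw [coeff_pow_zero_of_lt _ (constantCoeff_hser g t₀) m N hNm, mul_zero]
    rw [htsum, faa_main f g hf hg N t₀, Finset.sum_div]
    refine Finset.sum_congr rfl fun m _ => ?_
    have h1 : ((N ! : ℝ)) ≠ 0 := by positivity
    have h2 : ((m ! : ℝ)) ≠ 0 := by positivity
    field_simp
  apply PowerSeries.ext
  intro N
  rw [PowerSeries.coeff_mk, PowerSeries.coeff_mk]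
  exact main N
end

section
/- For a smooth function f : ℝ → ℝ define its Taylor extension F_f : ℝ⟦y⟧ → ℝ⟦y⟧ by F_f(T) := Σ_{n≥0} (f^{(n)}(T₀)/n!) · (T − T₀)^n, where T₀ ∈ ℝ is the constant coefficient of T (the sum is well defined since T − T₀ has zero constant term). Then for all smooth f, g : ℝ → ℝ and all T ∈ ℝ⟦y⟧, one has F_{f∘g}(T) = F_f(F_g(T)). -/
open scoped Nat

/-- The Taylor extension `F_f : ℝ⟦y⟧ → ℝ⟦y⟧` of a function `f : ℝ → ℝ`:
`F_f(T) := ∑_{n ≥ 0} (f^{(n)}(T₀)/n!) (T − T₀)ⁿ` where `T₀` is the constant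
coefficient of `T`. The series is summed coefficientwise: for each fixed
coefficient the `tsum` below has only finitely many nonzero terms, since
`(T − T₀)ⁿ` has zero constant coefficient and hence order at least `n`. -/
noncomputable def taylorExt (f : ℝ → ℝ) (T : PowerSeries ℝ) : PowerSeries ℝ :=
  PowerSeries.mk fun N : ℕ =>
    ∑' n : ℕ, (iteratedDeriv n f (PowerSeries.constantCoeff T) / n !) *
      PowerSeries.coeff N
        ((T - PowerSeries.C (PowerSeries.constantCoeff T)) ^ n)

namespace TaylorExtAux

lemma coeff_pow_eq_zero {S : PowerSeries ℝ} (hS : PowerSeries.constantCoeff S = 0)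
    {N n : ℕ} (h : N < n) : PowerSeries.coeff N (S ^ n) = 0 := by
  have hd : (PowerSeries.X : PowerSeries ℝ) ^ n ∣ S ^ n :=
    pow_dvd_pow_of_dvd (PowerSeries.X_dvd_iff.mpr hS) n
  exact PowerSeries.X_pow_dvd_iff.mp hd N h

lemma coeff_taylorExt (f : ℝ → ℝ) (T : PowerSeries ℝ) (N : ℕ) :
    PowerSeries.coeff N (taylorExt f T) =
      ∑ n ∈ Finset.range (N + 1),
        (iteratedDeriv n f (PowerSeries.constantCoeff T) / n !) *
          PowerSeries.coeff N
            ((T - PowerSeries.C (PowerSeries.constantCoeff T)) ^ n) := by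
  rw [taylorExt, PowerSeries.coeff_mk]
  refine tsum_eq_sum fun n hn => ?_
  rw [coeff_pow_eq_zero (by simp) (by simp only [Finset.mem_range] at hn; omega), mul_zero]

lemma coeff_taylorExt_congr {f₁ f₂ : ℝ → ℝ} (T : PowerSeries ℝ) {N M : ℕ} (hMN : M ≤ N)
    (h : ∀ k ≤ N, iteratedDeriv k f₁ (PowerSeries.constantCoeff T) =
      iteratedDeriv k f₂ (PowerSeries.constantCoeff T)) :
    PowerSeries.coeff M (taylorExt f₁ T) = PowerSeries.coeff M (taylorExt f₂ T) := by
  rw [coeff_taylorExt, coeff_taylorExt]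
  refine Finset.sum_congr rfl fun n hn => ?_
  simp only [Finset.mem_range] at hn
  rw [h n (by omega)]

lemma constantCoeff_taylorExt (f : ℝ → ℝ) (T : PowerSeries ℝ) :
    PowerSeries.constantCoeff (taylorExt f T) = f (PowerSeries.constantCoeff T) := by
  rw [← PowerSeries.coeff_zero_eq_constantCoeff_apply, coeff_taylorExt]
  simp [iteratedDeriv_zero]

lemma coeff_taylorExt_congr_arg (f : ℝ → ℝ) {G G' : PowerSeries ℝ} {N : ℕ}
    (h0 : PowerSeries.constantCoeff G = PowerSeries.constantCoeff G')
    (h : ∀ M ≤ N, PowerSeries.coeff M G = PowerSeries.coeff M G') :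
    PowerSeries.coeff N (taylorExt f G) = PowerSeries.coeff N (taylorExt f G') := by
  rw [coeff_taylorExt, coeff_taylorExt, h0]
  refine Finset.sum_congr rfl fun n _ => ?_
  congr 1
  have hdvd : (PowerSeries.X : PowerSeries ℝ) ^ (N + 1) ∣
      (G - PowerSeries.C (PowerSeries.constantCoeff G')) ^ n -
        (G' - PowerSeries.C (PowerSeries.constantCoeff G')) ^ n := by
    refine dvd_trans ?_ (sub_dvd_pow_sub_pow _ _ n)
    have he : (G - PowerSeries.C (PowerSeries.constantCoeff G')) -
        (G' - PowerSeries.C (PowerSeries.constantCoeff G')) = G - G' := by ring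
    rw [he]
    exact PowerSeries.X_pow_dvd_iff.mpr fun m hm => by
      rw [map_sub, h m (by omega), sub_self]
  have hz := PowerSeries.X_pow_dvd_iff.mp hdvd N (lt_add_one N)
  rw [map_sub, sub_eq_zero] at hz
  exact hz

lemma iteratedDeriv_eval (n : ℕ) (p : Polynomial ℝ) :
    iteratedDeriv n (fun x => p.eval x) = fun x => (Polynomial.derivative^[n] p).eval x := by
  induction n generalizing p with
  | zero => simp [iteratedDeriv_zero]
  | succ n ih =>
    rw [iteratedDeriv_succ', Function.iterate_succ_apply]
    rw [show deriv (fun x => p.eval x) = fun x => (Polynomial.derivative p).eval x from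
      funext fun x => Polynomial.deriv _]
    exact ih _

lemma contDiff_eval (p : Polynomial ℝ) :
    ContDiff ℝ ((⊤ : ℕ∞) : WithTop ℕ∞) (fun x => p.eval x) := by
  induction p using Polynomial.induction_on' with
  | add p q hp hq => simpa using hp.add hq
  | monomial n a =>
    simpa [Polynomial.eval_monomial] using (contDiff_const (c := a)).mul (contDiff_id.pow n)

lemma iter_derivative_sum {s : Finset ℕ} (p : ℕ → Polynomial ℝ) (m : ℕ) :
    Polynomial.derivative^[m] (∑ k ∈ s, p k) = ∑ k ∈ s, Polynomial.derivative^[m] (p k) := by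
  induction m with
  | zero => simp
  | succ m ih =>
    rw [Function.iterate_succ_apply', ih, Polynomial.derivative_sum]
    exact Finset.sum_congr rfl fun k _ => (Function.iterate_succ_apply' _ _ _).symm

/-- The degree-`N` Taylor polynomial of `f` at `a`. -/
noncomputable def tpoly (f : ℝ → ℝ) (a : ℝ) (N : ℕ) : Polynomial ℝ :=
  ∑ k ∈ Finset.range (N + 1),
    Polynomial.C (iteratedDeriv k f a / k !) * (Polynomial.X - Polynomial.C a) ^ k

lemma iteratedDeriv_tpoly (f : ℝ → ℝ) (a : ℝ) (N : ℕ) {m : ℕ} (hm : m ≤ N) :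
    iteratedDeriv m (fun x => (tpoly f a N).eval x) a = iteratedDeriv m f a := by
  rw [iteratedDeriv_eval]
  show Polynomial.eval a (Polynomial.derivative^[m] (tpoly f a N)) = _
  rw [tpoly, iter_derivative_sum, Polynomial.eval_finset_sum]
  rw [Finset.sum_eq_single m]
  · rw [Polynomial.iterate_derivative_C_mul, Polynomial.iterate_derivative_X_sub_pow]
    simp only [Polynomial.eval_mul, Polynomial.eval_C, Polynomial.eval_smul, smul_eq_mul,
      Nat.sub_self, pow_zero, Polynomial.eval_one, Nat.descFactorial_self, nsmul_eq_mul, mul_one,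
      Polynomial.eval_natCast]
    rw [div_mul_cancel₀]
    exact_mod_cast Nat.factorial_ne_zero m
  · intro k hk hkm
    rw [Polynomial.iterate_derivative_C_mul, Polynomial.iterate_derivative_X_sub_pow]
    rcases lt_or_gt_of_ne hkm with hlt | hgt
    · simp [Nat.descFactorial_eq_zero_iff_lt.mpr hlt]
    · have hne : k - m ≠ 0 := by omega
      simp [zero_pow hne]
  · intro hm'
    exact absurd (Finset.mem_range.mpr (by omega)) hm'

/-- Scalar Faà di Bruno formula. -/
lemma faa (f g : ℝ → ℝ)
    (hf : ContDiff ℝ ((⊤ : ℕ∞) : WithTop ℕ∞) f)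
    (hg : ContDiff ℝ ((⊤ : ℕ∞) : WithTop ℕ∞) g) (n : ℕ) (x : ℝ) :
    iteratedDeriv n (f ∘ g) x =
      ∑ c : OrderedFinpartition n,
        iteratedDeriv c.length f (g x) * ∏ i, iteratedDeriv (c.partSize i) g x := by
  have hq : HasFTaylorSeriesUpTo ((⊤ : ℕ∞) : WithTop ℕ∞) f (ftaylorSeries ℝ f) :=
    contDiff_iff_ftaylorSeries.mp hf
  have hp : HasFTaylorSeriesUpTo ((⊤ : ℕ∞) : WithTop ℕ∞) g (ftaylorSeries ℝ g) :=
    contDiff_iff_ftaylorSeries.mp hg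
  have hcomp : HasFTaylorSeriesUpToOn ((⊤ : ℕ∞) : WithTop ℕ∞) (f ∘ g)
      (fun x => ((ftaylorSeries ℝ f) (g x)).taylorComp (ftaylorSeries ℝ g x)) Set.univ :=
    (hasFTaylorSeriesUpToOn_univ_iff.mpr hq).comp
      (hasFTaylorSeriesUpToOn_univ_iff.mpr hp) (Set.mapsTo_univ _ _)
  have hcomp' := hasFTaylorSeriesUpToOn_univ_iff.mp hcomp
  have key := hcomp'.eq_iteratedFDeriv (m := n) (by exact_mod_cast le_top) x
  rw [iteratedDeriv_eq_iteratedFDeriv, ← key]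
  show (∑ c : OrderedFinpartition n,
      ((ftaylorSeries ℝ f) (g x)).compAlongOrderedFinpartition (ftaylorSeries ℝ g x) c)
      (fun _ => 1) = _
  rw [ContinuousMultilinearMap.sum_apply]
  refine Finset.sum_congr rfl fun c _ => ?_
  rw [FormalMultilinearSeries.compAlongOrderedFinpartition_apply,
    OrderedFinpartition.applyOrderedFinpartition_apply]
  have h1 : (fun m => (ftaylorSeries ℝ g x) (c.partSize m) ((fun _ => (1:ℝ)) ∘ c.emb m)) =
      fun m => (iteratedDeriv (c.partSize m) g x) • (fun _ : Fin c.length => (1:ℝ)) m := by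
    funext m
    simp only [smul_eq_mul, mul_one]
    rw [iteratedDeriv_eq_iteratedFDeriv]
    rfl
  rw [h1, ContinuousMultilinearMap.map_smul_univ, iteratedDeriv_eq_iteratedFDeriv (n := c.length)]
  exact (smul_eq_mul _ _).trans (mul_comm _ _)

lemma iteratedDeriv_comp_congr {f₁ g₁ f₂ g₂ : ℝ → ℝ}
    (hf₁ : ContDiff ℝ ((⊤ : ℕ∞) : WithTop ℕ∞) f₁)
    (hg₁ : ContDiff ℝ ((⊤ : ℕ∞) : WithTop ℕ∞) g₁)
    (hf₂ : ContDiff ℝ ((⊤ : ℕ∞) : WithTop ℕ∞) f₂)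
    (hg₂ : ContDiff ℝ ((⊤ : ℕ∞) : WithTop ℕ∞) g₂)
    {x : ℝ} {N : ℕ} (hgx : g₁ x = g₂ x)
    (hf : ∀ k ≤ N, iteratedDeriv k f₁ (g₁ x) = iteratedDeriv k f₂ (g₁ x))
    (hg : ∀ k ≤ N, iteratedDeriv k g₁ x = iteratedDeriv k g₂ x)
    {n : ℕ} (hn : n ≤ N) :
    iteratedDeriv n (f₁ ∘ g₁) x = iteratedDeriv n (f₂ ∘ g₂) x := by
  rw [faa f₁ g₁ hf₁ hg₁, faa f₂ g₂ hf₂ hg₂]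
  refine Finset.sum_congr rfl fun c _ => ?_
  rw [hf c.length (c.length_le.trans hn), hgx]
  congr 1
  exact Finset.prod_congr rfl fun i _ => hg _ ((c.partSize_le i).trans hn)

lemma taylorExt_poly (p : Polynomial ℝ) (T : PowerSeries ℝ) :
    taylorExt (fun x => p.eval x) T = Polynomial.aeval T p := by
  ext N
  set c := PowerSeries.constantCoeff T with hc
  set S := T - PowerSeries.C c with hS
  have hS0 : PowerSeries.constantCoeff S = 0 := by simp [hS, hc]
  have key : ∀ n : ℕ, iteratedDeriv n (fun x => p.eval x) c / n ! =
      (Polynomial.taylor c p).coeff n := by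
    intro n
    rw [iteratedDeriv_eval, Polynomial.taylor_coeff]
    have hfs := congrFun (Polynomial.factorial_smul_hasseDeriv (R := ℝ) (k := n)) p
    simp only [LinearMap.smul_apply] at hfs
    rw [← hfs]
    show Polynomial.eval c ((n ! • Polynomial.hasseDeriv n) p) / _ = _
    rw [LinearMap.smul_apply, Polynomial.eval_smul, nsmul_eq_mul, mul_comm, mul_div_assoc,
      div_self (by exact_mod_cast Nat.factorial_ne_zero n), mul_one]
  have lhs_eq : PowerSeries.coeff N (taylorExt (fun x => p.eval x) T) =
      ∑ n ∈ Finset.range (N + 1),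
        (Polynomial.taylor c p).coeff n * PowerSeries.coeff N (S ^ n) := by
    rw [coeff_taylorExt]
    exact Finset.sum_congr rfl fun n _ => by rw [key n]
  have rhs_eq : PowerSeries.coeff N (Polynomial.aeval T p) =
      ∑ n ∈ (Polynomial.taylor c p).support,
        (Polynomial.taylor c p).coeff n * PowerSeries.coeff N (S ^ n) := by
    conv_lhs => rw [← Polynomial.sum_taylor_eq p c]
    rw [Polynomial.sum]
    rw [map_sum, map_sum]
    refine Finset.sum_congr rfl fun n _ => ?_
    rw [map_mul, map_pow, map_sub, Polynomial.aeval_X, Polynomial.aeval_C, Polynomial.aeval_C]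
    have halg : (algebraMap ℝ (PowerSeries ℝ)) = PowerSeries.C := rfl
    rw [halg, ← hS, PowerSeries.coeff_C_mul]
  rw [lhs_eq, rhs_eq]
  have h1 : ∀ n ∉ Finset.range (N + 1),
      (Polynomial.taylor c p).coeff n * PowerSeries.coeff N (S ^ n) = 0 := fun n hn => by
    rw [coeff_pow_eq_zero hS0 (by simp only [Finset.mem_range] at hn; omega), mul_zero]
  have h2 : ∀ n ∉ (Polynomial.taylor c p).support,
      (Polynomial.taylor c p).coeff n * PowerSeries.coeff N (S ^ n) = 0 := fun n hn => by
    rw [Polynomial.notMem_support_iff.mp hn, zero_mul]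
  rw [← tsum_eq_sum (L := SummationFilter.unconditional ℕ) h1, ← tsum_eq_sum (L := SummationFilter.unconditional ℕ) h2]

end TaylorExtAux

/-- For smooth `f g : ℝ → ℝ` the Taylor extension is functorial with respect
to composition: `F_{f ∘ g}(T) = F_f(F_g(T))` for every `T ∈ ℝ⟦y⟧`. -/
theorem taylorExt_comp (f g : ℝ → ℝ)
    (hf : ContDiff ℝ ((⊤ : ℕ∞) : WithTop ℕ∞) f)
    (hg : ContDiff ℝ ((⊤ : ℕ∞) : WithTop ℕ∞) g) (T : PowerSeries ℝ) :
    taylorExt (f ∘ g) T = taylorExt f (taylorExt g T) := by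
  classical
  ext N
  set c := PowerSeries.constantCoeff T with hc
  set P := TaylorExtAux.tpoly f (g c) N with hP
  set Q := TaylorExtAux.tpoly g c N with hQ
  have hfP : ∀ k ≤ N, iteratedDeriv k f (g c) = iteratedDeriv k (fun x => P.eval x) (g c) :=
    fun k hk => (TaylorExtAux.iteratedDeriv_tpoly f (g c) N hk).symm
  have hgQ : ∀ k ≤ N, iteratedDeriv k g c = iteratedDeriv k (fun x => Q.eval x) c :=
    fun k hk => (TaylorExtAux.iteratedDeriv_tpoly g c N hk).symm
  have hQc : Q.eval c = g c := by
    have h0 := TaylorExtAux.iteratedDeriv_tpoly g c N (Nat.zero_le N)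
    simpa [iteratedDeriv_zero] using h0
  -- Step 1: replace f ∘ g by the polynomial composition
  have h1 : PowerSeries.coeff N (taylorExt (f ∘ g) T) =
      PowerSeries.coeff N (taylorExt (fun x => (P.comp Q).eval x) T) := by
    refine TaylorExtAux.coeff_taylorExt_congr T le_rfl fun k hk => ?_
    have hcomp : (fun x => (P.comp Q).eval x) =
        (fun x => P.eval x) ∘ (fun x => Q.eval x) := by
      funext x; simp [Polynomial.eval_comp, Function.comp]
    rw [hcomp]
    refine TaylorExtAux.iteratedDeriv_comp_congr hf hg
      (TaylorExtAux.contDiff_eval P) (TaylorExtAux.contDiff_eval Q) hQc.symm hfP hgQ hk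
  -- Step 2: algebraic identity for polynomials
  have h2 : taylorExt (fun x => (P.comp Q).eval x) T =
      taylorExt (fun x => P.eval x) (taylorExt (fun x => Q.eval x) T) := by
    rw [TaylorExtAux.taylorExt_poly, TaylorExtAux.taylorExt_poly, Polynomial.aeval_comp,
      TaylorExtAux.taylorExt_poly]
  -- Step 3: replace the inner polynomial by g
  have h3 : PowerSeries.coeff N (taylorExt (fun x => P.eval x)
        (taylorExt (fun x => Q.eval x) T)) =
      PowerSeries.coeff N (taylorExt (fun x => P.eval x) (taylorExt g T)) := by
    refine TaylorExtAux.coeff_taylorExt_congr_arg _ ?_ fun M hM => ?_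
    · rw [TaylorExtAux.constantCoeff_taylorExt, TaylorExtAux.constantCoeff_taylorExt, hQc]
    · exact TaylorExtAux.coeff_taylorExt_congr T hM fun k hk => (hgQ k hk).symm
  -- Step 4: replace the outer polynomial by f
  have h4 : PowerSeries.coeff N (taylorExt (fun x => P.eval x) (taylorExt g T)) =
      PowerSeries.coeff N (taylorExt f (taylorExt g T)) := by
    refine TaylorExtAux.coeff_taylorExt_congr _ le_rfl fun k hk => ?_
    rw [TaylorExtAux.constantCoeff_taylorExt]
    exact (hfP k hk).symm
  rw [h1, h2, h3, h4]
end

section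
/- Let f : ℝ → ℝ be smooth and let F_f : ℝ⟦y⟧ → ℝ⟦y⟧ be its Taylor extension, F_f(T) := Σ_{n≥0} (f^{(n)}(T₀)/n!) · (T − T₀)^n with T₀ the constant coefficient of T. Then for every T ∈ ℝ⟦y⟧ and every S ∈ ℝ⟦y⟧ with zero constant coefficient, F_f(T + S) = Σ_{n≥0} (S^n/n!) · F_{f^{(n)}}(T), the right-hand side being a well-defined formal power series since S^n has order at least n. -/
open scoped Nat
open PowerSeries Finset

lemma itd_itd (f : ℝ → ℝ) (n j : ℕ) :
    iteratedDeriv j (iteratedDeriv n f) = iteratedDeriv (n + j) f := by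
  induction j with
  | zero => simp
  | succ j ih => rw [iteratedDeriv_succ, ih, ← iteratedDeriv_succ]; rfl

lemma coeff_mul_pow_zero {a b : PowerSeries ℝ} (ha : constantCoeff a = 0)
    (hb : constantCoeff b = 0) {N n j : ℕ} (h : N < n + j) :
    coeff N (a ^ n * b ^ j) = 0 := by
  have : (X : ℝ⟦X⟧) ^ (n + j) ∣ a ^ n * b ^ j := by
    rw [pow_add]
    exact mul_dvd_mul (pow_dvd_pow_of_dvd (X_dvd_iff.2 ha) n)
      (pow_dvd_pow_of_dvd (X_dvd_iff.2 hb) j)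
  exact (X_pow_dvd_iff.1 this) N h

lemma coeff_pow_zero {a : PowerSeries ℝ} (ha : constantCoeff a = 0)
    {N n : ℕ} (h : N < n) : coeff N (a ^ n) = 0 := by
  have := coeff_mul_pow_zero ha ha (j := 0) (N := N) (n := n) (by omega)
  simpa using this

lemma taylorExt_coeff (g : ℝ → ℝ) (T : PowerSeries ℝ) {q M : ℕ} (hq : q ≤ M) :
    PowerSeries.coeff q (taylorExt g T) =
      ∑ j ∈ range (M + 1), (iteratedDeriv j g (constantCoeff T) / j !) *
        coeff q ((T - C (constantCoeff T)) ^ j) := by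
  rw [taylorExt, coeff_mk]
  refine tsum_eq_sum fun j hj => ?_
  rw [mem_range] at hj
  have hA : constantCoeff (T - C (constantCoeff T)) = 0 := by simp
  rw [coeff_pow_zero hA (by omega), mul_zero]

/-- **Formal translation formula.** For smooth `f : ℝ → ℝ`, `T ∈ ℝ⟦y⟧` and
`S ∈ ℝ⟦y⟧` with zero constant coefficient,
`F_f(T + S) = ∑_{n ≥ 0} (Sⁿ/n!) · F_{f^{(n)}}(T)`, the right-hand side summed
coefficientwise (the `tsum` below has only finitely many nonzero terms for
each fixed coefficient, since `Sⁿ` has order at least `n`). -/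
theorem taylorExt_translation (f : ℝ → ℝ)
    (hf : ContDiff ℝ ((⊤ : ℕ∞) : WithTop ℕ∞) f)
    (T S : PowerSeries ℝ) (hS : PowerSeries.constantCoeff S = 0) :
    taylorExt f (T + S) =
      PowerSeries.mk fun N : ℕ =>
        ∑' n : ℕ,
          PowerSeries.coeff N (S ^ n * taylorExt (iteratedDeriv n f) T) / n ! := by
  ext N
  set T₀ := constantCoeff T with hT₀
  set A := T - C T₀ with hAdef
  have hA : constantCoeff A = 0 := by simp [hAdef, hT₀]
  have hT0 : constantCoeff (T + S) = T₀ := by simp [hS, hT₀]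
  have hAS : T + S - C T₀ = A + S := by rw [hAdef]; ring
  have hASc : constantCoeff (A + S) = 0 := by simp [hA, hS]
  set d : ℕ → ℝ := fun m => iteratedDeriv m f T₀ with hd
  set G : ℕ → ℕ → ℝ := fun n j => d (n + j) / (n ! * j !) * coeff N (S ^ n * A ^ j)
    with hG
  have hGzero : ∀ n j, N < n + j → G n j = 0 := fun n j h => by
    rw [hG]; dsimp only; rw [coeff_mul_pow_zero hS hA h, mul_zero]
  -- LHS
  have hLHS : coeff N (taylorExt f (T + S)) =
      ∑ m ∈ range (N + 1), ∑ k ∈ range (N + 1),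
        d m / m ! * ((m.choose k : ℝ) * coeff N (A ^ k * S ^ (m - k))) := by
    rw [taylorExt, coeff_mk]
    rw [tsum_eq_sum (s := range (N+1)) (fun m hm => by
      rw [mem_range, not_lt] at hm
      rw [hT0, hAS, coeff_pow_zero hASc (by omega), mul_zero])]
    refine Finset.sum_congr rfl fun m hm => ?_
    rw [mem_range] at hm
    rw [hT0, hAS, add_pow, map_sum, Finset.mul_sum]
    have hterm : ∀ k ∈ range (m + 1),
        d m / m ! * coeff N (A ^ k * S ^ (m - k) * ((m.choose k : ℕ) : ℝ⟦X⟧)) =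
        d m / m ! * ((m.choose k : ℝ) * coeff N (A ^ k * S ^ (m - k))) := by
      intro k _
      rw [← map_natCast (C (R := ℝ)) (m.choose k), coeff_mul_C]
      ring
    rw [Finset.sum_congr rfl hterm]
    refine Finset.sum_subset (range_subset_range.2 (by omega)) fun k _ hk => ?_
    rw [mem_range, not_lt] at hk
    rw [Nat.choose_eq_zero_of_lt (by omega)]
    push_cast
    ring
  -- RHS
  have hRHS : (∑' n : ℕ, coeff N (S ^ n * taylorExt (iteratedDeriv n f) T) / n !) =
      ∑ n ∈ range (N + 1), ∑ j ∈ range (N + 1), G n j := by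
    rw [tsum_eq_sum (s := range (N+1)) (fun n hn => by
      rw [mem_range, not_lt] at hn
      have hdvd : (X : ℝ⟦X⟧) ^ n ∣ S ^ n * taylorExt (iteratedDeriv n f) T :=
        Dvd.dvd.mul_right (pow_dvd_pow_of_dvd (X_dvd_iff.2 hS) n) _
      rw [X_pow_dvd_iff.1 hdvd N (by omega), zero_div])]
    refine Finset.sum_congr rfl fun n _ => ?_
    rw [coeff_mul]
    have h2 : ∀ p ∈ antidiagonal N,
        coeff p.1 (S ^ n) * coeff p.2 (taylorExt (iteratedDeriv n f) T) =
        ∑ j ∈ range (N + 1), coeff p.1 (S ^ n) *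
          ((d (n + j) / j !) * coeff p.2 (A ^ j)) := by
      intro p hp
      rw [Finset.HasAntidiagonal.mem_antidiagonal] at hp
      rw [taylorExt_coeff (iteratedDeriv n f) T (M := N) (by omega), Finset.mul_sum]
      refine Finset.sum_congr rfl fun j _ => ?_
      rw [itd_itd, ← hT₀, ← hAdef, hd]
    rw [Finset.sum_congr rfl h2, Finset.sum_comm, Finset.sum_div]
    refine Finset.sum_congr rfl fun j _ => ?_
    rw [hG]; dsimp only
    rw [coeff_mul, Finset.mul_sum, Finset.sum_div]
    have hn0 : (n ! : ℝ) ≠ 0 := Nat.cast_ne_zero.2 (Nat.factorial_ne_zero n)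
    have hj0 : (j ! : ℝ) ≠ 0 := Nat.cast_ne_zero.2 (Nat.factorial_ne_zero j)
    refine Finset.sum_congr rfl fun p _ => ?_
    field_simp
  rw [coeff_mk, hLHS, hRHS, ← Finset.sum_product', ← Finset.sum_product']
  set P := range (N + 1) ×ˢ range (N + 1) with hP
  set t : ℕ × ℕ → ℝ := fun p =>
    d p.1 / p.1 ! * ((p.1.choose p.2 : ℝ) * coeff N (A ^ p.2 * S ^ (p.1 - p.2))) with ht
  have e1 : ∑ p ∈ P.filter (fun p => p.2 ≤ p.1), t p = ∑ p ∈ P, t p := by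
    refine Finset.sum_filter_of_ne fun p _ h => ?_
    by_contra hc; push_neg at hc
    apply h
    rw [ht]; dsimp only
    rw [Nat.choose_eq_zero_of_lt hc]
    push_cast; ring
  have e2 : ∑ p ∈ P.filter (fun p => p.1 + p.2 ≤ N), G p.1 p.2 = ∑ p ∈ P, G p.1 p.2 := by
    refine Finset.sum_filter_of_ne fun p _ h => ?_
    by_contra hc; push_neg at hc
    exact h (hGzero _ _ hc)
  have e3 : ∑ p ∈ P.filter (fun p => p.2 ≤ p.1), t p =
      ∑ p ∈ P.filter (fun p => p.1 + p.2 ≤ N), G p.1 p.2 := by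
    refine Finset.sum_nbij' (i := fun p => (p.1 - p.2, p.2)) (j := fun p => (p.1 + p.2, p.2))
      ?_ ?_ ?_ ?_ ?_
    · intro p hp
      simp only [hP, Finset.mem_filter, Finset.mem_product, mem_range] at hp ⊢
      omega
    · intro p hp
      simp only [hP, Finset.mem_filter, Finset.mem_product, mem_range] at hp ⊢
      omega
    · intro p hp
      obtain ⟨a, b⟩ := p
      simp only [hP, Finset.mem_filter, Finset.mem_product, mem_range] at hp
      simp only [Prod.mk.injEq]
      exact ⟨by omega, trivial⟩
    · intro p hp
      obtain ⟨a, b⟩ := p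
      simp only [hP, Finset.mem_filter, Finset.mem_product, mem_range] at hp
      simp only [Prod.mk.injEq]
      exact ⟨by omega, trivial⟩
    · intro p hp
      simp only [hP, Finset.mem_filter, Finset.mem_product, mem_range] at hp
      obtain ⟨⟨hm, -⟩, hk⟩ := hp
      rw [ht, hG]; dsimp only
      rw [Nat.sub_add_cancel hk, mul_comm (S ^ (p.1 - p.2)) (A ^ p.2)]
      have hfact : (p.1.choose p.2 * (p.2 ! * (p.1 - p.2)!) : ℕ) = p.1 ! := by
        rw [← Nat.choose_mul_factorial_mul_factorial hk]; ring
      have hfactR : (p.1.choose p.2 : ℝ) * (p.2 ! * (p.1 - p.2)!) = (p.1 ! : ℝ) := by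
        exact_mod_cast congrArg (Nat.cast : ℕ → ℝ) hfact
      have h1 : (p.1 ! : ℝ) ≠ 0 := Nat.cast_ne_zero.2 (Nat.factorial_ne_zero _)
      have h2 : ((p.1 - p.2)! * p.2 ! : ℝ) ≠ 0 := by positivity
      rw [div_mul_eq_mul_div, div_mul_eq_mul_div, div_eq_div_iff h1 h2]
      linear_combination (d p.1 * coeff N (A ^ p.2 * S ^ (p.1 - p.2))) * hfactR
  rw [← e1, ← e2, e3]
end

section
/- (Lagrange inversion formula) Let K be a field of characteristic zero and let f, g ∈ K⟦t⟧ be formal power series with zero constant coefficient and linear coefficient equal to 1, which are compositional inverses of each other (substituting g into f yields t). Write f = t·u where u ∈ K⟦t⟧ has constant coefficient 1 (so u is a unit). Then for every n ≥ 1: n · (coefficient of t^n in g) = coefficient of t^{n−1} in u^{−n}. -/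
/-- Composition (substitution) of formal power series: `psComp f g` is the
series obtained by substituting `g` into `f`, defined coefficientwise by
`coeff n (f ∘ g) = ∑_{m ≤ n} f_m · coeff n (gᵐ)`. When `g` has zero constant
coefficient this is the usual substitution, since `gᵐ` then has order at
least `m` and contributes nothing to coefficients below `m`. -/
noncomputable def psComp {K : Type*} [CommRing K] (f g : PowerSeries K) :
    PowerSeries K :=
  PowerSeries.mk fun n : ℕ =>
    ∑ m ∈ Finset.range (n + 1),
      PowerSeries.coeff m f * PowerSeries.coeff n (g ^ m)

open PowerSeries Finset

private lemma li_coeff_psComp {K : Type*} [CommRing K] (P q : PowerSeries K) (m : ℕ) :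
    PowerSeries.coeff m (psComp P q) =
      ∑ k ∈ Finset.range (m + 1),
        PowerSeries.coeff k P * PowerSeries.coeff m (q ^ k) := by
  rw [psComp, PowerSeries.coeff_mk]

private lemma li_ord {K : Type*} [Field K] {f u : PowerSeries K}
    (hu : f = PowerSeries.X * u) : ∀ j k : ℕ, j < k → PowerSeries.coeff j (f ^ k) = 0 := by
  intro j k hjk
  have hdvd : (PowerSeries.X : PowerSeries K) ^ k ∣ f ^ k := by
    rw [hu, mul_pow]; exact dvd_mul_right _ _
  exact PowerSeries.X_pow_dvd_iff.mp hdvd j hjk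

private lemma li_coeff_psComp_mul {K : Type*} [Field K] {f u : PowerSeries K}
    (hu : f = PowerSeries.X * u) (P Q : PowerSeries K) (N : ℕ) :
    PowerSeries.coeff N (psComp P f * Q) =
      ∑ k ∈ Finset.range (N + 1),
        PowerSeries.coeff k P * PowerSeries.coeff N (f ^ k * Q) := by
  rw [PowerSeries.coeff_mul, Finset.Nat.sum_antidiagonal_eq_sum_range_succ_mk]
  have h1 : ∀ j ∈ Finset.range (N + 1),
      PowerSeries.coeff j (psComp P f) * PowerSeries.coeff (N - j) Q
        = ∑ k ∈ Finset.range (N + 1),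
            PowerSeries.coeff k P *
              (PowerSeries.coeff j (f ^ k) * PowerSeries.coeff (N - j) Q) := by
    intro j hj
    rw [li_coeff_psComp, Finset.sum_mul]
    simp_rw [mul_assoc]
    apply Finset.sum_subset
    · apply Finset.range_subset_range.2
      simp only [Finset.mem_range] at hj
      omega
    · intro k _ hk
      have hjk : j < k := by
        simp only [Finset.mem_range, not_lt] at hk
        omega
      rw [li_ord hu j k hjk, zero_mul, mul_zero]
  rw [Finset.sum_congr rfl h1, Finset.sum_comm]
  refine Finset.sum_congr rfl fun k _ => ?_
  rw [← Finset.mul_sum, PowerSeries.coeff_mul,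
    Finset.Nat.sum_antidiagonal_eq_sum_range_succ_mk]

private lemma li_pow_cancel {K : Type*} [Field K] {u : PowerSeries K}
    (hu0 : PowerSeries.constantCoeff u = 1) (s t : ℕ) :
    u ^ s * u⁻¹ ^ (s + t) = u⁻¹ ^ t := by
  rw [pow_add, ← mul_assoc, ← mul_pow,
    PowerSeries.mul_inv_cancel _ (by rw [hu0]; exact one_ne_zero), one_pow, one_mul]

private lemma li_hDf {K : Type*} [Field K] {f u : PowerSeries K}
    (hu : f = PowerSeries.X * u) :
    d⁄dX K f = PowerSeries.X * d⁄dX K u + u := by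
  rw [hu, Derivation.leibniz, PowerSeries.derivative_X, smul_eq_mul, smul_eq_mul, mul_one]

private lemma li_Bprime {K : Type*} [Field K] [CharZero K] {f u : PowerSeries K}
    (hu : f = PowerSeries.X * u) (hu0 : PowerSeries.constantCoeff u = 1)
    (N k : ℕ) (hk : k ≤ N) :
    PowerSeries.coeff N (f ^ k * (d⁄dX K f * u⁻¹ ^ (N + 1))) =
      if k = N then 1 else 0 := by
  rcases eq_or_lt_of_le hk with rfl | hlt
  · -- k = N
    have e0 : u ^ (k + 1) * u⁻¹ ^ (k + 1) = 1 := by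
      have h := li_pow_cancel hu0 (k + 1) 0
      simpa using h
    have e1 : u ^ k * u⁻¹ ^ (k + 1) = u⁻¹ := by
      have h := li_pow_cancel hu0 k 1
      simpa using h
    have key : f ^ k * (d⁄dX K f * u⁻¹ ^ (k + 1)) =
        PowerSeries.X ^ k +
          PowerSeries.X ^ (k + 1) * (u⁻¹ * d⁄dX K u) := by
      rw [li_hDf hu, hu]
      calc (PowerSeries.X * u) ^ k *
            ((PowerSeries.X * d⁄dX K u + u) * u⁻¹ ^ (k + 1))
          = PowerSeries.X ^ k * (u ^ (k + 1) * u⁻¹ ^ (k + 1)) +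
              PowerSeries.X ^ (k + 1) * ((u ^ k * u⁻¹ ^ (k + 1)) * d⁄dX K u) := by
            ring
        _ = _ := by rw [e0, e1]; ring
    rw [key, map_add, PowerSeries.coeff_X_pow, if_pos rfl]
    have h2 : PowerSeries.coeff k
        (PowerSeries.X ^ (k + 1) * (u⁻¹ * d⁄dX K u)) = 0 :=
      PowerSeries.X_pow_dvd_iff.mp (dvd_mul_right _ _) k (Nat.lt_succ_self k)
    rw [h2, add_zero]
  · -- k < N
    obtain ⟨i, rfl⟩ : ∃ i, N = k + i + 1 := ⟨N - k - 1, by omega⟩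
    have e2 : u ^ k * u⁻¹ ^ (k + i + 1 + 1) = u⁻¹ ^ (i + 2) := by
      have h := li_pow_cancel hu0 k (i + 2)
      rwa [show k + (i + 2) = k + i + 1 + 1 by omega] at h
    have e3 : u ^ (k + 1) * u⁻¹ ^ (k + i + 1 + 1) = u⁻¹ ^ (i + 1) := by
      have h := li_pow_cancel hu0 (k + 1) (i + 1)
      rwa [show k + 1 + (i + 1) = k + i + 1 + 1 by omega] at h
    have key : f ^ k * (d⁄dX K f * u⁻¹ ^ (k + i + 1 + 1)) =
        PowerSeries.X ^ k * u⁻¹ ^ (i + 1) +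
          PowerSeries.X ^ (k + 1) * (u⁻¹ ^ (i + 2) * d⁄dX K u) := by
      rw [li_hDf hu, hu]
      calc (PowerSeries.X * u) ^ k *
            ((PowerSeries.X * d⁄dX K u + u) * u⁻¹ ^ (k + i + 1 + 1))
          = PowerSeries.X ^ k * (u ^ (k + 1) * u⁻¹ ^ (k + i + 1 + 1)) +
              PowerSeries.X ^ (k + 1) *
                ((u ^ k * u⁻¹ ^ (k + i + 1 + 1)) * d⁄dX K u) := by ring
        _ = _ := by rw [e2, e3]
    rw [key, map_add]
    have c1 : PowerSeries.coeff (k + i + 1)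
        (PowerSeries.X ^ k * u⁻¹ ^ (i + 1)) =
          PowerSeries.coeff (i + 1) (u⁻¹ ^ (i + 1)) := by
      rw [show k + i + 1 = (i + 1) + k by omega, PowerSeries.coeff_X_pow_mul]
    have c2 : PowerSeries.coeff (k + i + 1)
        (PowerSeries.X ^ (k + 1) * (u⁻¹ ^ (i + 2) * d⁄dX K u)) =
          PowerSeries.coeff i (u⁻¹ ^ (i + 2) * d⁄dX K u) := by
      rw [show k + i + 1 = i + (k + 1) by omega, PowerSeries.coeff_X_pow_mul]
    have hDw : d⁄dX K (u⁻¹ ^ (i + 1)) =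
        (i + 1 : ℕ) • (-(u⁻¹ ^ (i + 2) * d⁄dX K u)) := by
      rw [Derivation.leibniz_pow, PowerSeries.derivative_inv']
      congr 1
      simp only [Nat.add_sub_cancel, smul_eq_mul]
      ring
    have hne : ((i + 1 : ℕ) : K) ≠ 0 := Nat.cast_ne_zero.2 (Nat.succ_ne_zero i)
    have h5 : ((i + 1 : ℕ) : K) * (- PowerSeries.coeff i (u⁻¹ ^ (i + 2) * d⁄dX K u)) =
        PowerSeries.coeff (i + 1) (u⁻¹ ^ (i + 1)) * ((i : K) + 1) := by
      have h := PowerSeries.coeff_derivative (u⁻¹ ^ (i + 1)) i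
      rw [hDw, map_nsmul, nsmul_eq_mul] at h
      rw [← h]
      push_cast
      rw [map_neg]
    have h6 : PowerSeries.coeff i (u⁻¹ ^ (i + 2) * d⁄dX K u) =
        - PowerSeries.coeff (i + 1) (u⁻¹ ^ (i + 1)) := by
      apply mul_left_cancel₀ hne
      push_cast at h5 ⊢
      linear_combination -h5
    rw [c1, c2, h6, add_neg_cancel, if_neg (by omega)]

private lemma li_chain {K : Type*} [Field K] [CharZero K] {f g u : PowerSeries K}
    (hu : f = PowerSeries.X * u)
    (hgf : psComp g f = PowerSeries.X) :
    psComp (d⁄dX K g) f * d⁄dX K f = 1 := by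
  ext N
  rw [li_coeff_psComp_mul hu]
  have hkey : ∀ m : ℕ, PowerSeries.coeff (N + 1) (f ^ m) * ((N + 1 : ℕ) : K) =
      (m : K) * PowerSeries.coeff N (f ^ (m - 1) * d⁄dX K f) := by
    intro m
    have h1 : PowerSeries.coeff N (d⁄dX K (f ^ m)) =
        PowerSeries.coeff (N + 1) (f ^ m) * ((N + 1 : ℕ) : K) := by
      rw [PowerSeries.coeff_derivative]; push_cast; ring
    rw [← h1, Derivation.leibniz_pow, map_nsmul, nsmul_eq_mul, smul_eq_mul]
  have hX : ∑ m ∈ Finset.range (N + 2),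
      PowerSeries.coeff m g * PowerSeries.coeff (N + 1) (f ^ m) =
        if N + 1 = 1 then 1 else 0 := by
    have h := congrArg (PowerSeries.coeff (N + 1)) hgf
    rwa [li_coeff_psComp, PowerSeries.coeff_X] at h
  have hX2 : ∑ m ∈ Finset.range (N + 2),
      PowerSeries.coeff m g *
        ((m : K) * PowerSeries.coeff N (f ^ (m - 1) * d⁄dX K f)) =
      (if N + 1 = 1 then 1 else 0) * ((N + 1 : ℕ) : K) := by
    calc ∑ m ∈ Finset.range (N + 2),
        PowerSeries.coeff m g *
          ((m : K) * PowerSeries.coeff N (f ^ (m - 1) * d⁄dX K f))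
        = ∑ m ∈ Finset.range (N + 2),
            (PowerSeries.coeff m g * PowerSeries.coeff (N + 1) (f ^ m)) *
              ((N + 1 : ℕ) : K) := by
          refine Finset.sum_congr rfl fun m _ => ?_
          rw [mul_assoc, ← hkey m]
      _ = (∑ m ∈ Finset.range (N + 2),
            PowerSeries.coeff m g * PowerSeries.coeff (N + 1) (f ^ m)) *
              ((N + 1 : ℕ) : K) := by rw [Finset.sum_mul]
      _ = _ := by rw [hX]
  rw [Finset.sum_range_succ'] at hX2
  simp only [Nat.cast_zero, zero_mul, mul_zero, add_zero, Nat.add_sub_cancel] at hX2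
  have hgoal : ∑ k ∈ Finset.range (N + 1),
      PowerSeries.coeff k (d⁄dX K g) * PowerSeries.coeff N (f ^ k * d⁄dX K f) =
      ∑ k ∈ Finset.range (N + 1),
        PowerSeries.coeff (k + 1) g *
          (((k + 1 : ℕ) : K) * PowerSeries.coeff N (f ^ k * d⁄dX K f)) := by
    refine Finset.sum_congr rfl fun k _ => ?_
    rw [PowerSeries.coeff_derivative]
    push_cast
    ring
  rw [hgoal, hX2, PowerSeries.coeff_one]
  rcases Nat.eq_zero_or_pos N with rfl | hN
  · norm_num
  · rw [if_neg (by omega), if_neg (by omega), zero_mul]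

/-- **Lagrange inversion formula.** Let `K` be a field of characteristic zero
and let `f, g ∈ K⟦t⟧` have zero constant coefficient and linear coefficient
`1`, and be compositional inverses of each other.  Writing `f = t·u` with `u`
of constant coefficient `1`, for every `n ≥ 1`:
`n · (coeff of tⁿ in g) = coeff of t^{n−1} in u^{−n}`. -/
theorem lagrange_inversion {K : Type*} [Field K] [CharZero K]
    (f g u : PowerSeries K)
    (hf0 : PowerSeries.constantCoeff f = 0)
    (hg0 : PowerSeries.constantCoeff g = 0)
    (hf1 : PowerSeries.coeff 1 f = 1)
    (hg1 : PowerSeries.coeff 1 g = 1)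
    (hfg : psComp f g = PowerSeries.X)
    (hgf : psComp g f = PowerSeries.X)
    (hu : f = PowerSeries.X * u)
    (hu0 : PowerSeries.constantCoeff u = 1)
    (n : ℕ) (hn : 1 ≤ n) :
    (n : K) * PowerSeries.coeff n g =
      PowerSeries.coeff (n - 1) (u⁻¹ ^ n) := by
  obtain ⟨N, rfl⟩ : ∃ N, n = N + 1 := ⟨n - 1, by omega⟩
  have hone : psComp (d⁄dX K g) f * d⁄dX K f = 1 := li_chain hu hgf
  have hrw : u⁻¹ ^ (N + 1) = psComp (d⁄dX K g) f * (d⁄dX K f * u⁻¹ ^ (N + 1)) := by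
    rw [← mul_assoc, hone, one_mul]
  have hcalc : PowerSeries.coeff N (u⁻¹ ^ (N + 1)) =
      PowerSeries.coeff N (d⁄dX K g) := by
    rw [hrw, li_coeff_psComp_mul hu]
    have : ∀ k ∈ Finset.range (N + 1),
        PowerSeries.coeff k (d⁄dX K g) *
          PowerSeries.coeff N (f ^ k * (d⁄dX K f * u⁻¹ ^ (N + 1))) =
        PowerSeries.coeff k (d⁄dX K g) * (if k = N then 1 else 0) := by
      intro k hk
      rw [li_Bprime hu hu0 N k (by simp only [Finset.mem_range] at hk; omega)]
    rw [Finset.sum_congr rfl this]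
    simp
  rw [show N + 1 - 1 = N by omega, hcalc, PowerSeries.coeff_derivative]
  push_cast
  ring
end

section
/- In ℚ⟦t⟧, the formal power series g := Σ_{n≥1} (−1)^{n−1} (n^{n−1}/n!) t^n is the compositional inverse of t·e^t; that is, substituting g into the series t·exp(t) = Σ_{n≥0} t^{n+1}/n! yields t. Equivalently, g · exp(g) = t, where exp(g) denotes the substitution of g (which has zero constant coefficient) into the exponential power series Σ_{n≥0} t^n/n!. -/
open PowerSeries Finset


open scoped Nat

section PsCompAlgebra
variable {K : Type*} [CommRing K]

lemma coeff_pow_eq_zero {g : PowerSeries K} (hg : constantCoeff g = 0)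
    {n m : ℕ} (h : n < m) : coeff n (g ^ m) = 0 :=
  PowerSeries.X_pow_dvd_iff.mp (pow_dvd_pow_of_dvd (PowerSeries.X_dvd_iff.mpr hg) m) n h

lemma coeff_psComp (f g : PowerSeries K) (n : ℕ) :
    coeff n (psComp f g) = ∑ m ∈ range (n + 1), coeff m f * coeff n (g ^ m) :=
  PowerSeries.coeff_mk _ _

lemma coeff_psComp_of_le {g : PowerSeries K} (hg : constantCoeff g = 0)
    (f : PowerSeries K) {n N : ℕ} (h : n < N) :
    coeff n (psComp f g) = ∑ m ∈ range N, coeff m f * coeff n (g ^ m) := by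
  rw [coeff_psComp]
  apply Finset.sum_subset (Finset.range_subset_range.mpr h)
  intro m hm hm2
  simp only [mem_range] at hm hm2
  rw [coeff_pow_eq_zero hg (by omega), mul_zero]

lemma constantCoeff_psComp (f g : PowerSeries K) :
    constantCoeff (psComp f g) = constantCoeff f := by
  rw [← coeff_zero_eq_constantCoeff_apply, coeff_psComp]
  simp

lemma psComp_one (g : PowerSeries K) : psComp 1 g = 1 := by
  ext n
  rw [coeff_psComp]
  simp only [PowerSeries.coeff_one, ite_mul, one_mul, zero_mul]
  rw [Finset.sum_ite_eq' (range (n + 1)) 0 fun m => coeff n (g ^ m)]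
  simp

lemma psComp_X_left {g : PowerSeries K} (hg : constantCoeff g = 0) :
    psComp PowerSeries.X g = g := by
  ext n
  rw [coeff_psComp_of_le hg _ (show n < n + 2 by omega)]
  simp only [PowerSeries.coeff_X, ite_mul, one_mul, zero_mul]
  rw [Finset.sum_ite_eq' (range (n + 2)) 1 fun m => coeff n (g ^ m)]
  simp [pow_one]

lemma psComp_X_right (f : PowerSeries K) : psComp f PowerSeries.X = f := by
  ext n
  rw [coeff_psComp]
  simp only [PowerSeries.coeff_X_pow, mul_ite, mul_one, mul_zero]
  rw [Finset.sum_ite_eq (range (n + 1)) n fun m => coeff m f]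
  simp

lemma sum_antidiagonal_le {M : Type*} [AddCommMonoid M] (n : ℕ) (F : ℕ × ℕ → M)
    (hF : ∀ p : ℕ × ℕ, n < p.1 + p.2 → F p = 0) :
    ∑ m ∈ range (n + 1), ∑ p ∈ Finset.HasAntidiagonal.antidiagonal m, F p
      = ∑ i ∈ range (n + 1), ∑ j ∈ range (n + 1), F (i, j) := by
  rw [← Finset.sum_product']
  rw [← Finset.sum_biUnion (by
    intro x hx y hy hxy
    apply Finset.disjoint_left.mpr
    intro p hpx hpy
    simp only [Finset.HasAntidiagonal.mem_antidiagonal] at hpx hpy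
    exact hxy (by omega))]
  apply Finset.sum_subset
  · intro p hp
    simp only [Finset.mem_biUnion, mem_range, Finset.HasAntidiagonal.mem_antidiagonal] at hp
    obtain ⟨m, hm, hpm⟩ := hp
    simp only [Finset.mem_product, mem_range]
    omega
  · intro p _ hnp
    apply hF
    simp only [Finset.mem_biUnion, mem_range, Finset.HasAntidiagonal.mem_antidiagonal] at hnp
    by_contra h
    exact hnp ⟨p.1 + p.2, by omega, rfl⟩

lemma psComp_mul {g : PowerSeries K} (hg : constantCoeff g = 0) (a b : PowerSeries K) :
    psComp (a * b) g = psComp a g * psComp b g := by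
  ext n
  rw [coeff_psComp, PowerSeries.coeff_mul]
  have hL : ∑ m ∈ range (n + 1), coeff m (a * b) * coeff n (g ^ m)
      = ∑ m ∈ range (n + 1), ∑ p ∈ Finset.HasAntidiagonal.antidiagonal m,
          coeff p.1 a * coeff p.2 b * coeff n (g ^ (p.1 + p.2)) := by
    refine Finset.sum_congr rfl fun m _ => ?_
    rw [PowerSeries.coeff_mul, Finset.sum_mul]
    refine Finset.sum_congr rfl fun p hp => ?_
    rw [Finset.HasAntidiagonal.mem_antidiagonal] at hp
    rw [hp]
  have hR : ∀ p ∈ Finset.HasAntidiagonal.antidiagonal n,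
      coeff p.1 (psComp a g) * coeff p.2 (psComp b g)
      = ∑ i ∈ range (n + 1), ∑ j ∈ range (n + 1),
          coeff i a * coeff j b * (coeff p.1 (g ^ i) * coeff p.2 (g ^ j)) := by
    intro p hp
    rw [Finset.HasAntidiagonal.mem_antidiagonal] at hp
    rw [coeff_psComp_of_le hg a (show p.1 < n + 1 by omega),
        coeff_psComp_of_le hg b (show p.2 < n + 1 by omega), Finset.sum_mul_sum]
    refine Finset.sum_congr rfl fun i _ => Finset.sum_congr rfl fun j _ => ?_
    ring
  have hR2 : ∑ p ∈ Finset.HasAntidiagonal.antidiagonal n,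
      coeff p.1 (psComp a g) * coeff p.2 (psComp b g)
      = ∑ i ∈ range (n + 1), ∑ j ∈ range (n + 1),
          coeff i a * coeff j b * coeff n (g ^ (i + j)) := by
    rw [Finset.sum_congr rfl hR, Finset.sum_comm]
    refine Finset.sum_congr rfl fun i _ => ?_
    rw [Finset.sum_comm]
    refine Finset.sum_congr rfl fun j _ => ?_
    rw [← Finset.mul_sum, ← PowerSeries.coeff_mul, ← pow_add]
  rw [hL, sum_antidiagonal_le n
      (fun p => coeff p.1 a * coeff p.2 b * coeff n (g ^ (p.1 + p.2)))
      (fun p hp => by rw [coeff_pow_eq_zero hg hp, mul_zero]), hR2]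

lemma psComp_pow {g : PowerSeries K} (hg : constantCoeff g = 0) (f : PowerSeries K) (m : ℕ) :
    psComp (f ^ m) g = (psComp f g) ^ m := by
  induction m with
  | zero => simpa using psComp_one g
  | succ k ih => rw [pow_succ, pow_succ, psComp_mul hg, ih]

lemma psComp_assoc (f F h : PowerSeries K) (hF : constantCoeff F = 0)
    (hh : constantCoeff h = 0) :
    psComp f (psComp F h) = psComp (psComp f F) h := by
  have hG : constantCoeff (psComp F h) = 0 := by rw [constantCoeff_psComp, hF]
  ext n
  rw [coeff_psComp, coeff_psComp]
  calc ∑ m ∈ range (n + 1), coeff m f * coeff n ((psComp F h) ^ m)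
      = ∑ m ∈ range (n + 1), ∑ j ∈ range (n + 1),
          coeff m f * (coeff j (F ^ m) * coeff n (h ^ j)) := by
        refine Finset.sum_congr rfl fun m _ => ?_
        rw [← psComp_pow hh F m, coeff_psComp, Finset.mul_sum]
    _ = ∑ j ∈ range (n + 1), (∑ m ∈ range (n + 1), coeff m f * coeff j (F ^ m))
          * coeff n (h ^ j) := by
        rw [Finset.sum_comm]
        refine Finset.sum_congr rfl fun j _ => ?_
        rw [Finset.sum_mul]
        refine Finset.sum_congr rfl fun m _ => ?_
        ring
    _ = ∑ j ∈ range (n + 1), coeff j (psComp f F) * coeff n (h ^ j) := by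
        refine Finset.sum_congr rfl fun j hj => ?_
        rw [mem_range] at hj
        rw [coeff_psComp_of_le hF f hj]

end PsCompAlgebra

section FD
lemma fin_diff : ∀ p n : ℕ, p < n →
    ∑ m ∈ range (n + 1), (-1 : ℚ) ^ m * (n.choose m : ℚ) * (m : ℚ) ^ p = 0 := by
  intro p
  induction p using Nat.strong_induction_on with
  | _ p IH =>
    intro n hpn
    match p with
    | 0 =>
      have h := Int.alternating_sum_range_choose_of_ne (show n ≠ 0 by omega)
      have h2 : ((∑ i ∈ range (n + 1), (-1 : ℤ) ^ i * (n.choose i : ℤ) : ℤ) : ℚ) = 0 := by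
        exact_mod_cast h
      push_cast at h2
      simpa using h2
    | q + 1 =>
      have hn2 : 2 ≤ n := by omega
      obtain ⟨n', rfl⟩ : ∃ n', n = n' + 1 := ⟨n - 1, by omega⟩
      rw [Finset.sum_range_succ']
      have h0 : (-1 : ℚ) ^ 0 * ((n' + 1).choose 0 : ℚ) * ((0 : ℕ) : ℚ) ^ (q + 1) = 0 := by
        simp
      rw [h0, add_zero]
      have hterm : ∀ j, (-1 : ℚ) ^ (j + 1) * (((n' + 1).choose (j + 1) : ℕ) : ℚ)
            * ((j + 1 : ℕ) : ℚ) ^ (q + 1)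
          = -((n' + 1 : ℚ) * ((-1 : ℚ) ^ j * ((n'.choose j : ℕ) : ℚ)
              * ((j + 1 : ℕ) : ℚ) ^ q)) := by
        intro j
        have hc : ((n' + 1).choose (j + 1)) * (j + 1) = (n' + 1) * n'.choose j := by
          rw [← Nat.add_one_mul_choose_eq]
        have hc' : (((n' + 1).choose (j + 1) : ℚ)) * ((j + 1 : ℕ) : ℚ)
            = ((n' + 1 : ℕ) : ℚ) * ((n'.choose j : ℕ) : ℚ) := by exact_mod_cast congrArg (Nat.cast (R := ℚ)) hc
        have : ((j + 1 : ℕ) : ℚ) ^ (q + 1) = ((j + 1 : ℕ) : ℚ) ^ q * ((j + 1 : ℕ) : ℚ) := by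
          ring
        rw [this, pow_succ]
        push_cast at hc' ⊢
        linear_combination (-(-1 : ℚ) ^ j * ((j : ℚ) + 1) ^ q) * hc'
      rw [Finset.sum_congr rfl fun j _ => hterm j]
      rw [Finset.sum_neg_distrib, ← Finset.mul_sum]
      have hexp : ∀ j : ℕ, ((j + 1 : ℕ) : ℚ) ^ q
          = ∑ i ∈ range (q + 1), (q.choose i : ℚ) * ((j : ℚ)) ^ i := by
        intro j
        have := add_pow (j : ℚ) 1 q
        simp only [one_pow, mul_one] at this
        push_cast
        rw [this]
        exact Finset.sum_congr rfl fun i _ => by ring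
      have : ∑ j ∈ range (n' + 1), (-1 : ℚ) ^ j * ((n'.choose j : ℕ) : ℚ)
            * ((j + 1 : ℕ) : ℚ) ^ q = 0 := by
        calc ∑ j ∈ range (n' + 1), (-1 : ℚ) ^ j * ((n'.choose j : ℕ) : ℚ)
              * ((j + 1 : ℕ) : ℚ) ^ q
            = ∑ j ∈ range (n' + 1), ∑ i ∈ range (q + 1),
                (q.choose i : ℚ) * ((-1 : ℚ) ^ j * (n'.choose j : ℚ) * (j : ℚ) ^ i) := by
              refine Finset.sum_congr rfl fun j _ => ?_
              rw [hexp j, Finset.mul_sum]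
              exact Finset.sum_congr rfl fun i _ => by ring
          _ = ∑ i ∈ range (q + 1), (q.choose i : ℚ)
                * ∑ j ∈ range (n' + 1), (-1 : ℚ) ^ j * (n'.choose j : ℚ) * (j : ℚ) ^ i := by
              rw [Finset.sum_comm]
              exact Finset.sum_congr rfl fun i _ => by rw [Finset.mul_sum]
          _ = 0 := by
              refine Finset.sum_eq_zero fun i hi => ?_
              rw [mem_range] at hi
              rw [IH i (by omega) n' (by omega), mul_zero]
      rw [this, mul_zero, neg_zero]
end FD

/-- The series `g = ∑_{n ≥ 1} (−1)^{n−1} (n^{n−1}/n!) tⁿ ∈ ℚ⟦t⟧` defining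
Lambert's W-function. -/
noncomputable def lambertW : PowerSeries ℚ :=
  PowerSeries.mk fun n : ℕ =>
    if n = 0 then 0 else (-1 : ℚ) ^ (n - 1) * (n : ℚ) ^ (n - 1) / n !


lemma psComp_cancel {g A B : PowerSeries ℚ} (hg1 : PowerSeries.coeff 1 g ≠ 0)
    (hA : constantCoeff A = 0) (hB : constantCoeff B = 0)
    (h : psComp g A = psComp g B) : A = B := by
  ext n
  induction n using Nat.strong_induction_on with
  | _ n IH =>
    match n with
    | 0 => rw [coeff_zero_eq_constantCoeff_apply, coeff_zero_eq_constantCoeff_apply, hA, hB]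
    | n + 1 =>
      have key : ∀ m, m ≠ 1 → coeff (n + 1) (A ^ m) = coeff (n + 1) (B ^ m) := by
        intro m hm
        match m with
        | 0 => rfl
        | 1 => exact absurd rfl hm
        | m + 2 =>
          have hd : (X : PowerSeries ℚ) ^ (n + 1) ∣ A - B := by
            rw [PowerSeries.X_pow_dvd_iff]
            intro k hk
            rw [map_sub, IH k hk, sub_self]
          have hS : (X : PowerSeries ℚ) ∣
              ∑ i ∈ range (m + 2), A ^ i * B ^ (m + 2 - 1 - i) := by
            refine Finset.dvd_sum fun i _ => ?_
            rcases Nat.eq_zero_or_pos i with rfl | hip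
            · simp only [pow_zero, one_mul]
              exact dvd_pow (PowerSeries.X_dvd_iff.mpr hB) (by omega)
            · exact Dvd.dvd.mul_right (dvd_pow (PowerSeries.X_dvd_iff.mpr hA) (by omega)) _
          have hdvd : (X : PowerSeries ℚ) ^ (n + 2) ∣ A ^ (m + 2) - B ^ (m + 2) := by
            rw [← geom_sum₂_mul]
            have hXX : (X : PowerSeries ℚ) ^ (n + 2) = X * X ^ (n + 1) := by ring
            rw [hXX]
            exact mul_dvd_mul hS hd
          have h0 := PowerSeries.X_pow_dvd_iff.mp hdvd (n + 1) (by omega)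
          rw [map_sub, sub_eq_zero] at h0
          exact h0
      have hc := congrArg (coeff (n + 1)) h
      rw [coeff_psComp, coeff_psComp] at hc
      have h2 : ∑ m ∈ range (n + 1 + 1),
          coeff m g * (coeff (n + 1) (A ^ m) - coeff (n + 1) (B ^ m)) = 0 := by
        simp only [mul_sub]
        rw [Finset.sum_sub_distrib, hc, sub_self]
      rw [Finset.sum_eq_single 1
          (fun m _ hm1 => by rw [key m hm1, sub_self, mul_zero])
          (fun hmem => absurd (Finset.mem_range.mpr (by omega)) hmem)] at h2
      have h3 := (mul_eq_zero.mp h2).resolve_left hg1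
      rw [pow_one, pow_one, sub_eq_zero] at h3
      exact h3

lemma constantCoeff_XExp : constantCoeff (PowerSeries.X * exp ℚ) = 0 := by
  simp

lemma coeff_XExp_pow (n m : ℕ) :
    coeff n ((PowerSeries.X * exp ℚ) ^ m)
      = if m ≤ n then (m : ℚ) ^ (n - m) / (n - m)! else 0 := by
  split_ifs with h
  · rw [mul_pow]
    have h1 : coeff n ((X : PowerSeries ℚ) ^ m * (exp ℚ) ^ m)
        = coeff (n - m) ((exp ℚ) ^ m) := by
      have h2 := PowerSeries.coeff_X_pow_mul ((exp ℚ) ^ m) m (n - m)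
      rw [Nat.sub_add_cancel h] at h2
      exact h2
    rw [h1, PowerSeries.exp_pow_eq_rescale_exp, PowerSeries.coeff_rescale,
      PowerSeries.coeff_exp]
    simp [div_eq_mul_inv]
  · exact coeff_pow_eq_zero constantCoeff_XExp (by omega)

lemma coeff_lambertW (n : ℕ) :
    coeff n lambertW = if n = 0 then 0 else (-1 : ℚ) ^ (n - 1) * (n : ℚ) ^ (n - 1) / n ! :=
  PowerSeries.coeff_mk _ _

lemma lambertW_leftinv : psComp lambertW (PowerSeries.X * exp ℚ) = PowerSeries.X := by
  ext n
  rw [coeff_psComp]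
  match n with
  | 0 => simp [coeff_lambertW]
  | 1 =>
    rw [Finset.sum_range_succ, Finset.sum_range_one]
    simp [coeff_lambertW, coeff_XExp_pow]
  | n + 2 =>
    rw [PowerSeries.coeff_X, if_neg (by omega)]
    have hterm : ∀ m ∈ range (n + 2 + 1),
        coeff m lambertW * coeff (n + 2) ((PowerSeries.X * exp ℚ) ^ m)
        = (-(1 : ℚ) / (n + 2)!) *
            ((-1 : ℚ) ^ m * ((n + 2).choose m : ℚ) * (m : ℚ) ^ (n + 1)) := by
      intro m hm
      rw [mem_range] at hm
      rw [coeff_XExp_pow, if_pos (by omega), coeff_lambertW]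
      match m with
      | 0 => simp
      | m + 1 =>
        rw [if_neg (by omega)]
        have hc : (((n + 2).choose (m + 1) : ℕ) : ℚ)
            = (n + 2)! / ((m + 1)! * (n + 2 - (m + 1))!) := Nat.cast_choose ℚ (by omega)
        have hsub : n + 2 - (m + 1) = n + 1 - m := by omega
        have hm1 : m + 1 - 1 = m := by omega
        have hpow : ((m + 1 : ℕ) : ℚ) ^ m * ((m + 1 : ℕ) : ℚ) ^ (n + 1 - m)
            = ((m + 1 : ℕ) : ℚ) ^ (n + 1) := by
          rw [← pow_add]
          congr 1
          omega
        rw [hc, hsub, hm1]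
        have hf1 : ((m + 1)! : ℚ) ≠ 0 := by positivity
        have hf2 : ((n + 1 - m)! : ℚ) ≠ 0 := by positivity
        have hf3 : (((n + 2)!) : ℚ) ≠ 0 := by positivity
        rw [← hpow]
        field_simp
        ring
    rw [Finset.sum_congr rfl hterm, ← Finset.mul_sum, fin_diff (n + 1) (n + 2) (by omega),
      mul_zero]

/-- `lambertW` is the compositional inverse of `t·eᵗ`: substituting it into
`t·exp(t)` yields `t`; equivalently `g·exp(g) = t`, where `exp(g)` is the
substitution of `g` into the exponential series `∑ tⁿ/n!`. -/
theorem lambertW_comp_mul_exp :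
    psComp (PowerSeries.X * PowerSeries.exp ℚ) lambertW = PowerSeries.X ∧
    lambertW * psComp (PowerSeries.exp ℚ) lambertW = PowerSeries.X := by
  have hW0 : constantCoeff lambertW = 0 := by
    rw [← coeff_zero_eq_constantCoeff_apply, coeff_lambertW, if_pos rfl]
  have hW1 : coeff 1 lambertW ≠ 0 := by
    rw [coeff_lambertW, if_neg one_ne_zero]
    norm_num
  have hA0 : constantCoeff (psComp (PowerSeries.X * exp ℚ) lambertW) = 0 := by
    rw [constantCoeff_psComp, constantCoeff_XExp]
  have h1 : psComp (PowerSeries.X * exp ℚ) lambertW = PowerSeries.X := by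
    apply psComp_cancel hW1 hA0 (by simp)
    rw [psComp_assoc _ _ _ constantCoeff_XExp hW0, lambertW_leftinv, psComp_X_left hW0,
      psComp_X_right]
  refine ⟨h1, ?_⟩
  rw [← h1, psComp_mul hW0, psComp_X_left hW0]
end

section
/- The real power series Σ_{n≥1} (−1)^{n−1} (n^{n−1}/n!) x^n defining Lambert's W-function has radius of convergence exactly 1/e: for every real x with |x| < e^{−1} the family ((−1)^{n−1} n^{n−1}/n! · x^n)_{n≥1} is (absolutely) summable, and for every real x with |x| > e^{−1} it is not summable. -/
open scoped Nat

private lemma lw_abs (x : ℝ) (n : ℕ) :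
    |(-1 : ℝ) ^ (n - 1) * ((n : ℕ) : ℝ) ^ (n - 1) / (n)! * x ^ n|
      = ((n : ℕ) : ℝ) ^ (n - 1) / (n)! * |x| ^ n := by
  simp [abs_mul, abs_div, abs_pow, Nat.abs_cast]

private lemma lw_pow_div_fact (n : ℕ) : ((n : ℝ)) ^ n / (n)! ≤ Real.exp 1 ^ n := by
  have h := Real.sum_le_exp_of_nonneg (x := (n : ℝ)) (Nat.cast_nonneg n) (n + 1)
  have h2 : ((n : ℝ)) ^ n / (n)! ≤ ∑ i ∈ Finset.range (n + 1), (n : ℝ) ^ i / i ! := by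
    apply Finset.single_le_sum (f := fun i => (n : ℝ) ^ i / i !)
    · intro i _; positivity
    · simp
  have h3 : Real.exp (n : ℝ) = Real.exp 1 ^ n := by
    rw [← Real.exp_nat_mul, mul_one]
  linarith [h2.trans h]

private lemma lw_stirling (n : ℕ) (hn : 1 ≤ n) :
    ((n)! : ℝ) ≤ Real.exp 1 * Real.sqrt n * ((n : ℝ) / Real.exp 1) ^ n := by
  obtain ⟨m, rfl⟩ : ∃ m, n = m + 1 := ⟨n - 1, by omega⟩
  have h1 : Real.log (Stirling.stirlingSeq (m + 1)) ≤ Real.log (Stirling.stirlingSeq 1) :=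
    Stirling.log_stirlingSeq'_antitone (Nat.zero_le m)
  have hpos : 0 < Stirling.stirlingSeq (m + 1) := Stirling.stirlingSeq'_pos m
  have hpos1 : 0 < Stirling.stirlingSeq 1 := Stirling.stirlingSeq'_pos 0
  have h2 : Stirling.stirlingSeq (m + 1) ≤ Stirling.stirlingSeq 1 :=
    (Real.log_le_log_iff hpos hpos1).mp h1
  rw [Stirling.stirlingSeq_one] at h2
  have hden : 0 < Real.sqrt (2 * (m + 1 : ℕ)) * (((m + 1 : ℕ) : ℝ) / Real.exp 1) ^ (m + 1) := by
    positivity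
  rw [Stirling.stirlingSeq, div_le_iff₀ hden] at h2
  refine h2.trans_eq ?_
  rw [show (2 * ((m : ℕ) + 1 : ℕ) : ℝ) = 2 * (((m : ℕ) + 1 : ℕ) : ℝ) by push_cast; ring,
    Real.sqrt_mul (by norm_num : (0:ℝ) ≤ 2)]
  have h2pos : (0:ℝ) < Real.sqrt 2 := by positivity
  field_simp

/-- The power series `∑_{n ≥ 1} (−1)^{n−1} (n^{n−1}/n!) xⁿ` defining
Lambert's W-function has radius of convergence exactly `1/e`: the family of
its terms is summable whenever `|x| < e⁻¹` and not summable whenever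
`|x| > e⁻¹`. -/
theorem lambertW_radius_of_convergence :
    (∀ x : ℝ, |x| < (Real.exp 1)⁻¹ →
      Summable fun n : {n : ℕ // 1 ≤ n} =>
        (-1 : ℝ) ^ ((n : ℕ) - 1) * ((n : ℕ) : ℝ) ^ ((n : ℕ) - 1) / (n : ℕ)! *
          x ^ (n : ℕ)) ∧
    (∀ x : ℝ, (Real.exp 1)⁻¹ < |x| →
      ¬ Summable fun n : {n : ℕ // 1 ≤ n} =>
        (-1 : ℝ) ^ ((n : ℕ) - 1) * ((n : ℕ) : ℝ) ^ ((n : ℕ) - 1) / (n : ℕ)! *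
          x ^ (n : ℕ)) := by
  have epos := Real.exp_pos 1
  constructor
  · intro x hx
    set g : ℕ → ℝ := fun n =>
      (-1 : ℝ) ^ (n - 1) * ((n : ℕ) : ℝ) ^ (n - 1) / (n)! * x ^ n with hg
    have hr : Real.exp 1 * |x| < 1 := by
      have := mul_lt_mul_of_pos_left hx epos
      rwa [mul_inv_cancel₀ epos.ne'] at this
    have hsum : Summable g := by
      apply Summable.of_norm_bounded
        (summable_geometric_of_lt_one (by positivity) hr)
      intro n
      rw [Real.norm_eq_abs, hg, lw_abs]
      rcases Nat.eq_zero_or_pos n with rfl | hn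
      · simp
      have h1 : ((n : ℝ)) ^ (n - 1) / (n)! ≤ Real.exp 1 ^ n := by
        refine le_trans ?_ (lw_pow_div_fact n)
        apply div_le_div_of_nonneg_right ?_ (by positivity)
        exact pow_le_pow_right₀ (by exact_mod_cast hn) (Nat.sub_le n 1)
      calc ((n : ℝ)) ^ (n - 1) / (n)! * |x| ^ n
          ≤ Real.exp 1 ^ n * |x| ^ n :=
            mul_le_mul_of_nonneg_right h1 (by positivity)
        _ = (Real.exp 1 * |x|) ^ n := (mul_pow _ _ _).symm
    exact hsum.comp_injective Subtype.coe_injective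
  · intro x hx h
    set g : ℕ → ℝ := fun n =>
      (-1 : ℝ) ^ (n - 1) * ((n : ℕ) : ℝ) ^ (n - 1) / (n)! * x ^ n with hg
    set r : ℝ := Real.exp 1 * |x| with hrdef
    have hr : 1 < r := by
      have := mul_lt_mul_of_pos_left hx epos
      rwa [mul_inv_cancel₀ epos.ne'] at this
    have hr0 : 0 < r := by linarith
    set s : ℝ := r ^ ((1 : ℝ) / 3) with hsdef
    have hs : 1 < s := Real.one_lt_rpow_iff_of_pos hr0 |>.mpr (Or.inl ⟨hr, by norm_num⟩)
    have hs3 : s ^ (3 : ℕ) = r := by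
      rw [hsdef, ← Real.rpow_natCast (r ^ ((1:ℝ)/3)) 3, ← Real.rpow_mul hr0.le]
      norm_num
    -- lower bound on the terms
    have key : ∀ n : ℕ, 1 ≤ n → (s - 1) ^ 3 * n / Real.exp 1 ≤ |g n| := by
      intro n hn
      have hN0 : (0:ℝ) < (n:ℝ) := by exact_mod_cast hn
      have hN1 : (1:ℝ) ≤ (n:ℝ) := by exact_mod_cast hn
      have hfac : (0:ℝ) < (n)! := by exact_mod_cast Nat.factorial_pos n
      have hsqrt0 : (0:ℝ) < Real.sqrt n := Real.sqrt_pos.mpr hN0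
      have hsqrt : Real.sqrt n ≤ (n:ℝ) := by
        have h1 : ((n:ℝ)) ≤ ((n:ℝ)) ^ 2 := by nlinarith
        calc Real.sqrt n ≤ Real.sqrt ((n:ℝ) ^ 2) := Real.sqrt_le_sqrt h1
          _ = (n:ℝ) := Real.sqrt_sq hN0.le
      have hstir := lw_stirling n hn
      have hgabs : |g n| = ((n : ℝ)) ^ (n - 1) / (n)! * |x| ^ n := lw_abs x n
      -- step A : r ^ n * n ! ≤ |x| ^ n * (e * sqrt n * n ^ n)
      have stepA : r ^ n * ((n)! : ℝ)
          ≤ |x| ^ n * (Real.exp 1 * Real.sqrt n * (n:ℝ) ^ n) := by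
        calc r ^ n * ((n)! : ℝ)
            ≤ r ^ n * (Real.exp 1 * Real.sqrt n * ((n:ℝ) / Real.exp 1) ^ n) :=
              mul_le_mul_of_nonneg_left hstir (by positivity)
          _ = |x| ^ n * (Real.exp 1 * Real.sqrt n * (n:ℝ) ^ n) := by
              rw [hrdef, mul_pow, div_pow]
              field_simp
      -- step B : r ^ n / (e * n * sqrt n) ≤ |g n|
      have hpow : (n:ℝ) ^ (n - 1) * (n:ℝ) = (n:ℝ) ^ n := by
        rw [← pow_succ]
        congr 1
        omega
      have stepB : r ^ n / (Real.exp 1 * (n:ℝ) * Real.sqrt n) ≤ |g n| := by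
        rw [hgabs, div_mul_eq_mul_div,
          div_le_div_iff₀ (mul_pos (mul_pos epos hN0) hsqrt0) hfac]
        calc r ^ n * ((n)! : ℝ)
            ≤ |x| ^ n * (Real.exp 1 * Real.sqrt n * (n:ℝ) ^ n) := stepA
          _ = (n:ℝ) ^ (n - 1) * |x| ^ n * (Real.exp 1 * (n:ℝ) * Real.sqrt n) := by
              rw [← hpow]; ring
      -- step C : (s-1)^3 * n / e ≤ r ^ n / (e * n * sqrt n)
      have hbern : (n:ℝ) * (s - 1) ≤ s ^ n := by
        have h1 : 1 + (n:ℝ) * (s - 1) ≤ (1 + (s - 1)) ^ n :=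
          one_add_mul_le_pow (by linarith) n
        have h2 : (1 + (s - 1)) = s := by ring
        rw [h2] at h1
        linarith
      have hcube : (s - 1) ^ 3 * (n:ℝ) ^ 3 ≤ r ^ n := by
        have h1 : ((n:ℝ) * (s - 1)) ^ 3 ≤ (s ^ n) ^ 3 :=
          pow_le_pow_left₀ (by nlinarith) hbern 3
        calc (s - 1) ^ 3 * (n:ℝ) ^ 3 = ((n:ℝ) * (s - 1)) ^ 3 := by ring
          _ ≤ (s ^ n) ^ 3 := h1
          _ = (s ^ (3:ℕ)) ^ n := by rw [← pow_mul, ← pow_mul, Nat.mul_comm]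
          _ = r ^ n := by rw [hs3]
      have stepC : (s - 1) ^ 3 * (n:ℝ) / Real.exp 1
          ≤ r ^ n / (Real.exp 1 * (n:ℝ) * Real.sqrt n) := by
        rw [div_le_div_iff₀ epos (mul_pos (mul_pos epos hN0) hsqrt0)]
        have hsnn : (0:ℝ) ≤ (s - 1) ^ 3 * (n:ℝ) ^ 2 * Real.exp 1 :=
          mul_nonneg (mul_nonneg (pow_nonneg (by linarith) 3) (sq_nonneg _)) epos.le
        nlinarith [mul_le_mul_of_nonneg_left hsqrt hsnn,
          mul_le_mul_of_nonneg_left hcube epos.le]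
      exact stepC.trans stepB
    -- reindex by k ↦ k + 1 and derive a contradiction with tendsto_atTop_zero
    have hinj : Function.Injective
        (fun k : ℕ => (⟨k + 1, Nat.le_add_left 1 k⟩ : {n : ℕ // 1 ≤ n})) := by
      intro a b hab
      simpa [Subtype.ext_iff] using hab
    have hsum0 := h.comp_injective hinj
    have hsum : Summable (fun k : ℕ => g (k + 1)) := by
      refine hsum0.congr fun k => ?_
      simp [hg, Function.comp]
    have htends := hsum.tendsto_atTop_zero
    rw [Metric.tendsto_atTop] at htends
    obtain ⟨N, hN⟩ := htends 1 one_pos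
    have hs1 : (0:ℝ) < (s - 1) ^ 3 := pow_pos (by linarith) 3
    set K : ℕ := max N ⌈Real.exp 1 / (s - 1) ^ 3⌉₊ with hK
    have h1 : dist (g (K + 1)) 0 < 1 := hN K (le_max_left _ _)
    rw [Real.dist_eq, sub_zero] at h1
    have h2 : Real.exp 1 / (s - 1) ^ 3 ≤ ((K:ℝ) + 1) := by
      calc Real.exp 1 / (s - 1) ^ 3 ≤ (⌈Real.exp 1 / (s - 1) ^ 3⌉₊ : ℝ) := Nat.le_ceil _
        _ ≤ (K:ℝ) := by exact_mod_cast Nat.cast_le.mpr (le_max_right _ _)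
        _ ≤ (K:ℝ) + 1 := by linarith
    have h3 : (1:ℝ) ≤ (s - 1) ^ 3 * ((K:ℕ) + 1 : ℕ) / Real.exp 1 := by
      rw [le_div_iff₀ epos, one_mul]
      rw [div_le_iff₀ hs1] at h2
      push_cast
      nlinarith
    have h4 := key (K + 1) (Nat.le_add_left 1 K)
    linarith [h3.trans h4]
end

section
/- Let K be a commutative ring, λ ∈ K, and let V be the free K-module with basis (e_n)_{n≥1}. Define the bilinear product ▷ on V by e_p ▷ e_q := (q + λ)·e_{p+q} for p, q ≥ 1. Then ▷ is a left pre-Lie product, i.e. for all a, b, c ∈ V: a ▷ (b ▷ c) − (a ▷ b) ▷ c = b ▷ (a ▷ c) − (b ▷ a) ▷ c; and its antisymmetrization is independent of λ and satisfies e_p ▷ e_q − e_q ▷ e_p = (q − p)·e_{p+q} (the Witt-type Lie bracket on the Lie algebra L₁ of formal vector fields). -/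
/-- The bilinear product `▷` on the free `K`-module with basis `(e_n)_{n ≥ 1}`
(realized as `ℕ+ →₀ K` with `e_n = Finsupp.single n 1`) determined by
`e_p ▷ e_q = (q + λ)·e_{p+q}`. -/
noncomputable def prelieProd {K : Type*} [CommRing K] (lam : K)
    (a b : ℕ+ →₀ K) : ℕ+ →₀ K :=
  a.sum fun p ap =>
    b.sum fun q bq => Finsupp.single (p + q) (ap * bq * (((q : ℕ) : K) + lam))

lemma prelieProd_zero_left {K : Type*} [CommRing K] (lam : K) (b : ℕ+ →₀ K) :
    prelieProd lam 0 b = 0 := by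
  simp [prelieProd]

lemma prelieProd_zero_right {K : Type*} [CommRing K] (lam : K) (a : ℕ+ →₀ K) :
    prelieProd lam a 0 = 0 := by
  simp [prelieProd]

lemma prelieProd_add_left {K : Type*} [CommRing K] (lam : K) (a a' b : ℕ+ →₀ K) :
    prelieProd lam (a + a') b = prelieProd lam a b + prelieProd lam a' b := by
  unfold prelieProd
  rw [Finsupp.sum_add_index']
  · intro p
    simp
  · intro p x y
    simp [add_mul, Finsupp.single_add, Finsupp.sum_add]

lemma prelieProd_add_right {K : Type*} [CommRing K] (lam : K) (a b b' : ℕ+ →₀ K) :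
    prelieProd lam a (b + b') = prelieProd lam a b + prelieProd lam a b' := by
  unfold prelieProd
  rw [← Finsupp.sum_add]
  refine Finsupp.sum_congr fun p _ => ?_
  rw [Finsupp.sum_add_index']
  · intro q
    simp
  · intro q x y
    simp only [mul_add, add_mul, Finsupp.single_add]
    abel

lemma prelieProd_single_single {K : Type*} [CommRing K] (lam : K) (p q : ℕ+) (x y : K) :
    prelieProd lam (Finsupp.single p x) (Finsupp.single q y) =
      Finsupp.single (p + q) (x * y * (((q : ℕ) : K) + lam)) := by
  unfold prelieProd
  rw [Finsupp.sum_single_index, Finsupp.sum_single_index]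
  · simp
  · rw [Finsupp.sum_single_index] <;> simp

/-- The product `e_p ▷ e_q = (q + λ)·e_{p+q}` is left pre-Lie (its associator
is symmetric in the first two arguments), and its antisymmetrization is
independent of `λ`: `e_p ▷ e_q − e_q ▷ e_p = (q − p)·e_{p+q}`, the Witt-type
bracket on the Lie algebra `L₁` of formal vector fields. -/
theorem prelieProd_is_preLie {K : Type*} [CommRing K] (lam : K) :
    (∀ a b c : ℕ+ →₀ K,
      prelieProd lam a (prelieProd lam b c) -
          prelieProd lam (prelieProd lam a b) c =
        prelieProd lam b (prelieProd lam a c) -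
          prelieProd lam (prelieProd lam b a) c) ∧
    (∀ p q : ℕ+,
      prelieProd lam (Finsupp.single p (1 : K)) (Finsupp.single q (1 : K)) -
          prelieProd lam (Finsupp.single q (1 : K)) (Finsupp.single p (1 : K)) =
        (((q : ℕ) : ℤ) - ((p : ℕ) : ℤ)) • Finsupp.single (p + q) (1 : K)) := by
  constructor
  · intro a b c
    induction a using Finsupp.induction_linear with
    | zero => simp [prelieProd_zero_left, prelieProd_zero_right]
    | add a a' ha ha' =>
      simp only [prelieProd_add_left, prelieProd_add_right] at *
      rw [sub_add_eq_sub_sub] at *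
      abel_nf at *
      linear_combination (norm := module) ha + ha'
    | single p x =>
      induction b using Finsupp.induction_linear with
      | zero => simp [prelieProd_zero_left, prelieProd_zero_right]
      | add b b' hb hb' =>
        simp only [prelieProd_add_left, prelieProd_add_right] at *
        linear_combination (norm := module) hb + hb'
      | single q y =>
        induction c using Finsupp.induction_linear with
        | zero => simp [prelieProd_zero_left, prelieProd_zero_right]
        | add c c' hc hc' =>
          simp only [prelieProd_add_left, prelieProd_add_right] at *
          linear_combination (norm := module) hc + hc'
        | single r z =>
          simp only [prelieProd_single_single]
          rw [show p + (q + r) = p + q + r by ring, show q + (p + r) = q + p + r by ring,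
            show q + p = p + q by ring]
          rw [← Finsupp.single_sub, ← Finsupp.single_sub]
          congr 1
          push_cast
          ring
  · intro p q
    simp only [prelieProd_single_single]
    rw [show q + p = p + q by ring, ← Finsupp.single_sub, Finsupp.smul_single]
    congr 1
    rw [zsmul_eq_mul, mul_one]
    push_cast
    ring
end

section
/- Composition of formal power series with non-commutative coefficients is not associative: there exist a (non-commutative) ring A and power series f, g, h over A, each with zero constant coefficient, such that (f ∘ g) ∘ h ≠ f ∘ (g ∘ h), where the composition f ∘ g is defined coefficientwise by coeff_n(f ∘ g) = Σ_{m=1}^{n} f_m · coeff_n(g^m) (the coefficient f_m multiplying from the left). -/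
/-- Composition of formal power series with (possibly non-commutative)
coefficients: `coeff n (f ∘ g) = ∑_{m=1}^{n} f_m · coeff n (gᵐ)`, the
coefficient `f_m` multiplying from the left. Since only `g` with zero
constant coefficient are considered, `gᵐ` has order at least `m` and the
defining sum for each coefficient is finite. -/
noncomputable def ncComp {A : Type*} [Ring A] (f g : PowerSeries A) :
    PowerSeries A :=
  PowerSeries.mk fun n : ℕ =>
    ∑ m ∈ Finset.Icc 1 n,
      PowerSeries.coeff m f * PowerSeries.coeff n (g ^ m)

open PowerSeries in
lemma ncComp_cx_pow_coeff {A : Type*} [Ring A] (b : A) (m n : ℕ) :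
    coeff n ((C b * X)^m) = if n = m then b^m else 0 := by
  rw [(commute_X (C b)).mul_pow, ← map_pow, coeff_C_mul, coeff_X_pow]
  split <;> simp

open PowerSeries in
lemma ncComp_lhs_coeff {A : Type*} [Ring A] (b c : A) (hb : b^2 = 0) :
    coeff 3 (ncComp (ncComp (X^2) (C b * X)) (C c * X + X^2)) = 0 := by
  have key : ∀ m, coeff m (ncComp (X^2 : PowerSeries A) (C b * X)) = 0 := by
    intro m
    simp only [ncComp, coeff_mk, ncComp_cx_pow_coeff, coeff_X_pow]
    rw [Finset.sum_eq_zero]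
    intro i hi
    rcases eq_or_ne m i with rfl | hne
    · rcases eq_or_ne m 2 with rfl | h2
      · simp [hb]
      · simp [h2]
    · simp [hne]
  simp only [ncComp, coeff_mk] at key ⊢
  simp only [key, zero_mul, Finset.sum_const_zero]

open PowerSeries in
lemma ncComp_rhs_coeff {A : Type*} [Ring A] (b c : A) (hb : b^2 = 0) :
    coeff 3 (ncComp (X^2) (ncComp (C b * X) (C c * X + X^2))) = b*c*b := by
  set h : PowerSeries A := C c * X + X^2 with hhdef
  set q : PowerSeries A := ncComp (C b * X) h with hqdef
  have h0 : coeff 0 h = 0 := by simp [hhdef, coeff_X_pow]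
  have h1 : coeff 1 h = c := by simp [hhdef, coeff_X_pow]
  have h2 : coeff 2 h = 1 := by simp [hhdef, coeff_X_pow]
  have h3 : coeff 3 h = 0 := by simp [hhdef, coeff_X_pow]
  have hq : ∀ n, 1 ≤ n → coeff n q = b * coeff n h := by
    intro n hn
    simp only [hqdef, ncComp, coeff_mk, coeff_C_mul, coeff_X]
    rw [Finset.sum_eq_single 1]
    · simp
    · intro i hi hne; simp [hne]
    · intro habs; simp at habs; omega
  have hq0 : coeff 0 q = 0 := by simp [hqdef, ncComp, coeff_mk]
  have hq1 : coeff 1 q = b * c := by rw [hq 1 (by norm_num), h1]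
  have hq2 : coeff 2 q = b := by rw [hq 2 (by norm_num), h2, mul_one]
  have hq3 : coeff 3 q = 0 := by rw [hq 3 (by norm_num), h3, mul_zero]
  have key : coeff 3 (q^2) = b*c*b := by
    rw [sq, coeff_mul]
    rw [show Finset.HasAntidiagonal.antidiagonal (3 : ℕ) = {(0,3),(1,2),(2,1),(3,0)} from rfl]
    simp [hq0, hq1, hq2, hq3, Finset.sum_insert]
    rw [show b * (b * c) = b^2 * c by rw [pow_two, mul_assoc], hb, zero_mul]
  simp only [ncComp, coeff_mk, coeff_X_pow]
  rw [show Finset.Icc 1 3 = {1,2,3} from rfl]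
  simp [key]

/-- Composition of formal power series with non-commutative coefficients is
not associative: there are a ring `A` and `f, g, h ∈ A⟦t⟧` with zero constant
coefficients such that `(f ∘ g) ∘ h ≠ f ∘ (g ∘ h)`. -/
theorem ncComp_not_associative :
    ∃ (A : RingCat) (f g h : PowerSeries A),
      PowerSeries.constantCoeff f = 0 ∧
      PowerSeries.constantCoeff g = 0 ∧
      PowerSeries.constantCoeff h = 0 ∧
      ncComp (ncComp f g) h ≠ ncComp f (ncComp g h) := by
  classical
  set M := Matrix (Fin 2) (Fin 2) ℤ with hM
  set b0 : M := !![0, 1; 0, 0] with hbdef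
  set c0 : M := !![0, 0; 1, 0] with hcdef
  refine ⟨RingCat.of (ULift M), ?_⟩
  set e : M ≃+* ULift M := ULift.ringEquiv.symm with he
  set b : ULift M := e b0
  set c : ULift M := e c0
  have hb2 : b ^ 2 = 0 := by
    rw [← map_pow, show b0 ^ 2 = 0 from by decide, map_zero]
  have hbcb : b * c * b = b := by
    rw [← map_mul, ← map_mul, show b0 * c0 * b0 = b0 from by decide]
  have hbne : b ≠ 0 := by
    rw [show (0 : ULift M) = e 0 from (map_zero e).symm]
    exact fun H => absurd (e.injective H) (by decide)
  refine ⟨PowerSeries.X ^ 2, PowerSeries.C b * PowerSeries.X,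
    PowerSeries.C c * PowerSeries.X + PowerSeries.X ^ 2, ?_, ?_, ?_, ?_⟩
  · simp [pow_two]
  · simp
  · simp [pow_two]
  · intro heq
    have h3 := congrArg (PowerSeries.coeff 3) heq
    rw [ncComp_lhs_coeff b c hb2, ncComp_rhs_coeff b c hb2, hbcb] at h3
    exact hbne h3.symm
end

section
/- (Generating function of the Bell polynomials.) Let A be a commutative ℚ-algebra and let x_1, x_2, … ∈ A. In A⟦t⟧ let h := Σ_{k≥1} (x_k/k!) t^k. Then for all n ≥ 1 and m ≥ 0: n! · (coefficient of t^n in h^m) = m! · Σ_{π} ∏_{B ∈ π} x_{|B|}, where the sum runs over all set partitions π of {1,…,n} having exactly m blocks, and |B| denotes the cardinality of the block B. (Equivalently, the coefficient of the monomial ∏ x_j^{k_j} in the Bell polynomial B_{n,m} counts the partitions of an n-set with k_j blocks of size j.) -/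
open scoped Nat

open Finset

namespace BellAux

variable {α : Type*} [DecidableEq α] [Fintype α]

/-- The fiber of `f` over `i`. -/
def fib {m : ℕ} (f : α → Fin m) (i : Fin m) : Finset α := univ.filter (fun j => f j = i)

lemma mem_fib {m : ℕ} {f : α → Fin m} {i : Fin m} {a : α} : a ∈ fib f i ↔ f a = i := by
  simp [fib]

/-- Ordered partitions of `s` into `m` (possibly empty) blocks of prescribed sizes. -/
def OP (s : Finset α) (m : ℕ) (l : Fin m → ℕ) : Finset (Fin m → Finset α) :=
  univ.filter (fun c => (∀ i, (c i).card = l i) ∧ (∀ i j, i ≠ j → c i ∩ c j = ∅) ∧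
    univ.sup c = s)

lemma OP_card : ∀ (m : ℕ) (s : Finset α) (l : Fin m → ℕ), (∑ i, l i) = s.card →
    (OP s m l).card * ∏ i, (l i)! = s.card ! := by
  intro m
  induction m with
  | zero =>
    intro s l hl
    simp only [Finset.univ_eq_empty, Finset.sum_empty] at hl
    have hs : s = ∅ := by
      rw [← Finset.card_eq_zero]; omega
    subst hs
    have hOP : OP (∅ : Finset α) 0 l = univ := by
      apply Finset.filter_true_of_mem
      intro c _
      refine ⟨fun i => i.elim0, fun i => i.elim0, ?_⟩
      simp
    rw [hOP]
    simp [Finset.card_univ, Fintype.card_fun]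
  | succ m ih =>
    intro s l hl
    have hsum : (∑ i : Fin m, l i.castSucc) + l (Fin.last m) = s.card := by
      rw [← hl, Fin.sum_univ_castSucc]
    have hlast_le : l (Fin.last m) ≤ s.card := by omega
    have key : (OP s (m + 1) l).card =
        ∑ B ∈ s.powersetCard (l (Fin.last m)),
          ((OP s (m + 1) l).filter (fun c => c (Fin.last m) = B)).card := by
      apply Finset.card_eq_sum_card_fiberwise
      intro c hc
      simp only [OP, mem_filter, Finset.mem_coe] at hc
      obtain ⟨-, hcard, -, hsup⟩ := hc
      rw [Finset.mem_coe, Finset.mem_powersetCard]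
      exact ⟨hsup ▸ Finset.le_sup (Finset.mem_univ _), hcard _⟩
    have fiber_eq : ∀ B ∈ s.powersetCard (l (Fin.last m)),
        ((OP s (m + 1) l).filter (fun c => c (Fin.last m) = B)).card
          = (OP (s \ B) m (fun i => l i.castSucc)).card := by
      intro B hB
      obtain ⟨hBs, hBcard⟩ := Finset.mem_powersetCard.mp hB
      apply Finset.card_bij (fun c _ => Fin.init c)
      · -- maps to
        intro c hc
        simp only [OP, mem_filter, mem_univ, true_and] at hc ⊢
        obtain ⟨⟨hcard, hdisj, hsup⟩, hlast⟩ := hc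
        have hsup' : univ.sup (Fin.init c) = s \ B := by
          ext a
          rw [Finset.mem_sup, Finset.mem_sdiff]
          constructor
          · rintro ⟨i, -, hai⟩
            have hai : a ∈ c i.castSucc := hai
            constructor
            · exact hsup ▸ Finset.le_sup (f := c) (Finset.mem_univ i.castSucc) <| hai
            · intro haB
              have hd := hdisj i.castSucc (Fin.last m) (Fin.castSucc_lt_last i).ne
              have : a ∈ c i.castSucc ∩ c (Fin.last m) :=
                Finset.mem_inter.mpr ⟨hai, hlast ▸ haB⟩
              simp [hd] at this
          · rintro ⟨has, haB⟩
            have : a ∈ univ.sup c := hsup ▸ has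
            obtain ⟨i, -, hai⟩ := Finset.mem_sup.mp this
            have hne : i ≠ Fin.last m := by
              rintro rfl; exact haB (hlast ▸ hai)
            obtain ⟨j, rfl⟩ := Fin.exists_castSucc_eq.mpr hne
            exact ⟨j, Finset.mem_univ _, hai⟩
        exact ⟨fun i => hcard i.castSucc, fun i j hij =>
          hdisj _ _ (fun h => hij (Fin.castSucc_injective m h)), hsup'⟩
      · -- injective
        intro c₁ h₁ c₂ h₂ h
        simp only [mem_filter] at h₁ h₂
        funext i
        induction i using Fin.lastCases with
        | last => rw [h₁.2, h₂.2]
        | cast j => exact congrFun h j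
      · -- surjective
        intro d hd
        simp only [OP, mem_filter, mem_univ, true_and] at hd
        obtain ⟨hcard, hdisj, hsup⟩ := hd
        have hdsub : ∀ j : Fin m, d j ⊆ s \ B := fun j =>
          hsup ▸ Finset.le_sup (Finset.mem_univ j)
        refine ⟨Fin.snoc d B, ?_, Fin.init_snoc _ _⟩
        simp only [mem_filter, OP, mem_univ, true_and]
        have hdisjB : ∀ j : Fin m, d j ∩ B = ∅ := by
          intro j
          apply Finset.eq_empty_of_forall_notMem
          intro a ha
          rw [Finset.mem_inter] at ha
          exact (Finset.mem_sdiff.mp (hdsub j ha.1)).2 ha.2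
        refine ⟨⟨?_, ?_, ?_⟩, Fin.snoc_last _ _⟩
        · intro i
          induction i using Fin.lastCases with
          | last => rw [Fin.snoc_last]; exact hBcard
          | cast j => rw [Fin.snoc_castSucc]; exact hcard j
        · intro i j hij
          induction i using Fin.lastCases with
          | last =>
            induction j using Fin.lastCases with
            | last => exact absurd rfl hij
            | cast k =>
              rw [Fin.snoc_last, Fin.snoc_castSucc, Finset.inter_comm]
              exact hdisjB k
          | cast k =>
            induction j using Fin.lastCases with
            | last => rw [Fin.snoc_last, Fin.snoc_castSucc]; exact hdisjB k
            | cast k' =>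
              rw [Fin.snoc_castSucc, Fin.snoc_castSucc]
              exact hdisj k k' (fun h => hij (by rw [h]))
        · ext a
          rw [Finset.mem_sup]
          constructor
          · rintro ⟨i, -, hai⟩
            induction i using Fin.lastCases with
            | last => rw [Fin.snoc_last] at hai; exact hBs hai
            | cast k =>
              rw [Fin.snoc_castSucc] at hai
              exact (Finset.mem_sdiff.mp (hdsub k hai)).1
          · intro has
            by_cases haB : a ∈ B
            · exact ⟨Fin.last m, Finset.mem_univ _, by rwa [Fin.snoc_last]⟩
            · have : a ∈ univ.sup d := hsup ▸ Finset.mem_sdiff.mpr ⟨has, haB⟩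
              obtain ⟨k, -, hak⟩ := Finset.mem_sup.mp this
              exact ⟨k.castSucc, Finset.mem_univ _, by rwa [Fin.snoc_castSucc]⟩
    calc (OP s (m + 1) l).card * ∏ i, (l i)!
        = (∑ B ∈ s.powersetCard (l (Fin.last m)),
            (OP (s \ B) m (fun i => l i.castSucc)).card) * ∏ i, (l i)! := by
          rw [key, Finset.sum_congr rfl fiber_eq]
      _ = ∑ B ∈ s.powersetCard (l (Fin.last m)),
            ((OP (s \ B) m (fun i => l i.castSucc)).card *
              ∏ i : Fin m, (l i.castSucc)!) * (l (Fin.last m))! := by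
          rw [Finset.sum_mul]
          apply Finset.sum_congr rfl
          intro B hB
          rw [Fin.prod_univ_castSucc]
          ring
      _ = ∑ B ∈ s.powersetCard (l (Fin.last m)),
            (s.card - l (Fin.last m))! * (l (Fin.last m))! := by
          apply Finset.sum_congr rfl
          intro B hB
          obtain ⟨hBs, hBcard⟩ := Finset.mem_powersetCard.mp hB
          have hcardsd : (s \ B).card = s.card - l (Fin.last m) := by
            rw [Finset.card_sdiff_of_subset hBs, hBcard]
          have hih := ih (s \ B) (fun i => l i.castSucc)
            (by rw [hcardsd]; exact Nat.eq_sub_of_add_eq hsum)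
          rw [hih, hcardsd]
      _ = s.card ! := by
          rw [Finset.sum_const, smul_eq_mul, Finset.card_powersetCard]
          rw [← Nat.choose_mul_factorial_mul_factorial hlast_le]
          ring

lemma card_sizes (m : ℕ) (l : Fin m → ℕ) :
    (univ.filter (fun f : α → Fin m => ∀ i, (fib f i).card = l i)).card
      = (OP (univ : Finset α) m l).card := by
  refine Finset.card_bij (s := univ.filter (fun f : α → Fin m => ∀ i, (fib f i).card = l i))
    (t := OP (univ : Finset α) m l) (fun f _ => fib f) ?_ ?_ ?_
  · intro f hf
    simp only [mem_filter, mem_univ, true_and] at hf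
    simp only [OP, mem_filter, mem_univ, true_and]
    refine ⟨hf, ?_, ?_⟩
    · intro i j hij
      apply Finset.eq_empty_of_forall_notMem
      intro a ha
      rw [Finset.mem_inter, mem_fib, mem_fib] at ha
      exact hij (ha.1 ▸ ha.2)
    · apply Finset.Subset.antisymm (Finset.subset_univ _)
      intro a _
      exact Finset.mem_sup.mpr ⟨f a, Finset.mem_univ _, mem_fib.mpr rfl⟩
  · intro f₁ h₁ f₂ h₂ h
    funext a
    have h' : fib f₁ = fib f₂ := h
    have : a ∈ fib f₂ (f₁ a) := h' ▸ mem_fib.mpr rfl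
    exact (mem_fib.mp this).symm
  · intro c hc
    simp only [OP, mem_filter, mem_univ, true_and] at hc
    obtain ⟨hcard, hdisj, hsup⟩ := hc
    have hex : ∀ a : α, ∃ i, a ∈ c i := by
      intro a
      have : a ∈ univ.sup c := hsup ▸ Finset.mem_univ a
      obtain ⟨i, -, hai⟩ := Finset.mem_sup.mp this
      exact ⟨i, hai⟩
    set f := fun a => (hex a).choose with hfdef
    have hf : ∀ a, a ∈ c (f a) := fun a => (hex a).choose_spec
    have hfib : fib f = c := by
      funext i
      ext a
      rw [mem_fib]
      constructor
      · rintro rfl; exact hf a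
      · intro ha
        by_contra hne
        have := hdisj (f a) i hne
        have : a ∈ c (f a) ∩ c i := Finset.mem_inter.mpr ⟨hf a, ha⟩
        simp_all
    refine ⟨f, ?_, hfib⟩
    simp only [mem_filter, mem_univ, true_and]
    intro i
    rw [hfib]
    exact hcard i


/-- The partition of `univ` into fibers of a function with all fibers nonempty. -/
def fiberPart {m : ℕ} (f : α → Fin m) (hf : ∀ i, (fib f i).Nonempty) :
    Finpartition (univ : Finset α) where
  parts := univ.image (fib f)
  supIndep := by
    rw [Finset.supIndep_iff_pairwiseDisjoint]
    intro B hB C hC hne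
    simp only [Finset.coe_image, Set.mem_image, Finset.coe_univ, Set.image_univ,
      Set.mem_range] at hB hC
    obtain ⟨i, rfl⟩ := hB
    obtain ⟨j, rfl⟩ := hC
    refine Finset.disjoint_left.mpr ?_
    intro a hai haj
    simp only [id_eq] at hai haj
    exact hne (by rw [← mem_fib.mp hai, ← mem_fib.mp haj])
  sup_parts := by
    rw [Finset.sup_image]
    apply Finset.Subset.antisymm (Finset.subset_univ _)
    intro a _
    exact Finset.mem_sup.mpr ⟨f a, Finset.mem_univ _, mem_fib.mpr rfl⟩
  bot_notMem := by
    simp only [Finset.bot_eq_empty, Finset.mem_image, not_exists]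
    intro i
    rintro ⟨-, hi⟩
    exact Finset.Nonempty.ne_empty (hf i) hi

lemma fiberPart_parts {m : ℕ} (f : α → Fin m) (hf : ∀ i, (fib f i).Nonempty) :
    (fiberPart f hf).parts = univ.image (fib f) := rfl

lemma fib_injective {m : ℕ} {f : α → Fin m} (hf : ∀ i, (fib f i).Nonempty) :
    Function.Injective (fib f) := by
  intro i j hij
  obtain ⟨a, ha⟩ := hf i
  have ha' : a ∈ fib f j := hij ▸ ha
  rw [← mem_fib.mp ha, ← mem_fib.mp ha']

lemma fiberPart_parts_card {m : ℕ} (f : α → Fin m) (hf : ∀ i, (fib f i).Nonempty) :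
    (fiberPart f hf).parts.card = m := by
  rw [fiberPart_parts, Finset.card_image_of_injective _ (fib_injective hf),
    Finset.card_univ, Fintype.card_fin]

end BellAux

section smulprod

lemma BellAux.smul_prod'' {ι M : Type*} [CommRing M] [Algebra ℚ M]
    (s : Finset ι) (b : ι → ℚ) (f : ι → M) :
    ∏ i ∈ s, b i • f i = (∏ i ∈ s, b i) • ∏ i ∈ s, f i := by
  induction s using Finset.cons_induction_on with
  | empty => simp
  | cons _ _ hj ih => rw [Finset.prod_cons, Finset.prod_cons, Finset.prod_cons, ih,
      smul_mul_smul_comm]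


end smulprod


open BellAux in
/-- **Generating function of the Bell polynomials.** Let `A` be a commutative
`ℚ`-algebra, `x₁, x₂, … ∈ A`, and `h := ∑_{k ≥ 1} (x_k/k!) tᵏ ∈ A⟦t⟧`.
For all `n ≥ 1` and `m ≥ 0`:
`n! · (coeff of tⁿ in hᵐ) = m! · ∑_π ∏_{B ∈ π} x_{|B|}`,
the sum over all set partitions `π` of `{1,…,n}` with exactly `m` blocks. -/
theorem bell_polynomial_generating_function {A : Type*} [CommRing A]
    [Algebra ℚ A] (x : ℕ → A) (n m : ℕ) (hn : 1 ≤ n) :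
    (n ! : ℚ) • PowerSeries.coeff (R := A) n
        ((PowerSeries.mk fun k : ℕ =>
          if k = 0 then 0 else ((k ! : ℚ)⁻¹) • x k) ^ m) =
      (m ! : ℚ) • ∑ π ∈ Finset.univ.filter
          (fun π : Finpartition (Finset.univ : Finset (Fin n)) =>
            π.parts.card = m),
        ∏ B ∈ π.parts, x B.card := by
  classical
  have hnA : Nonempty (Fin n) := ⟨⟨0, hn⟩⟩
  set S : Finset (Fin n → Fin m) :=
    univ.filter (fun f => ∀ i, (fib f i).Nonempty) with hS
  set sz : (Fin n → Fin m) → (ℕ →₀ ℕ) := fun f =>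
    Finsupp.onFinset (range m)
      (fun k => if hk : k < m then (fib f ⟨k, hk⟩).card else 0)
      (fun k hk => mem_range.mpr (by by_contra hc; simp [dif_neg hc] at hk))
    with hszdef
  have hsz_apply : ∀ (f : Fin n → Fin m) (i : Fin m), sz f i.val = (fib f i).card := by
    intro f i
    simp only [hszdef, Finsupp.onFinset_apply]
    rw [dif_pos i.isLt]
  have hsz_sum : ∀ f : Fin n → Fin m, ∑ k ∈ range m, sz f k = n := by
    intro f
    rw [← Fin.sum_univ_eq_sum_range (fun k => sz f k) m]
    have hc := Finset.card_eq_sum_card_fiberwise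
      (f := f) (s := (univ : Finset (Fin n))) (t := (univ : Finset (Fin m)))
      (fun a _ => mem_univ _)
    simp only [Finset.card_univ, Fintype.card_fin] at hc
    rw [Finset.sum_congr rfl (fun i _ => hsz_apply f i)]
    simp only [fib]
    exact hc.symm
  have hmaps : ∀ f ∈ S, sz f ∈ Finset.finsuppAntidiag (range m) n := fun f _ =>
    Finset.mem_finsuppAntidiag.mpr ⟨hsz_sum f, Finsupp.support_onFinset_subset⟩
  have stepB : (n ! : ℚ) • PowerSeries.coeff (R := A) n
      ((PowerSeries.mk fun k : ℕ => if k = 0 then 0 else ((k ! : ℚ)⁻¹) • x k) ^ m)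
      = ∑ f ∈ S, ∏ i : Fin m, x (fib f i).card := by
    rw [PowerSeries.coeff_pow, Finset.smul_sum]
    rw [← Finset.sum_fiberwise_of_maps_to hmaps (fun f => ∏ i : Fin m, x (fib f i).card)]
    apply Finset.sum_congr rfl
    intro l hl
    obtain ⟨hlsum, hlsupp⟩ := Finset.mem_finsuppAntidiag.mp hl
    by_cases hzero : ∃ k ∈ range m, l k = 0
    · obtain ⟨k, hkm, hk0⟩ := hzero
      rw [Finset.prod_eq_zero hkm (by simp [PowerSeries.coeff_mk, hk0]), smul_zero,
        Finset.filter_false_of_mem, Finset.sum_empty]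
      intro f hf hszf
      have hf' : ∀ i, (fib f i).Nonempty := (Finset.mem_filter.mp hf).2
      have hcard0 : (fib f ⟨k, mem_range.mp hkm⟩).card = 0 := by
        rw [← hsz_apply f ⟨k, mem_range.mp hkm⟩, hszf]
        exact hk0
      have := Finset.card_pos.mpr (hf' ⟨k, mem_range.mp hkm⟩)
      omega
    · push_neg at hzero
      have hfilter : S.filter (fun f => sz f = l)
          = univ.filter (fun f : Fin n → Fin m =>
              ∀ i : Fin m, (fib f i).card = l i.val) := by
        ext f
        simp only [hS, Finset.mem_filter, Finset.mem_univ, true_and]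
        constructor
        · rintro ⟨hfS, hszf⟩
          intro i
          rw [← hsz_apply f i, hszf]
        · intro hsz
          refine ⟨?_, ?_⟩
          · intro i
            rw [← Finset.card_pos, hsz i]
            exact Nat.pos_of_ne_zero (hzero i.val (mem_range.mpr i.isLt))
          · ext k
            by_cases hk : k < m
            · exact (hsz_apply f ⟨k, hk⟩).trans (hsz ⟨k, hk⟩)
            · have h1 : sz f k = 0 := by
                simp only [hszdef, Finsupp.onFinset_apply]
                rw [dif_neg hk]
              have h2 : l k = 0 := Finsupp.notMem_support_iff.mp
                (fun hcc => hk (mem_range.mp (hlsupp hcc)))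
              rw [h1, h2]
      rw [hfilter]
      have hterm : ∀ f ∈ univ.filter (fun f : Fin n → Fin m =>
            ∀ i : Fin m, (fib f i).card = l i.val),
          (∏ i : Fin m, x (fib f i).card) = ∏ k ∈ range m, x (l k) := by
        intro f hf
        have hsz := (Finset.mem_filter.mp hf).2
        rw [Finset.prod_congr rfl (fun i _ => by rw [hsz i])]
        exact Fin.prod_univ_eq_prod_range (fun k => x (l k)) m
      rw [Finset.sum_congr rfl hterm, Finset.sum_const]
      have hsum' : ∑ i : Fin m, l i.val = (univ : Finset (Fin n)).card := by
        rw [Finset.card_univ, Fintype.card_fin,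
          Fin.sum_univ_eq_sum_range (fun k => l k) m]
        exact hlsum
      have hkey : ((univ.filter (fun f : Fin n → Fin m =>
            ∀ i : Fin m, (fib f i).card = l i.val)).card : ℚ)
          * ∏ k ∈ range m, ((l k)! : ℚ) = (n ! : ℚ) := by
        have h1 := card_sizes (α := Fin n) m (fun i => l i.val)
        have h2 := OP_card (α := Fin n) m univ (fun i => l i.val) hsum'
        rw [h1] at *
        have h3 : (OP (univ : Finset (Fin n)) m fun i => l i.val).card
            * ∏ i : Fin m, (l i.val)! = n ! := by
          rw [h2, Finset.card_univ, Fintype.card_fin]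
        have h4 : (∏ i : Fin m, (l i.val)!) = ∏ k ∈ range m, (l k)! :=
          Fin.prod_univ_eq_prod_range (fun k => (l k)!) m
        rw [h4] at h3
        rw [h1, ← Nat.cast_prod, ← Nat.cast_mul, h3]
      have hcoeff : ∀ k ∈ range m,
          (PowerSeries.coeff (R := A) (l k)) (PowerSeries.mk fun k : ℕ =>
            if k = 0 then 0 else ((k ! : ℚ)⁻¹) • x k) = ((l k)! : ℚ)⁻¹ • x (l k) :=
        fun k hk => by rw [PowerSeries.coeff_mk, if_neg (hzero k hk)]
      rw [Finset.prod_congr rfl hcoeff, smul_prod'', smul_smul,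
        ← Nat.cast_smul_eq_nsmul ℚ]
      congr 1
      rw [Finset.prod_inv_distrib]
      have hP : (∏ k ∈ range m, ((l k)! : ℚ)) ≠ 0 :=
        Finset.prod_ne_zero_iff.mpr (fun k _ => Nat.cast_ne_zero.mpr (Nat.factorial_ne_zero _))
      field_simp
      exact hkey.symm.trans (mul_comm _ _)
  rw [stepB]
  -- Step A
  set junk : Finpartition (univ : Finset (Fin n)) :=
    Finpartition.indiscrete (by
      rw [Finset.bot_eq_empty]
      exact Finset.univ_nonempty.ne_empty) with hjunk
  set fp : (Fin n → Fin m) → Finpartition (univ : Finset (Fin n)) := fun f =>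
    if hf : ∀ i, (fib f i).Nonempty then fiberPart f hf else junk with hfpdef
  have hfpS : ∀ f ∈ S, fp f ∈ Finset.univ.filter
      (fun π : Finpartition (Finset.univ : Finset (Fin n)) => π.parts.card = m) := by
    intro f hf
    have hf' : ∀ i, (fib f i).Nonempty := (Finset.mem_filter.mp hf).2
    rw [Finset.mem_filter]
    refine ⟨mem_univ _, ?_⟩
    rw [hfpdef]
    simp only [dif_pos hf']
    exact fiberPart_parts_card f hf'
  rw [← Finset.sum_fiberwise_of_maps_to hfpS (fun f => ∏ i : Fin m, x (fib f i).card),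
    Finset.smul_sum]
  apply Finset.sum_congr rfl
  intro π hπ
  have hπm : π.parts.card = m := (Finset.mem_filter.mp hπ).2
  have hfilt : S.filter (fun f => fp f = π)
      = S.filter (fun f => ∀ i, fib f i ∈ π.parts) := by
    ext f
    simp only [Finset.mem_filter, and_congr_right_iff]
    intro hfS
    have hf' : ∀ i, (fib f i).Nonempty := (Finset.mem_filter.mp hfS).2
    rw [hfpdef]
    simp only [dif_pos hf']
    constructor
    · rintro rfl i
      exact Finset.mem_image.mpr ⟨i, mem_univ _, rfl⟩
    · intro hmem
      apply Finpartition.ext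
      apply Finset.eq_of_subset_of_card_le
      · rw [fiberPart_parts]
        intro B hB
        obtain ⟨i, -, rfl⟩ := Finset.mem_image.mp hB
        exact hmem i
      · rw [fiberPart_parts_card f hf', hπm]
  rw [hfilt]
  have hterm : ∀ f ∈ S.filter (fun f => ∀ i, fib f i ∈ π.parts),
      (∏ i : Fin m, x (fib f i).card) = ∏ B ∈ π.parts, x B.card := by
    intro f hf
    obtain ⟨hfS, hmem⟩ := Finset.mem_filter.mp hf
    have hf' : ∀ i, (fib f i).Nonempty := (Finset.mem_filter.mp hfS).2
    refine Finset.prod_bij (fun i _ => fib f i) (fun i _ => hmem i)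
      (fun i _ j _ h => fib_injective hf' h) ?_ (fun i _ => rfl)
    intro B hB
    obtain ⟨a, ha⟩ := π.nonempty_of_mem_parts hB
    refine ⟨f a, mem_univ _, ?_⟩
    exact π.eq_of_mem_parts (hmem (f a)) hB (mem_fib.mpr rfl) ha
  rw [Finset.sum_congr rfl hterm, Finset.sum_const]
  have hcount : (S.filter (fun f => ∀ i, fib f i ∈ π.parts)).card = m ! := by
    have e0 : Fin m ≃ {B // B ∈ π.parts} :=
      Fintype.equivOfCardEq (by simp [Fintype.card_coe, hπm])
    have hcu : (Finset.univ : Finset (Fin m ≃ {B // B ∈ π.parts})).card = m ! := by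
      rw [Finset.card_univ, Fintype.card_equiv e0, Fintype.card_fin]
    rw [← hcu]
    symm
    have hfibF : ∀ (e : Fin m ≃ {B // B ∈ π.parts}) (i : Fin m),
        fib (fun a => e.symm ⟨π.part a, π.part_mem.mpr (mem_univ a)⟩) i
          = (e i : Finset (Fin n)) := by
      intro e i
      ext a
      rw [mem_fib, Equiv.symm_apply_eq]
      constructor
      · intro h
        have hpa : π.part a = (e i : Finset (Fin n)) := congrArg Subtype.val h
        exact hpa ▸ π.mem_part (mem_univ a)
      · intro ha
        exact Subtype.ext (π.part_eq_of_mem (e i).2 ha)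
    apply Finset.card_bij
      (fun (e : Fin m ≃ {B // B ∈ π.parts}) _ =>
        (fun a => e.symm ⟨π.part a, π.part_mem.mpr (mem_univ a)⟩ : Fin n → Fin m))
    · -- maps to
      intro e _
      rw [Finset.mem_filter]
      constructor
      · rw [hS, Finset.mem_filter]
        refine ⟨mem_univ _, fun i => ?_⟩
        rw [hfibF e i]
        exact π.nonempty_of_mem_parts (e i).2
      · intro i
        rw [hfibF e i]
        exact (e i).2
    · -- injective
      intro e₁ _ e₂ _ h
      have h' : (fun a => e₁.symm ⟨π.part a, π.part_mem.mpr (mem_univ a)⟩)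
          = (fun a => e₂.symm ⟨π.part a, π.part_mem.mpr (mem_univ a)⟩) := h
      apply Equiv.ext
      intro i
      apply Subtype.ext
      calc (e₁ i : Finset (Fin n))
          = fib (fun a => e₁.symm ⟨π.part a, π.part_mem.mpr (mem_univ a)⟩) i :=
            (hfibF e₁ i).symm
        _ = fib (fun a => e₂.symm ⟨π.part a, π.part_mem.mpr (mem_univ a)⟩) i := by rw [h']
        _ = (e₂ i : Finset (Fin n)) := hfibF e₂ i
    · -- surjective
      intro f hf
      obtain ⟨hfS, hmem⟩ := Finset.mem_filter.mp hf
      have hf' : ∀ i, (fib f i).Nonempty := (Finset.mem_filter.mp hfS).2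
      have hbij : Function.Bijective
          (fun i => (⟨fib f i, hmem i⟩ : {B // B ∈ π.parts})) := by
        rw [Fintype.bijective_iff_injective_and_card]
        constructor
        · intro i j h
          exact fib_injective hf' (congrArg Subtype.val h)
        · simp [Fintype.card_coe, hπm]
      refine ⟨Equiv.ofBijective _ hbij, mem_univ _, ?_⟩
      funext a
      rw [Equiv.symm_apply_eq]
      apply Subtype.ext
      show π.part a = fib f (f a)
      exact π.part_eq_of_mem (hmem (f a)) (mem_fib.mpr rfl)
  rw [hcount, ← Nat.cast_smul_eq_nsmul ℚ]
end
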